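/- arXiv:1410.1219 — 10 statements merged into one kernel-verified Lean document; each statement's English description precedes it below -/
import Mathlib

section
/- Every hypergraph H satisfies χ_cf(H) ≤ Δ(H) + 1, where χ_cf is the conflict-free chromatic number and Δ is the maximum vertex degree. -/
/-- The degree of a vertex: the number of hyperedges containing it. -/
def hypDeg {V : Type} [DecidableEq V] (E : Finset (Finset V)) (v : V) : ℕ :=
  (E.filter (fun e => v ∈ e)).card

/-- A coloring is conflict-free if every hyperedge contains a vertex whose
color appears on no other vertex of that edge. -/
def ConflictFree {V α : Type} (E : Finset (Finset V)) (c : V → α) : Prop :=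
  ∀ e ∈ E, ∃ v ∈ e, ∀ w ∈ e, c w = c v → w = v

lemma chiCF_aux {V : Type} [Fintype V] [DecidableEq V] :
    ∀ (n : ℕ) (E : Finset (Finset V)), (∀ e ∈ E, e.Nonempty) →
    (∀ v, hypDeg E v ≤ n) → ∃ c : V → ℕ, (∀ v, c v ≤ n) ∧ ConflictFree E c := by
  intro n
  induction n with
  | zero =>
    intro E hne hdeg
    refine ⟨fun _ => 0, fun _ => le_refl 0, ?_⟩
    intro e he
    obtain ⟨v, hv⟩ := hne e he
    exfalso
    have h1 : 1 ≤ hypDeg E v := by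
      have hm : e ∈ E.filter (fun e => v ∈ e) := Finset.mem_filter.mpr ⟨he, hv⟩
      exact Finset.card_pos.mpr ⟨e, hm⟩
    have h0 := hdeg v
    omega
  | succ n ih =>
    intro E hne hdeg
    -- choose a maximum-cardinality set S meeting every edge in at most one vertex
    set F : Finset (Finset V) :=
      Finset.univ.powerset.filter (fun S => ∀ e ∈ E, (e ∩ S).card ≤ 1) with hF
    have hFne : F.Nonempty := ⟨∅, by simp [hF]⟩
    obtain ⟨S, hSF, hSmax⟩ := F.exists_max_image Finset.card hFne
    have hS1 : ∀ e ∈ E, (e ∩ S).card ≤ 1 := (Finset.mem_filter.mp hSF).2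
    -- maximality: every vertex outside S lies in an edge meeting S
    have hmax : ∀ v, v ∉ S → ∃ e ∈ E, v ∈ e ∧ (e ∩ S).Nonempty := by
      intro v hv
      by_contra hcon
      push_neg at hcon
      have hins : insert v S ∈ F := by
        rw [hF, Finset.mem_filter]
        refine ⟨Finset.mem_powerset.mpr (Finset.subset_univ _), ?_⟩
        intro e he
        by_cases hve : v ∈ e
        · have hempty : e ∩ S = ∅ := by
            by_contra h
            exact h (hcon e he hve)
          have : e ∩ insert v S ⊆ {v} := by
            intro x hx
            rw [Finset.mem_inter, Finset.mem_insert] at hx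
            rcases hx.2 with h | h
            · simp [h]
            · exfalso
              have : x ∈ e ∩ S := Finset.mem_inter.mpr ⟨hx.1, h⟩
              simp [hempty] at this
          calc (e ∩ insert v S).card ≤ ({v} : Finset V).card := Finset.card_le_card this
            _ = 1 := Finset.card_singleton v
        · have : e ∩ insert v S = e ∩ S := by
            ext x
            simp only [Finset.mem_inter, Finset.mem_insert]
            constructor
            · rintro ⟨hxe, h | h⟩
              · exact absurd (h ▸ hxe) hve
              · exact ⟨hxe, h⟩
            · rintro ⟨hxe, h⟩; exact ⟨hxe, Or.inr h⟩
          rw [this]; exact hS1 e he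
      have hcard := hSmax _ hins
      have : S.card < (insert v S).card := by
        rw [Finset.card_insert_of_notMem hv]; omega
      omega
    -- the sub-hypergraph of edges disjoint from S
    set E₀ : Finset (Finset V) := E.filter (fun e => e ∩ S = ∅) with hE₀
    have hE₀sub : E₀ ⊆ E := Finset.filter_subset _ _
    have hne₀ : ∀ e ∈ E₀, e.Nonempty := fun e he => hne e (hE₀sub he)
    have hdeg₀ : ∀ v, hypDeg E₀ v ≤ n := by
      intro v
      by_cases hvS : v ∈ S
      · have : E₀.filter (fun e => v ∈ e) = ∅ := by
          rw [Finset.filter_eq_empty_iff]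
          intro e he hv
          have hds := (Finset.mem_filter.mp he).2
          have : v ∈ e ∩ S := Finset.mem_inter.mpr ⟨hv, hvS⟩
          simp [hds] at this
        simp [hypDeg, this]
      · obtain ⟨e₀, he₀E, hv₀, hS₀⟩ := hmax v hvS
        have hssub : E₀.filter (fun e => v ∈ e) ⊂ E.filter (fun e => v ∈ e) := by
          refine Finset.ssubset_iff_of_subset
            (Finset.filter_subset_filter _ hE₀sub) |>.mpr ?_
          refine ⟨e₀, Finset.mem_filter.mpr ⟨he₀E, hv₀⟩, ?_⟩
          intro hmem
          have := (Finset.mem_filter.mp ((Finset.mem_filter.mp hmem).1)).2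
          rw [this] at hS₀
          exact Finset.not_nonempty_empty hS₀
        have hlt : hypDeg E₀ v < hypDeg E v := Finset.card_lt_card hssub
        have := hdeg v
        omega
    obtain ⟨c₀, hc₀le, hc₀cf⟩ := ih E₀ hne₀ hdeg₀
    refine ⟨fun v => if v ∈ S then n + 1 else c₀ v, ?_, ?_⟩
    · intro v
      by_cases h : v ∈ S <;> simp [h]
      exact Nat.le_succ_of_le (hc₀le v)
    · intro e he
      by_cases hdis : e ∩ S = ∅
      · obtain ⟨v, hv, hvuniq⟩ := hc₀cf e (Finset.mem_filter.mpr ⟨he, hdis⟩)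
        have hnotS : ∀ w, w ∈ e → w ∉ S := by
          intro w hw hwS
          have : w ∈ e ∩ S := Finset.mem_inter.mpr ⟨hw, hwS⟩
          simp [hdis] at this
        refine ⟨v, hv, ?_⟩
        intro w hw hcw
        simp only [if_neg (hnotS w hw), if_neg (hnotS v hv)] at hcw
        exact hvuniq w hw hcw
      · have hcard : (e ∩ S).card = 1 := by
          have := hS1 e he
          have hpos : 0 < (e ∩ S).card :=
            Finset.card_pos.mpr (Finset.nonempty_of_ne_empty hdis)
          omega
        obtain ⟨s, hs⟩ := Finset.card_eq_one.mp hcard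
        have hse : s ∈ e ∧ s ∈ S := by
          have : s ∈ e ∩ S := hs ▸ Finset.mem_singleton_self s
          exact Finset.mem_inter.mp this
        refine ⟨s, hse.1, ?_⟩
        intro w hw hcw
        by_cases hwS : w ∈ S
        · have : w ∈ e ∩ S := Finset.mem_inter.mpr ⟨hw, hwS⟩
          rw [hs, Finset.mem_singleton] at this
          exact this
        · exfalso
          simp only [if_neg hwS, if_pos hse.2] at hcw
          have := hc₀le w
          omega

/-- Every hypergraph `H` (with nonempty hyperedges) satisfies
`χ_cf(H) ≤ Δ(H) + 1`. -/
theorem chiCF_le_maxDeg_add_one {V : Type} [Fintype V] [DecidableEq V]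
    (E : Finset (Finset V)) (hne : ∀ e ∈ E, e.Nonempty) :
    ∃ c : V → Fin (Finset.univ.sup (hypDeg E) + 1), ConflictFree E c := by
  set n := Finset.univ.sup (hypDeg E) with hn
  obtain ⟨c, hcle, hccf⟩ := chiCF_aux n E hne
    (fun v => Finset.le_sup (Finset.mem_univ v))
  refine ⟨fun v => ⟨c v, by have := hcle v; omega⟩, ?_⟩
  intro e he
  obtain ⟨v, hv, huniq⟩ := hccf e he
  refine ⟨v, hv, ?_⟩
  intro w hw hcw
  apply huniq w hw
  have := congrArg Fin.val hcw
  simpa using this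
end

section
/- Let H be a 2-regular r-uniform hypergraph and let G be its dual graph (an r-regular multigraph whose vertices are the hyperedges of H and whose edges correspond to vertices of H, joining the two hyperedges containing that vertex). Then χ_cf(H) = 2 if and only if G has a {1, r−1}-factor. -/
/-- The conflict-free chromatic number. -/
noncomputable def chiCF (V : Type) (E : Finset (Finset V)) : ℕ :=
  sInf {k : ℕ | ∃ c : V → Fin k, ConflictFree E c}

/-- Let `H` be a 2-regular `r`-uniform hypergraph and `G` its dual `r`-regular
multigraph (vertices of `G` are the hyperedges of `H`, edges of `G` are the
vertices of `H`).  A `{1, r-1}`-factor of `G` is a set `F` of edges of `G`,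
i.e. a set of vertices of `H`, such that each vertex of `G` (each hyperedge
`e` of `H`) is incident with exactly `1` or exactly `r - 1` edges of `F`,
i.e. `(e ∩ F).card ∈ {1, r-1}`.  Then `χ_cf(H) = 2` iff `G` has a
`{1, r-1}`-factor. -/
theorem chiCF_eq_two_iff_dual_factor {V : Type} [Fintype V] [DecidableEq V] [Nonempty V]
    (r : ℕ) (E : Finset (Finset V))
    (huniform : ∀ e ∈ E, e.card = r)
    (hregular : ∀ v : V, hypDeg E v = 2) :
    chiCF V E = 2 ↔ ∃ F : Finset V, ∀ e ∈ E, (e ∩ F).card = 1 ∨ (e ∩ F).card = r - 1 := by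
  classical
  obtain ⟨v₀⟩ := ‹Nonempty V›
  -- there is an edge containing v₀
  have hv₀ : (E.filter (fun e => v₀ ∈ e)).card = 2 := hregular v₀
  have hEne : ∃ e ∈ E, v₀ ∈ e := by
    have hne : (E.filter (fun e => v₀ ∈ e)).Nonempty := by
      rw [← Finset.card_pos, hv₀]; norm_num
    obtain ⟨e, he⟩ := hne
    rw [Finset.mem_filter] at he
    exact ⟨e, he.1, he.2⟩
  obtain ⟨e₀, he₀E, he₀v⟩ := hEne
  have hr1 : 1 ≤ r := by
    have h1 := huniform e₀ he₀E
    have h2 : 0 < e₀.card := Finset.card_pos.mpr ⟨v₀, he₀v⟩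
    omega
  -- no conflict-free coloring with one color
  have hno1 : ¬ ∃ c : V → Fin 1, ConflictFree E c := by
    rintro ⟨c, hc⟩
    obtain ⟨v, hv, huniq⟩ := hc e₀ he₀E
    have he₀ : e₀ = {v} := by
      apply Finset.eq_singleton_iff_unique_mem.mpr
      exact ⟨hv, fun w hw => huniq w hw (Subsingleton.elim _ _)⟩
    have hr : r = 1 := by rw [← huniform e₀ he₀E, he₀, Finset.card_singleton]
    have hsub : E.filter (fun e => v ∈ e) ⊆ {({v} : Finset V)} := by
      intro e he
      rw [Finset.mem_filter] at he
      rw [Finset.mem_singleton]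
      have hcard : e.card = 1 := by rw [huniform e he.1, hr]
      obtain ⟨w, hw⟩ := Finset.card_eq_one.mp hcard
      subst hw
      have : v = w := Finset.mem_singleton.mp he.2
      rw [this]
    have hle := Finset.card_le_card hsub
    have hreg := hregular v
    rw [hypDeg] at hreg
    rw [Finset.card_singleton] at hle
    omega
  constructor
  · -- forward: χ_cf = 2 → factor
    intro h
    have hne : {k : ℕ | ∃ c : V → Fin k, ConflictFree E c}.Nonempty := by
      by_contra hemp
      rw [Set.not_nonempty_iff_eq_empty] at hemp
      rw [chiCF, hemp, Nat.sInf_empty] at h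
      omega
    have hmem := Nat.sInf_mem hne
    rw [show sInf {k : ℕ | ∃ c : V → Fin k, ConflictFree E c} = chiCF V E from rfl, h] at hmem
    obtain ⟨c, hc⟩ := hmem
    refine ⟨Finset.univ.filter (fun v => c v = 0), fun e he => ?_⟩
    obtain ⟨v, hv, huniq⟩ := hc e he
    set F : Finset V := Finset.univ.filter (fun v => c v = 0) with hF
    have hcv : c v = 0 ∨ c v = 1 := by omega
    rcases hcv with h0 | h1
    · left
      have : e ∩ F = {v} := by
        apply Finset.eq_singleton_iff_unique_mem.mpr
        constructor
        · rw [Finset.mem_inter, hF, Finset.mem_filter]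
          exact ⟨hv, Finset.mem_univ v, h0⟩
        · intro w hw
          rw [Finset.mem_inter, hF, Finset.mem_filter] at hw
          exact huniq w hw.1 (by rw [hw.2.2, h0])
      rw [this, Finset.card_singleton]
    · right
      have hsd : e \ F = {v} := by
        apply Finset.eq_singleton_iff_unique_mem.mpr
        constructor
        · rw [Finset.mem_sdiff, hF, Finset.mem_filter]
          refine ⟨hv, fun hmem => ?_⟩
          rw [hmem.2] at h1; exact absurd h1 (by decide)
        · intro w hw
          rw [Finset.mem_sdiff, hF, Finset.mem_filter] at hw
          have hcw : c w = 1 := by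
            have := hw.2
            have : ¬ c w = 0 := fun h' => this ⟨Finset.mem_univ w, h'⟩
            omega
          exact huniq w hw.1 (by rw [hcw, h1])
      have hcards := Finset.card_inter_add_card_sdiff e F
      rw [hsd, Finset.card_singleton, huniform e he] at hcards
      omega
  · -- reverse: factor → χ_cf = 2
    rintro ⟨F, hF⟩
    have hc2 : ∃ c : V → Fin 2, ConflictFree E c := by
      refine ⟨fun v => if v ∈ F then 0 else 1, fun e he => ?_⟩
      rcases hF e he with h1 | hr1'
      · obtain ⟨v, hv⟩ := Finset.card_eq_one.mp h1
        have hvF : v ∈ e ∩ F := by rw [hv]; exact Finset.mem_singleton_self v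
        rw [Finset.mem_inter] at hvF
        refine ⟨v, hvF.1, fun w hw hcw => ?_⟩
        simp only [if_pos hvF.2] at hcw
        have hwF : w ∈ F := by
          by_contra hwn
          simp only [if_neg hwn] at hcw
          exact absurd hcw (by decide)
        have : w ∈ e ∩ F := Finset.mem_inter.mpr ⟨hw, hwF⟩
        rw [hv, Finset.mem_singleton] at this
        exact this
      · have hcards := Finset.card_inter_add_card_sdiff e F
        rw [hr1', huniform e he] at hcards
        have hsd1 : (e \ F).card = 1 := by omega
        obtain ⟨v, hv⟩ := Finset.card_eq_one.mp hsd1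
        have hvm : v ∈ e \ F := by rw [hv]; exact Finset.mem_singleton_self v
        rw [Finset.mem_sdiff] at hvm
        refine ⟨v, hvm.1, fun w hw hcw => ?_⟩
        simp only [if_neg hvm.2] at hcw
        have hwF : w ∉ F := by
          intro hwn
          simp only [if_pos hwn] at hcw
          exact absurd hcw (by decide)
        have : w ∈ e \ F := Finset.mem_sdiff.mpr ⟨hw, hwF⟩
        rw [hv, Finset.mem_singleton] at this
        exact this
    obtain ⟨c, hc⟩ := hc2
    apply le_antisymm
    · exact Nat.sInf_le ⟨c, hc⟩
    · refine le_csInf ⟨2, ⟨c, hc⟩⟩ ?_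
      rintro k ⟨c', hc'⟩
      by_contra hlt
      push_neg at hlt
      interval_cases k
      · exact (c' v₀).elim0
      · exact hno1 ⟨c', hc'⟩
end

section
/- In any conflict-free 2-coloring of a 2-regular r-uniform hypergraph H, the set of edges of the dual r-regular graph G corresponding to vertices of one color class forms a {1, r−1}-factor of G. -/
/-- In any conflict-free 2-coloring of a 2-regular `r`-uniform hypergraph `H`,
the set of edges of the dual `r`-regular graph `G` corresponding to the
vertices of one color class forms a `{1, r-1}`-factor of `G`: in dual terms,
every hyperedge `e` contains exactly `1` or exactly `r - 1` vertices of that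
color class. -/
theorem colorClass_is_factor {V : Type} [Fintype V] [DecidableEq V]
    (r : ℕ) (E : Finset (Finset V))
    (huniform : ∀ e ∈ E, e.card = r)
    (hregular : ∀ v : V, hypDeg E v = 2)
    (c : V → Fin 2) (hc : ConflictFree E c) :
    ∀ e ∈ E, (e.filter (fun v => c v = 0)).card = 1 ∨
      (e.filter (fun v => c v = 0)).card = r - 1 := by
  intro e he
  obtain ⟨v, hv, huniq⟩ := hc e he
  have hcard : e.card = r := huniform e he
  rcases (by omega : c v = 0 ∨ c v = 1) with h | h
  · left
    have : e.filter (fun w => c w = 0) = {v} := by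
      apply Finset.eq_singleton_iff_unique_mem.mpr
      constructor
      · simp [Finset.mem_filter, hv, h]
      · intro w hw
        rw [Finset.mem_filter] at hw
        exact huniq w hw.1 (by rw [hw.2, h])
    rw [this, Finset.card_singleton]
  · right
    have h1 : e.filter (fun w => c w = 1) = {v} := by
      apply Finset.eq_singleton_iff_unique_mem.mpr
      constructor
      · simp [Finset.mem_filter, hv, h]
      · intro w hw
        rw [Finset.mem_filter] at hw
        exact huniq w hw.1 (by rw [hw.2, h])
    have hfe : e.filter (fun w => c w = 1) = e.filter (fun w => ¬ c w = 0) := by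
      apply Finset.filter_congr
      intro w _
      rcases (by omega : c w = 0 ∨ c w = 1) with hw | hw <;> simp [hw]
    have hsum : (e.filter (fun w => c w = 0)).card
        + (e.filter (fun w => c w = 1)).card = e.card := by
      rw [hfe]
      exact Finset.card_filter_add_card_filter_not (p := fun w => c w = 0)
    rw [h1, Finset.card_singleton, hcard] at hsum
    omega
end

section
/- For every odd positive integer t and every integer r with r even or r ≥ (t+1)(t+2), there exists an r-regular graph with no {t, r−t}-factor. -/
noncomputable def gdeg {W : Type} (G : SimpleGraph W) (v : W) : ℕ :=
  {w | G.Adj v w}.ncard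

open Finset

lemma gdeg_eq_degree {W : Type} [Fintype W] (G : SimpleGraph W) [DecidableRel G.Adj] (v : W) :
    gdeg G v = G.degree v := by
  rw [gdeg, ← SimpleGraph.card_neighborFinset_eq_degree, SimpleGraph.neighborFinset_def,
    ← Set.ncard_eq_toFinset_card']
  rfl

lemma gdeg_eq_filter {W : Type} [Fintype W] (G : SimpleGraph W) [DecidableRel G.Adj] (v : W) :
    gdeg G v = (Finset.univ.filter (fun u => G.Adj v u)).card := by
  rw [gdeg, ← Set.toFinset_setOf, Set.ncard_eq_toFinset_card']

/-- the even case -/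
lemma even_case (r t : ℕ) (ht : Odd t) (hr : Even r) :
    ∃ (n : ℕ) (G : SimpleGraph (Fin n)),
      (∀ v, gdeg G v = r) ∧
      ¬ ∃ F : SimpleGraph (Fin n), F ≤ G ∧
        ∀ v, (gdeg F v : ℤ) = t ∨ (gdeg F v : ℤ) = (r : ℤ) - t := by
  classical
  refine ⟨r + 1, ⊤, fun v => ?_, ?_⟩
  · rw [gdeg_eq_degree]
    simp [SimpleGraph.complete_graph_degree]  -- guess name
  · rintro ⟨F, -, hdeg⟩
    have hodd : ∀ v : Fin (r+1), Odd (F.degree v) := by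
      intro v
      rcases hdeg v with h | h <;> rw [gdeg_eq_degree] at h
      · have : F.degree v = t := by exact_mod_cast h
        rw [this]; exact ht
      · rcases ht with ⟨m, hm⟩
        rcases hr with ⟨s, hs⟩
        have : (F.degree v : ℤ) = r - t := h
        refine ⟨(F.degree v - 1)/2, ?_⟩
        omega
    have h2 := SimpleGraph.sum_degrees_eq_twice_card_edges F
    have hOdd : Odd (∑ v : Fin (r+1), F.degree v) := by
      rcases hr with ⟨s, hs⟩
      have : ∀ v : Fin (r+1), F.degree v % 2 = 1 := fun v => Nat.odd_iff.1 (hodd v)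
      have hsum : (∑ v : Fin (r+1), F.degree v) % 2 = (∑ v : Fin (r+1), 1) % 2 := by
        rw [Finset.sum_nat_mod]
        congr 1
        exact Finset.sum_congr rfl fun v _ => this v
      rw [Nat.odd_iff, hsum]
      simp [Finset.card_univ]
      omega
    rw [h2] at hOdd
    simp [Nat.odd_iff, Nat.mul_mod_right] at hOdd


open Finset

namespace AKC

variable (r t : ℕ)

/-- block parameter: number of attachment vertices of block `j` -/
def kp (j : Fin (t+1)) : ℕ := if j = 0 then r - 1 - t*(t+2) else t+2

/-- vertex set -/
abbrev V := Bool × Option (Fin (t+1) × (Fin r ⊕ Fin (r+1)))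

def wv (c : Bool) : V r t := (c, none)
def pv (c : Bool) (j : Fin (t+1)) (i : Fin r) : V r t := (c, some (j, Sum.inl i))
def qv (c : Bool) (j : Fin (t+1)) (a : Fin (r+1)) : V r t := (c, some (j, Sum.inr a))

/-- adjacency among `Q`-vertices of a block with parameter `K`: matched pairs -/
def qq (K : ℕ) (a b : Fin (r+1)) : Prop :=
  K < a.val ∧ K < b.val ∧
    ((b.val = a.val + 1 ∧ (a.val - K) % 2 = 1) ∨ (a.val = b.val + 1 ∧ (b.val - K) % 2 = 1))

/-- adjacency within one copy -/
def jadj : Option (Fin (t+1) × (Fin r ⊕ Fin (r+1))) → Option (Fin (t+1) × (Fin r ⊕ Fin (r+1))) → Prop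
  | none, none => False
  | none, some (j, x) =>
      match x with
      | Sum.inl _ => False
      | Sum.inr a => 1 ≤ a.val ∧ a.val ≤ kp r t j
  | some (j, x), none =>
      match x with
      | Sum.inl _ => False
      | Sum.inr a => 1 ≤ a.val ∧ a.val ≤ kp r t j
  | some (j, x), some (j', y) =>
      j = j' ∧
      match x, y with
      | Sum.inl _, Sum.inl _ => False
      | Sum.inl i, Sum.inr a => a.val ≠ i.val + 1
      | Sum.inr a, Sum.inl i => a.val ≠ i.val + 1
      | Sum.inr a, Sum.inr b => qq r (kp r t j) a b

def adj : V r t → V r t → Prop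
  | (c, x), (c', y) => if c = c' then jadj r t x y else (x = none ∧ y = none)

lemma qq_symm {K : ℕ} {a b : Fin (r+1)} (h : qq r K a b) : qq r K b a := by
  obtain ⟨h1, h2, h3⟩ := h
  exact ⟨h2, h1, h3.symm.imp id id⟩

lemma qq_irrefl {K : ℕ} {a : Fin (r+1)} (h : qq r K a a) : False := by
  obtain ⟨-, -, h3⟩ := h
  omega

lemma jadj_symm : ∀ {x y}, jadj r t x y → jadj r t y x := by
  rintro (_ | ⟨j, (i | a)⟩) (_ | ⟨j', (i' | a')⟩) h <;>
    simp only [jadj] at h ⊢ <;> try exact h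
  · obtain ⟨rfl, h2⟩ := h; exact ⟨rfl, h2⟩
  · obtain ⟨rfl, h2⟩ := h; exact ⟨rfl, h2⟩
  · obtain ⟨rfl, h2⟩ := h; exact ⟨rfl, h2⟩
  · obtain ⟨rfl, h2⟩ := h; exact ⟨rfl, qq_symm r h2⟩

lemma jadj_irrefl : ∀ {x}, jadj r t x x → False := by
  rintro (_ | ⟨j, (i | a)⟩) h <;> simp only [jadj] at h
  · exact h.2
  · exact qq_irrefl r h.2

def G : SimpleGraph (V r t) where
  Adj := adj r t
  symm := by
    refine ⟨?_⟩
    rintro ⟨c, x⟩ ⟨c', y⟩ h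
    by_cases hc : c = c'
    · subst hc
      simp only [adj, if_pos rfl] at h ⊢
      exact jadj_symm r t h
    · simp only [adj, if_neg hc, if_neg (Ne.symm hc)] at h ⊢
      exact ⟨h.2, h.1⟩
  loopless := by
    refine ⟨?_⟩
    rintro ⟨c, x⟩ h
    simp only [adj, if_pos rfl] at h
    exact jadj_irrefl r t h



section KP
variable (hodd : r % 2 = 1) (ht2 : t % 2 = 1) (hrb : t*t + 3*t + 3 ≤ r)
include hrb

lemma kp_ge (j : Fin (t+1)) : t + 2 ≤ kp r t j := by
  have hexp : t*(t+2) = t*t + 2*t := by ring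
  unfold kp; split <;> omega

lemma kp_le (j : Fin (t+1)) : kp r t j ≤ r := by
  have h1 : 0 ≤ t*t := Nat.zero_le _
  unfold kp; split <;> omega

include hodd ht2 in
lemma kp_parity (j : Fin (t+1)) : (r - kp r t j) % 2 = 0 := by
  have htt : t*t % 2 = 1 := by rw [Nat.mul_mod, ht2]
  have hexp : t*(t+2) = t*t + 2*t := by ring
  have h2 : r % 2 = 1 := hodd
  unfold kp; split <;> omega

lemma kp_sum : ∑ j : Fin (t+1), kp r t j = r - 1 := by
  rw [Fin.sum_univ_succ]
  have h0 : kp r t 0 = r - 1 - t*(t+2) := by unfold kp; simp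
  have hs : ∀ j : Fin t, kp r t j.succ = t + 2 := by
    intro j; unfold kp; rw [if_neg (Fin.succ_ne_zero j)]
  rw [h0]
  rw [Finset.sum_congr rfl (fun j _ => hs j), Finset.sum_const, Finset.card_univ,
    Fintype.card_fin, smul_eq_mul]
  have hexp : t*(t+2) = t*t + 2*t := by ring
  omega
end KP

/-- cardinality of a val-window filter in `Fin m` -/
lemma card_filter_window (m lo hi : ℕ) (hhi : hi ≤ m) :
    ((univ : Finset (Fin m)).filter fun x => lo ≤ x.val ∧ x.val < hi).card = hi - lo := by
  rw [← Nat.card_Ico lo hi]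
  apply Finset.card_bij (fun (x : Fin m) _ => x.val)
  · intro a ha; simp only [mem_filter] at ha; simp [Finset.mem_Ico]; omega
  · intro a ha b hb h; exact Fin.ext h
  · intro b hb
    simp only [Finset.mem_Ico] at hb
    refine ⟨⟨b, by omega⟩, ?_, rfl⟩
    simp only [mem_filter, mem_univ, true_and]
    exact ⟨hb.1, hb.2⟩

lemma card_filter_ne (m x : ℕ) (hx : x < m) :
    ((univ : Finset (Fin m)).filter fun a => a.val ≠ x).card = m - 1 := by
  have : ((univ : Finset (Fin m)).filter fun a => a.val ≠ x) = univ.erase ⟨x, hx⟩ := by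
    ext a; simp [Fin.ext_iff]
  rw [this, Finset.card_erase_of_mem (mem_univ _), Finset.card_univ, Fintype.card_fin]



-- adjacency characterizations
variable {r t : ℕ}

lemma qv_inj {c : Bool} {j : Fin (t+1)} : Function.Injective (qv r t c j) := by
  intro a b h; simpa [qv] using h

lemma pv_inj {c : Bool} {j : Fin (t+1)} : Function.Injective (pv r t c j) := by
  intro a b h; simpa [pv] using h

lemma G_adj {v u : V r t} : (G r t).Adj v u ↔ adj r t v u := Iff.rfl

lemma adj_wv_iff {c : Bool} {u : V r t} :
    (G r t).Adj (wv r t c) u ↔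
      u = wv r t (!c) ∨ ∃ j a, u = qv r t c j a ∧ 1 ≤ a.val ∧ a.val ≤ kp r t j := by
  obtain ⟨c', (_ | ⟨j', (i' | a')⟩)⟩ := u <;>
    · rw [G_adj]
      cases c <;> cases c' <;>
        simp [adj, wv, qv, pv, jadj, Prod.ext_iff] <;> aesop

lemma adj_pv_iff {c : Bool} {j : Fin (t+1)} {i : Fin r} {u : V r t} :
    (G r t).Adj (pv r t c j i) u ↔
      ∃ a, u = qv r t c j a ∧ a.val ≠ i.val + 1 := by
  obtain ⟨c', (_ | ⟨j', (i' | a')⟩)⟩ := u <;>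
    · rw [G_adj]
      cases c <;> cases c' <;>
        simp [adj, wv, qv, pv, jadj, Prod.ext_iff] <;> aesop

lemma adj_qv_iff {c : Bool} {j : Fin (t+1)} {a : Fin (r+1)} {u : V r t} :
    (G r t).Adj (qv r t c j a) u ↔
      (∃ i, u = pv r t c j i ∧ a.val ≠ i.val + 1) ∨
      (∃ b, u = qv r t c j b ∧ qq r (kp r t j) a b) ∨
      (u = wv r t c ∧ 1 ≤ a.val ∧ a.val ≤ kp r t j) := by
  obtain ⟨c', (_ | ⟨j', (i' | a')⟩)⟩ := u <;>
    · rw [G_adj]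
      cases c <;> cases c' <;>
        simp [adj, wv, qv, pv, jadj, Prod.ext_iff] <;> aesop

/-- partner of a matched vertex -/
def ptr (r K : ℕ) (a : Fin (r+1)) : Fin (r+1) :=
  ⟨if (a.val - K) % 2 = 1 then min (a.val+1) r else a.val - 1, by split <;> omega⟩

section PTR
variable {r t : ℕ} {K : ℕ} (hK2 : (r - K) % 2 = 0) (hKr : K ≤ r) {a : Fin (r+1)} (ha : K < a.val)
include hK2 hKr ha

lemma ptr_val : (ptr r K a).val = if (a.val - K) % 2 = 1 then a.val + 1 else a.val - 1 := by
  have := a.isLt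
  have h0 : (ptr r K a).val = if (a.val - K) % 2 = 1 then min (a.val+1) r else a.val - 1 := rfl
  rw [h0]; split <;> omega

lemma ptr_spec : ∀ b : Fin (r+1), qq r K a b ↔ b = ptr r K a := by
  intro b
  have hb := b.isLt
  have hha := a.isLt
  have hv := ptr_val hK2 hKr ha
  unfold qq
  rw [Fin.ext_iff, hv]
  split <;> omega

lemma ptr_gt : K < (ptr r K a).val := by
  have := a.isLt
  rw [ptr_val hK2 hKr ha]; split <;> omega

lemma ptr_invol : ptr r K (ptr r K a) = a := by
  have hq : qq r K a (ptr r K a) := (ptr_spec hK2 hKr ha _).2 rfl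
  have hq2 : qq r K (ptr r K a) a := qq_symm r hq
  exact ((ptr_spec hK2 hKr (ptr_gt hK2 hKr ha) a).1 hq2).symm

lemma ptr_parity_flip : ((ptr r K a).val - K) % 2 = ((a.val - K) % 2 + 1) % 2 := by
  have := a.isLt
  rw [ptr_val hK2 hKr ha]; split <;> omega

lemma ptr_ne : ptr r K a ≠ a := by
  have := a.isLt
  simp only [ne_eq, Fin.ext_iff]
  rw [ptr_val hK2 hKr ha]; split <;> omega

end PTR

section REG
variable {r t : ℕ} (hodd : r % 2 = 1) (ht2 : t % 2 = 1) (hrb : t*t + 3*t + 3 ≤ r)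

/-- helper: gdeg via an explicit finset of neighbors -/
lemma gdeg_eq_of_finset {W : Type} (G : SimpleGraph W) (v : W) (S : Finset W)
    (h : ∀ u, G.Adj v u ↔ u ∈ S) : gdeg G v = S.card := by
  rw [gdeg, show {w | G.Adj v w} = ↑S from Set.ext (fun u => (h u).trans (Finset.mem_coe).symm),
    Set.ncard_coe_finset]

lemma card_filter_window' (m lo hi : ℕ) (hhi : hi < m) :
    ((univ : Finset (Fin m)).filter fun x => lo ≤ x.val ∧ x.val ≤ hi).card = hi + 1 - lo := by
  have heq : ((univ : Finset (Fin m)).filter fun x => lo ≤ x.val ∧ x.val ≤ hi)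
      = (univ.filter fun x => lo ≤ x.val ∧ x.val < hi+1) :=
    Finset.filter_congr (fun x _ => by constructor <;> omega)
  rw [heq, card_filter_window m lo (hi+1) (by omega)]

include hrb in
lemma gdeg_pv (c : Bool) (j : Fin (t+1)) (i : Fin r) :
    gdeg (G r t) (pv r t c j i) = r := by
  rw [gdeg_eq_of_finset _ _
    ((univ.filter fun a : Fin (r+1) => a.val ≠ i.val + 1).image (qv r t c j))]
  · rw [Finset.card_image_of_injective _ qv_inj, card_filter_ne (r+1) (i.val+1) (by omega)]
    omega
  · intro u
    rw [adj_pv_iff]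
    simp only [Finset.mem_image, mem_filter, mem_univ, true_and]
    constructor
    · rintro ⟨a, rfl, h⟩; exact ⟨a, h, rfl⟩
    · rintro ⟨a, h, rfl⟩; exact ⟨a, rfl, h⟩

include hrb in
lemma gdeg_wv (c : Bool) :
    gdeg (G r t) (wv r t c) = r := by
  classical
  rw [gdeg_eq_of_finset _ _
    ({wv r t (!c)} ∪ univ.biUnion (fun j =>
      (univ.filter fun a : Fin (r+1) => 1 ≤ a.val ∧ a.val ≤ kp r t j).image (qv r t c j)))]
  · rw [Finset.card_union_of_disjoint, Finset.card_biUnion]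
    · have hc : ∀ j : Fin (t+1),
          ((univ.filter fun a : Fin (r+1) => 1 ≤ a.val ∧ a.val ≤ kp r t j).image
            (qv r t c j)).card = kp r t j := by
        intro j
        rw [Finset.card_image_of_injective _ qv_inj,
          card_filter_window' (r+1) 1 (kp r t j) (by have := kp_le r t hrb j; omega)]
        omega
      rw [Finset.sum_congr rfl (fun j _ => hc j), kp_sum r t hrb, Finset.card_singleton]
      omega
    · intro j _ j' _ hjj'
      simp only [Finset.disjoint_left, Finset.mem_image, mem_filter]
      rintro x ⟨a, -, rfl⟩ ⟨b, -, hb⟩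
      simp only [qv, Prod.mk.injEq, Option.some.injEq, Sum.inr.injEq, true_and] at hb
      exact hjj' hb.1.symm
    · simp only [Finset.disjoint_left, Finset.mem_singleton, Finset.mem_biUnion]
      rintro x rfl ⟨j, -, hj⟩
      simp only [Finset.mem_image] at hj
      obtain ⟨a, -, ha⟩ := hj
      simp [qv, wv, Prod.ext_iff] at ha
  · intro u
    rw [adj_wv_iff]
    simp only [Finset.mem_union, Finset.mem_singleton, Finset.mem_biUnion, Finset.mem_image,
      mem_filter, mem_univ, true_and]
    aesop

include hodd ht2 hrb in
lemma gdeg_qv (c : Bool) (j : Fin (t+1)) (a : Fin (r+1)) :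
    gdeg (G r t) (qv r t c j a) = r := by
  classical
  have hK2 := kp_parity r t hodd ht2 hrb j
  have hKr := kp_le r t hrb j
  have hKge := kp_ge r t hrb j
  by_cases h0 : a.val = 0
  · -- only P-neighbors, all of them
    rw [gdeg_eq_of_finset _ _ ((univ : Finset (Fin r)).image (pv r t c j))]
    · rw [Finset.card_image_of_injective _ pv_inj, Finset.card_univ, Fintype.card_fin]
    · intro u
      rw [adj_qv_iff]
      simp only [Finset.mem_image, mem_univ, true_and]
      constructor
      · rintro (⟨i, rfl, h⟩ | ⟨b, rfl, hq⟩ | ⟨rfl, h1, -⟩)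
        · exact ⟨i, rfl⟩
        · exact absurd hq.1 (by omega)
        · omega
      · rintro ⟨i, rfl⟩
        exact Or.inl ⟨i, rfl, by omega⟩
  · by_cases hatt : a.val ≤ kp r t j
    · -- attachment vertex: P-neighbors (all but one) and w
      rw [gdeg_eq_of_finset _ _
        (((univ.filter fun i : Fin r => a.val ≠ i.val + 1).image (pv r t c j)) ∪ {wv r t c})]
      · rw [Finset.card_union_of_disjoint, Finset.card_image_of_injective _ pv_inj,
          Finset.card_singleton]
        · have : ((univ : Finset (Fin r)).filter fun i => a.val ≠ i.val + 1).card = r - 1 := by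
            have heq : ((univ : Finset (Fin r)).filter fun i => a.val ≠ i.val + 1)
                = (univ.filter fun i : Fin r => i.val ≠ a.val - 1) :=
              Finset.filter_congr (fun x _ => by constructor <;> omega)
            rw [heq, card_filter_ne r (a.val - 1) (by omega)]
          rw [this]; omega
        · simp only [Finset.disjoint_left, Finset.mem_image, Finset.mem_singleton]
          rintro x ⟨i, -, rfl⟩ h
          simp [pv, wv, Prod.ext_iff] at h
      · intro u
        rw [adj_qv_iff]
        simp only [Finset.mem_union, Finset.mem_image, mem_filter, mem_univ, true_and,
          Finset.mem_singleton]
        constructor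
        · rintro (⟨i, rfl, h⟩ | ⟨b, rfl, hq⟩ | ⟨rfl, -, -⟩)
          · exact Or.inl ⟨i, h, rfl⟩
          · exact absurd hq.1 (by omega)
          · exact Or.inr rfl
        · rintro (⟨i, h, rfl⟩ | rfl)
          · exact Or.inl ⟨i, rfl, h⟩
          · exact Or.inr (Or.inr ⟨rfl, by omega, hatt⟩)
    · -- matched vertex: P-neighbors (all but one) and the partner
      have hgt : kp r t j < a.val := by omega
      rw [gdeg_eq_of_finset _ _
        (((univ.filter fun i : Fin r => a.val ≠ i.val + 1).image (pv r t c j))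
          ∪ {qv r t c j (ptr r (kp r t j) a)})]
      · rw [Finset.card_union_of_disjoint, Finset.card_image_of_injective _ pv_inj,
          Finset.card_singleton]
        · have hle := a.isLt
          have : ((univ : Finset (Fin r)).filter fun i => a.val ≠ i.val + 1).card = r - 1 := by
            have heq : ((univ : Finset (Fin r)).filter fun i => a.val ≠ i.val + 1)
                = (univ.filter fun i : Fin r => i.val ≠ a.val - 1) :=
              Finset.filter_congr (fun x _ => by constructor <;> omega)
            rw [heq, card_filter_ne r (a.val - 1) (by omega)]
          rw [this]; omega
        · simp only [Finset.disjoint_left, Finset.mem_image, Finset.mem_singleton]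
          rintro x ⟨i, -, rfl⟩ h
          simp [pv, qv, Prod.ext_iff] at h
      · intro u
        rw [adj_qv_iff]
        simp only [Finset.mem_union, Finset.mem_image, mem_filter, mem_univ, true_and,
          Finset.mem_singleton]
        constructor
        · rintro (⟨i, rfl, h⟩ | ⟨b, rfl, hq⟩ | ⟨rfl, -, hc⟩)
          · exact Or.inl ⟨i, h, rfl⟩
          · exact Or.inr (by rw [(ptr_spec hK2 hKr hgt b).1 hq])
          · omega
        · rintro (⟨i, h, rfl⟩ | rfl)
          · exact Or.inl ⟨i, rfl, h⟩
          · exact Or.inr (Or.inl ⟨ptr r (kp r t j) a, rfl, (ptr_spec hK2 hKr hgt _).2 rfl⟩)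

end REG

section NF
variable {r t : ℕ} (F : SimpleGraph (V r t)) [DecidableRel F.Adj] (hFG : F ≤ G r t)

include hFG in
lemma row_pv (c : Bool) (j : Fin (t+1)) (i : Fin r) :
    gdeg F (pv r t c j i)
      = ((univ : Finset (Fin (r+1))).filter fun a => F.Adj (pv r t c j i) (qv r t c j a)).card := by
  rw [gdeg_eq_of_finset F _
    (((univ : Finset (Fin (r+1))).filter fun a => F.Adj (pv r t c j i) (qv r t c j a)).image
      (qv r t c j)), Finset.card_image_of_injective _ qv_inj]
  intro u
  simp only [Finset.mem_image, mem_filter, mem_univ, true_and]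
  constructor
  · intro hadj
    obtain ⟨a, rfl, -⟩ := adj_pv_iff.1 (hFG hadj)
    exact ⟨a, hadj, rfl⟩
  · rintro ⟨a, ha, rfl⟩; exact ha

include hFG in
lemma row_qv (c : Bool) (j : Fin (t+1)) (a : Fin (r+1)) :
    gdeg F (qv r t c j a)
      = ((univ : Finset (Fin r)).filter fun i => F.Adj (qv r t c j a) (pv r t c j i)).card
        + ((univ : Finset (Fin (r+1))).filter fun b => F.Adj (qv r t c j a) (qv r t c j b)).card
        + (if F.Adj (qv r t c j a) (wv r t c) then 1 else 0) := by
  classical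
  rw [gdeg_eq_of_finset F _
    ((((univ : Finset (Fin r)).filter fun i => F.Adj (qv r t c j a) (pv r t c j i)).image
        (pv r t c j))
      ∪ (((univ : Finset (Fin (r+1))).filter fun b => F.Adj (qv r t c j a) (qv r t c j b)).image
        (qv r t c j))
      ∪ (if F.Adj (qv r t c j a) (wv r t c) then {wv r t c} else ∅))]
  · rw [Finset.card_union_of_disjoint, Finset.card_union_of_disjoint,
      Finset.card_image_of_injective _ pv_inj, Finset.card_image_of_injective _ qv_inj]
    · split <;> simp
    · simp only [Finset.disjoint_left, Finset.mem_image, mem_filter]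
      rintro x ⟨i, -, rfl⟩ hx
      obtain ⟨b, -, hb⟩ := hx
      simp [pv, qv, Prod.ext_iff] at hb
    · simp only [Finset.disjoint_left, Finset.mem_union, Finset.mem_image, mem_filter]
      rintro x (⟨i, -, rfl⟩ | ⟨b, -, rfl⟩) hx <;>
        · split at hx <;> simp_all [pv, qv, wv, Prod.ext_iff]
  · intro u
    simp only [Finset.mem_union, Finset.mem_image, mem_filter, mem_univ, true_and]
    constructor
    · intro hadj
      rcases adj_qv_iff.1 (hFG hadj) with ⟨i, rfl, -⟩ | ⟨b, rfl, -⟩ | ⟨rfl, -, -⟩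
      · exact Or.inl (Or.inl ⟨i, hadj, rfl⟩)
      · exact Or.inl (Or.inr ⟨b, hadj, rfl⟩)
      · rw [if_pos hadj]; exact Or.inr (Finset.mem_singleton_self _)
    · rintro ((⟨i, hi, rfl⟩ | ⟨b, hb, rfl⟩) | hu)
      · exact hi
      · exact hb
      · split at hu
        · rwa [Finset.mem_singleton.1 hu]
        · exact absurd hu (Finset.notMem_empty _)

include hFG in
lemma row_wv (c : Bool) :
    gdeg F (wv r t c)
      = (∑ j : Fin (t+1),
          ((univ : Finset (Fin (r+1))).filter fun a => F.Adj (wv r t c) (qv r t c j a)).card)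
        + (if F.Adj (wv r t c) (wv r t (!c)) then 1 else 0) := by
  classical
  rw [gdeg_eq_of_finset F _
    ((univ.biUnion fun j =>
        (((univ : Finset (Fin (r+1))).filter fun a => F.Adj (wv r t c) (qv r t c j a)).image
          (qv r t c j)))
      ∪ (if F.Adj (wv r t c) (wv r t (!c)) then {wv r t (!c)} else ∅))]
  · rw [Finset.card_union_of_disjoint, Finset.card_biUnion]
    · congr 1
      · exact Finset.sum_congr rfl fun j _ =>
          Finset.card_image_of_injective _ qv_inj
      · split <;> simp
    · intro j _ j' _ hjj'
      simp only [Finset.disjoint_left, Finset.mem_image, mem_filter]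
      rintro x ⟨b, -, rfl⟩ ⟨b', -, hb⟩
      simp only [qv, Prod.mk.injEq, Option.some.injEq, Sum.inr.injEq, true_and] at hb
      exact hjj' hb.1.symm
    · simp only [Finset.disjoint_left, Finset.mem_biUnion, Finset.mem_image]
      rintro x ⟨j, -, b, -, rfl⟩ hx
      split at hx <;> simp_all [qv, wv, Prod.ext_iff]
  · intro u
    simp only [Finset.mem_union, Finset.mem_biUnion, Finset.mem_image, mem_filter, mem_univ,
      true_and]
    constructor
    · intro hadj
      rcases adj_wv_iff.1 (hFG hadj) with rfl | ⟨j, a, rfl, -⟩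
      · rw [if_pos hadj]; exact Or.inr (Finset.mem_singleton_self _)
      · exact Or.inl ⟨j, a, hadj, rfl⟩
    · rintro (⟨j, a, ha, rfl⟩ | hu)
      · exact ha
      · split at hu
        · rwa [Finset.mem_singleton.1 hu]
        · exact absurd hu (Finset.notMem_empty _)

end NF


section NF2
variable {r t : ℕ} (F : SimpleGraph (V r t)) [DecidableRel F.Adj]

/-- double counting: P-rows vs Q-rows -/
lemma exchange (c : Bool) (j : Fin (t+1)) :
    (∑ a : Fin (r+1),
        ((univ : Finset (Fin r)).filter fun i => F.Adj (qv r t c j a) (pv r t c j i)).card)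
      = ∑ i : Fin r,
        ((univ : Finset (Fin (r+1))).filter fun a => F.Adj (pv r t c j i) (qv r t c j a)).card := by
  simp only [Finset.card_filter]
  rw [Finset.sum_comm]
  refine Finset.sum_congr rfl fun i _ => Finset.sum_congr rfl fun a _ => ?_
  congr 1
  simp only [eq_iff_iff]
  exact SimpleGraph.adj_comm _ _ _

variable (hFG : F ≤ G r t)
  (hodd : r % 2 = 1) (ht2 : t % 2 = 1) (hrb : t*t + 3*t + 3 ≤ r)

include hFG hodd ht2 hrb in
lemma mcard_eq (c : Bool) (j : Fin (t+1)) (a : Fin (r+1)) :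
    ((univ : Finset (Fin (r+1))).filter fun b => F.Adj (qv r t c j a) (qv r t c j b)).card
      = if kp r t j < a.val ∧ F.Adj (qv r t c j a) (qv r t c j (ptr r (kp r t j) a))
        then 1 else 0 := by
  have hK2 := kp_parity r t hodd ht2 hrb j
  have hKr := kp_le r t hrb j
  have hqq : ∀ b, F.Adj (qv r t c j a) (qv r t c j b) → qq r (kp r t j) a b := by
    intro b hb
    rcases adj_qv_iff.1 (hFG hb) with ⟨i, hi, -⟩ | ⟨b', hb', h⟩ | ⟨hw, -⟩
    · exact absurd hi (by simp [pv, qv, Prod.ext_iff])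
    · rwa [show b' = b by simpa [qv, Prod.ext_iff] using hb'.symm] at h
    · exact absurd hw (by simp [wv, qv, Prod.ext_iff])
  by_cases hgt : kp r t j < a.val
  · by_cases hadj : F.Adj (qv r t c j a) (qv r t c j (ptr r (kp r t j) a))
    · rw [if_pos ⟨hgt, hadj⟩]
      have : ((univ : Finset (Fin (r+1))).filter fun b => F.Adj (qv r t c j a) (qv r t c j b))
          = {ptr r (kp r t j) a} := by
        ext b
        simp only [mem_filter, mem_univ, true_and, Finset.mem_singleton]
        constructor
        · intro hb
          exact (ptr_spec hK2 hKr hgt b).1 (hqq b hb)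
        · rintro rfl; exact hadj
      rw [this, Finset.card_singleton]
    · rw [if_neg (by tauto)]
      rw [Finset.card_eq_zero, Finset.filter_eq_empty_iff]
      intro b _ hb
      exact hadj (((ptr_spec hK2 hKr hgt b).1 (hqq b hb)) ▸ hb)
  · rw [if_neg (by tauto)]
    rw [Finset.card_eq_zero, Finset.filter_eq_empty_iff]
    intro b _ hb
    exact hgt (hqq b hb).1

include hFG hodd ht2 hrb in
lemma nqq_even_le (c : Bool) (j : Fin (t+1)) :
    (∑ a : Fin (r+1),
        ((univ : Finset (Fin (r+1))).filter fun b => F.Adj (qv r t c j a) (qv r t c j b)).card)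
        % 2 = 0
    ∧ (∑ a : Fin (r+1),
        ((univ : Finset (Fin (r+1))).filter fun b => F.Adj (qv r t c j a) (qv r t c j b)).card)
        ≤ r - kp r t j := by
  classical
  have hK2 := kp_parity r t hodd ht2 hrb j
  have hKr := kp_le r t hrb j
  have hsum : (∑ a : Fin (r+1),
      ((univ : Finset (Fin (r+1))).filter fun b => F.Adj (qv r t c j a) (qv r t c j b)).card)
      = ((univ : Finset (Fin (r+1))).filter fun a =>
          kp r t j < a.val ∧ F.Adj (qv r t c j a) (qv r t c j (ptr r (kp r t j) a))).card := by
    rw [Finset.card_filter]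
    exact Finset.sum_congr rfl fun a _ => mcard_eq F hFG hodd ht2 hrb c j a
  rw [hsum]
  set T := (univ : Finset (Fin (r+1))).filter fun a =>
      kp r t j < a.val ∧ F.Adj (qv r t c j a) (qv r t c j (ptr r (kp r t j) a)) with hT
  constructor
  · -- evenness via pairing
    have hsplit : T.card = (T.filter fun a => (a.val - kp r t j) % 2 = 1).card
        + (T.filter fun a => ¬ ((a.val - kp r t j) % 2 = 1)).card :=
      (Finset.card_filter_add_card_filter_not _).symm
    have hbij : (T.filter fun a => (a.val - kp r t j) % 2 = 1).card
        = (T.filter fun a => ¬ ((a.val - kp r t j) % 2 = 1)).card := by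
      apply Finset.card_bij' (fun a _ => ptr r (kp r t j) a) (fun a _ => ptr r (kp r t j) a)
      · intro a ha
        simp only [hT, mem_filter, mem_univ, true_and] at ha ⊢
        obtain ⟨⟨hgt, hadj⟩, hpar⟩ := ha
        refine ⟨⟨ptr_gt hK2 hKr hgt, ?_⟩, ?_⟩
        · rw [ptr_invol hK2 hKr hgt]
          exact hadj.symm
        · rw [ptr_parity_flip hK2 hKr hgt, hpar]
          omega
      · intro a ha
        simp only [hT, mem_filter, mem_univ, true_and] at ha ⊢
        obtain ⟨⟨hgt, hadj⟩, hpar⟩ := ha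
        refine ⟨⟨ptr_gt hK2 hKr hgt, ?_⟩, ?_⟩
        · rw [ptr_invol hK2 hKr hgt]
          exact hadj.symm
        · rw [ptr_parity_flip hK2 hKr hgt]
          omega
      · intro a ha
        simp only [hT, mem_filter, mem_univ, true_and] at ha
        exact ptr_invol hK2 hKr ha.1.1
      · intro a ha
        simp only [hT, mem_filter, mem_univ, true_and] at ha
        exact ptr_invol hK2 hKr ha.1.1
    omega
  · calc T.card ≤ ((univ : Finset (Fin (r+1))).filter fun a =>
          kp r t j + 1 ≤ a.val ∧ a.val < r + 1).card := by
          apply Finset.card_le_card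
          rw [hT]
          refine Finset.monotone_filter_right _ ?_
          intro a _ h
          have := a.isLt
          exact ⟨by omega, by omega⟩
      _ = r - kp r t j := by
          rw [card_filter_window (r+1) (kp r t j + 1) (r+1) le_rfl]
          omega

end NF2


lemma sum_parts {α : Type} (s : Finset α) (g : α → ℤ) (A B : ℤ)
    (hg : ∀ v ∈ s, g v = A ∨ g v = B) :
    ∃ b : ℕ, ∑ v ∈ s, g v = A * s.card + (B - A) * b := by
  classical
  refine ⟨(s.filter fun v => g v = B).card, ?_⟩
  rw [← Finset.sum_filter_add_sum_filter_not s (fun v => g v = B)]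
  have h1 : ∑ v ∈ s.filter (fun v => g v = B), g v
      = B * (s.filter fun v => g v = B).card := by
    rw [Finset.sum_congr rfl (fun v hv => (Finset.mem_filter.1 hv).2), Finset.sum_const,
      nsmul_eq_mul, mul_comm]
  have h2 : ∑ v ∈ s.filter (fun v => ¬ g v = B), g v
      = A * (s.filter fun v => ¬ g v = B).card := by
    rw [Finset.sum_congr rfl (fun v hv => ?_), Finset.sum_const, nsmul_eq_mul, mul_comm]
    have hv' := Finset.mem_filter.1 hv
    rcases hg v hv'.1 with h | h
    · exact h
    · exact absurd h hv'.2
  have h3 : (s.filter fun v => g v = B).card + (s.filter fun v => ¬ g v = B).card = s.card :=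
    Finset.card_filter_add_card_filter_not _
  rw [h1, h2, ← h3]
  push_cast
  ring

section NF3
variable {r t : ℕ} (F : SimpleGraph (V r t)) [DecidableRel F.Adj] (hFG : F ≤ G r t)
  (hodd : r % 2 = 1) (ht2 : t % 2 = 1) (hrb : t*t + 3*t + 3 ≤ r)

include hFG hrb in
lemma fj_le (c : Bool) (j : Fin (t+1)) :
    ((univ : Finset (Fin (r+1))).filter fun a => F.Adj (wv r t c) (qv r t c j a)).card
      ≤ kp r t j := by
  have hKr := kp_le r t hrb j
  calc ((univ : Finset (Fin (r+1))).filter fun a => F.Adj (wv r t c) (qv r t c j a)).card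
      ≤ ((univ : Finset (Fin (r+1))).filter fun a => 1 ≤ a.val ∧ a.val ≤ kp r t j).card := by
        apply Finset.card_le_card
        refine Finset.monotone_filter_right _ ?_
        intro a _ ha
        rcases adj_wv_iff.1 (hFG ha) with h | ⟨j', a', h, h1, h2⟩
        · exact absurd h (by simp [qv, wv, Prod.ext_iff])
        · have : j' = j ∧ a' = a := by simpa [qv, Prod.ext_iff] using h.symm
          obtain ⟨rfl, rfl⟩ := this
          exact ⟨h1, h2⟩
    _ = kp r t j := by
        rw [card_filter_window' (r+1) 1 (kp r t j) (by omega)]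
        omega

lemma wcol (c : Bool) (j : Fin (t+1)) :
    (∑ a : Fin (r+1), if F.Adj (qv r t c j a) (wv r t c) then 1 else 0)
      = ((univ : Finset (Fin (r+1))).filter fun a => F.Adj (wv r t c) (qv r t c j a)).card := by
  rw [Finset.card_filter]
  refine Finset.sum_congr rfl fun a _ => ?_
  exact if_congr (SimpleGraph.adj_comm _ _ _) rfl rfl

include hFG hodd ht2 hrb in
lemma block_flow (ht1 : 1 ≤ t)
    (hdeg : ∀ v, (gdeg F v : ℤ) = t ∨ (gdeg F v : ℤ) = (r:ℤ) - t) (c : Bool) (j : Fin (t+1)) :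
    1 ≤ ((univ : Finset (Fin (r+1))).filter fun a => F.Adj (wv r t c) (qv r t c j a)).card
    ∧ ((univ : Finset (Fin (r+1))).filter fun a => F.Adj (wv r t c) (qv r t c j a)).card
        ≤ kp r t j - 1 := by
  classical
  have hK2 := kp_parity r t hodd ht2 hrb j
  have hKr := kp_le r t hrb j
  have hKge := kp_ge r t hrb j
  have htt : t ≤ t*t := Nat.le_mul_of_pos_left t ht1
  set fjv := ((univ : Finset (Fin (r+1))).filter fun a => F.Adj (wv r t c) (qv r t c j a)).card
    with hfjv
  have hfle : fjv ≤ kp r t j := fj_le F hFG hrb c j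
  obtain ⟨hNe, hNle⟩ := nqq_even_le F hFG hodd ht2 hrb c j
  set NQQ := (∑ a : Fin (r+1),
      ((univ : Finset (Fin (r+1))).filter fun b => F.Adj (qv r t c j a) (qv r t c j b)).card)
    with hNQQ
  -- degree sums
  obtain ⟨bP, hbP⟩ := sum_parts univ (fun i : Fin r => (gdeg F (pv r t c j i) : ℤ))
    (t : ℤ) ((r : ℤ) - t) (fun i _ => hdeg _)
  obtain ⟨bQ, hbQ⟩ := sum_parts univ (fun a : Fin (r+1) => (gdeg F (qv r t c j a) : ℤ))
    (t : ℤ) ((r : ℤ) - t) (fun a _ => hdeg _)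
  rw [Finset.card_univ, Fintype.card_fin] at hbP hbQ
  -- the block identity
  have hid : (∑ a : Fin (r+1), gdeg F (qv r t c j a))
      = (∑ i : Fin r, gdeg F (pv r t c j i)) + NQQ + fjv := by
    have h1 : (∑ a : Fin (r+1), gdeg F (qv r t c j a))
        = (∑ a : Fin (r+1),
            ((univ : Finset (Fin r)).filter fun i => F.Adj (qv r t c j a) (pv r t c j i)).card)
          + NQQ
          + (∑ a : Fin (r+1), if F.Adj (qv r t c j a) (wv r t c) then 1 else 0) := by
      rw [hNQQ, ← Finset.sum_add_distrib, ← Finset.sum_add_distrib]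
      exact Finset.sum_congr rfl fun a _ => row_qv F hFG c j a
    rw [h1, exchange, wcol]
    congr 1
    congr 1
    exact (Finset.sum_congr rfl fun i _ => (row_pv F hFG c j i).symm)
  -- cast to ℤ
  have key : ((r:ℤ) - 2*t) * ((bQ : ℤ) - bP) = (NQQ : ℤ) + fjv - t := by
    have hcast : (∑ a : Fin (r+1), (gdeg F (qv r t c j a) : ℤ))
        = (∑ i : Fin r, (gdeg F (pv r t c j i) : ℤ)) + NQQ + fjv := by
      exact_mod_cast congrArg (Nat.cast : ℕ → ℤ) hid
    rw [hbP, hbQ] at hcast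
    push_cast at hcast
    linear_combination hcast
  have h3t : 3*t < r := by omega
  have hrt : (0:ℤ) < (r:ℤ) - 2*(t:ℤ) := by omega
  have hz01 : (bQ:ℤ) - bP = 0 ∨ (bQ:ℤ) - bP = 1 := by
    by_contra hcon
    push_neg at hcon
    obtain ⟨h0, h1⟩ := hcon
    have hcase : (bQ:ℤ) - bP ≤ -1 ∨ 2 ≤ (bQ:ℤ) - bP := by omega
    rcases hcase with h | h
    · have hmul : ((r:ℤ) - 2*t) * ((bQ:ℤ) - bP) ≤ ((r:ℤ) - 2*t) * (-1) :=
        mul_le_mul_of_nonneg_left h (le_of_lt hrt)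
      rw [key] at hmul
      omega
    · have hmul : ((r:ℤ) - 2*t) * 2 ≤ ((r:ℤ) - 2*t) * ((bQ:ℤ) - bP) :=
        mul_le_mul_of_nonneg_left h (le_of_lt hrt)
      rw [key] at hmul
      omega
  rcases hz01 with h | h <;> rw [h] at key
  · have hnat : NQQ + fjv = t := by
      have h2 : (NQQ:ℤ) + fjv = t := by linarith [key]
      exact_mod_cast h2
    constructor <;> omega
  · have hnat : NQQ + fjv = r - t := by
      have h2 : (NQQ:ℤ) + fjv = (r:ℤ) - t := by linarith [key]
      omega
    constructor <;> omega

end NF3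


theorem no_factor {r t : ℕ} (hodd : r % 2 = 1) (ht2 : t % 2 = 1) (ht1 : 1 ≤ t)
    (hrb : t*t + 3*t + 3 ≤ r) :
    ¬ ∃ F : SimpleGraph (V r t), F ≤ G r t ∧
        ∀ v, (gdeg F v : ℤ) = t ∨ (gdeg F v : ℤ) = (r:ℤ) - t := by
  rintro ⟨F, hFG, hdeg⟩
  haveI : DecidableRel F.Adj := fun a b => Classical.propDecidable _
  have hflow := fun j => block_flow F hFG hodd ht2 hrb ht1 hdeg true j
  have hw := row_wv F hFG true
  -- bound the sum of flows
  have hlow : t + 1 ≤ ∑ j : Fin (t+1),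
      ((univ : Finset (Fin (r+1))).filter fun a => F.Adj (wv r t true) (qv r t true j a)).card := by
    calc t + 1 = ∑ _j : Fin (t+1), 1 := by
          rw [Finset.sum_const, Finset.card_univ, Fintype.card_fin, smul_eq_mul, mul_one]
      _ ≤ _ := Finset.sum_le_sum fun j _ => (hflow j).1
  have hhigh : (∑ j : Fin (t+1),
      ((univ : Finset (Fin (r+1))).filter fun a => F.Adj (wv r t true) (qv r t true j a)).card)
      + (t + 1) ≤ r - 1 := by
    have h1 : (∑ j : Fin (t+1),
        ((univ : Finset (Fin (r+1))).filter fun a => F.Adj (wv r t true) (qv r t true j a)).card)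
        ≤ ∑ j : Fin (t+1), (kp r t j - 1) :=
      Finset.sum_le_sum fun j _ => (hflow j).2
    have h2 : (∑ j : Fin (t+1), (kp r t j - 1)) + (t+1) = ∑ j : Fin (t+1), kp r t j := by
      have hs : (∑ j : Fin (t+1), (kp r t j - 1)) + ∑ _j : Fin (t+1), 1
          = ∑ j : Fin (t+1), ((kp r t j - 1) + 1) := Finset.sum_add_distrib.symm
      rw [Finset.sum_const, Finset.card_univ, Fintype.card_fin, smul_eq_mul, mul_one] at hs
      rw [hs]
      exact Finset.sum_congr rfl fun j _ => by
        have := kp_ge r t hrb j; omega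
    have h3 := kp_sum r t hrb
    omega
  rcases hdeg (wv r t true) with hD | hD <;> rw [hw] at hD <;>
    · split at hD <;> omega

/-- transport a counterexample to `Fin n` -/
lemma transport {W : Type} [Fintype W] (G : SimpleGraph W) (r t : ℕ)
    (hreg : ∀ v, gdeg G v = r)
    (hnf : ¬ ∃ F : SimpleGraph W, F ≤ G ∧
        ∀ v, (gdeg F v : ℤ) = t ∨ (gdeg F v : ℤ) = (r:ℤ) - t) :
    ∃ (n : ℕ) (G' : SimpleGraph (Fin n)),
      (∀ v, gdeg G' v = r) ∧
      ¬ ∃ F : SimpleGraph (Fin n), F ≤ G' ∧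
        ∀ v, (gdeg F v : ℤ) = t ∨ (gdeg F v : ℤ) = (r:ℤ) - t := by
  classical
  set e := Fintype.equivFin W with he
  refine ⟨Fintype.card W, SimpleGraph.map e.toEmbedding G, ?_, ?_⟩
  · intro x
    have hx : {w | (SimpleGraph.map e.toEmbedding G).Adj x w}
        = e '' {w | G.Adj (e.symm x) w} := by
      ext w
      simp only [SimpleGraph.map_adj, Equiv.toEmbedding_apply, Set.mem_image, Set.mem_setOf_eq]
      constructor
      · rintro ⟨a, b, hab, rfl, rfl⟩
        exact ⟨b, by rwa [Equiv.symm_apply_apply], rfl⟩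
      · rintro ⟨b, hb, rfl⟩
        exact ⟨e.symm x, b, hb, by simp⟩
    rw [gdeg, hx, Set.ncard_image_of_injective _ e.injective, ← gdeg]
    exact hreg _
  · rintro ⟨F', hF'G, hdeg'⟩
    apply hnf
    refine ⟨SimpleGraph.comap e F', ?_, ?_⟩
    · intro v u hvu
      have := hF'G hvu
      simp only [SimpleGraph.map_adj, Equiv.toEmbedding_apply] at this
      obtain ⟨a, b, hab, ha, hb⟩ := this
      rwa [e.injective ha, e.injective hb] at hab
    · intro v
      have hset : {w | F'.Adj (e v) w} = e '' {w | (SimpleGraph.comap e F').Adj v w} := by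
        ext w
        simp only [SimpleGraph.comap_adj, Set.mem_image, Set.mem_setOf_eq]
        constructor
        · intro h
          exact ⟨e.symm w, by rwa [Equiv.apply_symm_apply], by simp⟩
        · rintro ⟨b, hb, rfl⟩
          exact hb
      have : gdeg F' (e v) = gdeg (SimpleGraph.comap e F') v := by
        rw [gdeg, hset, Set.ncard_image_of_injective _ e.injective, ← gdeg]
      rw [← this]
      exact hdeg' (e v)

end AKC


/-- For every odd positive integer `t` and every `r` which is even or satisfies
`r ≥ (t+1)(t+2)`, there exists an `r`-regular graph with no `{t, r-t}`-factor. -/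
theorem exists_regular_graph_no_factor (r t : ℕ) (ht : Odd t) (htpos : 0 < t)
    (hr : Even r ∨ (t + 1) * (t + 2) ≤ r) :
    ∃ (n : ℕ) (G : SimpleGraph (Fin n)),
      (∀ v, gdeg G v = r) ∧
      ¬ ∃ F : SimpleGraph (Fin n), F ≤ G ∧
        ∀ v, (gdeg F v : ℤ) = t ∨ (gdeg F v : ℤ) = (r : ℤ) - t := by
  by_cases hre : Even r
  · exact even_case r t ht hre
  · have hbound : (t + 1) * (t + 2) ≤ r := hr.resolve_left hre
    have hodd : r % 2 = 1 := Nat.odd_iff.1 (Nat.not_even_iff_odd.1 hre)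
    have ht2 : t % 2 = 1 := Nat.odd_iff.1 ht
    have hrb : t*t + 3*t + 3 ≤ r := by
      have hexp : (t+1)*(t+2) = t*t + 3*t + 2 := by ring
      have htt : t*t % 2 = 1 := by rw [Nat.mul_mod, ht2]
      omega
    apply AKC.transport (AKC.G r t) r t
    · intro v
      obtain ⟨c, (_ | ⟨j, (i | a)⟩)⟩ := v
      · exact AKC.gdeg_wv hrb c
      · exact AKC.gdeg_pv hrb c j i
      · exact AKC.gdeg_qv hodd ht2 hrb c j a
    · exact AKC.no_factor hodd ht2 (by omega) hrb
end

section
/- For every odd r ≥ 7, there exists an r-regular graph with no {1, r−1}-factor. -/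
open scoped Classical

namespace NoFac

def qv (r c j : ℕ) : ℕ := (2*r-1) * c + ((r-1) + j)

def pv (r c i : ℕ) : ℕ := (2*r-1) * c + i

def pt (r v : ℕ) : ℕ :=
  if v / (2*r-1) = 0 then
    (if v % (2*r-1) - (r-1) < 3 then v + (2*r-1)
     else if v % (2*r-1) - (r-1) < 6 then v + 2*(2*r-1) - 3
     else v + 3*(2*r-1) - 6)
  else if v / (2*r-1) = 1 then
    (if v % (2*r-1) - (r-1) < 3 then v - (2*r-1)
     else if (v % (2*r-1) - (r-1) - 3) % 2 = 0 then v + 1 else v - 1)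
  else if v / (2*r-1) = 2 then
    (if v % (2*r-1) - (r-1) < 3 then v + 3 - 2*(2*r-1)
     else if (v % (2*r-1) - (r-1) - 3) % 2 = 0 then v + 1 else v - 1)
  else
    (if v % (2*r-1) - (r-1) < r-6 then v + 6 - 3*(2*r-1)
     else if (v % (2*r-1) - (r-1) - (r-6)) % 2 = 0 then v + 1 else v - 1)

def isP (r v : ℕ) : Prop := v % (2*r-1) < r-1

instance (r v : ℕ) : Decidable (isP r v) := by unfold isP; infer_instance

variable {r : ℕ}

lemma qv_lt (hr : 7 ≤ r) {c j : ℕ} (hc : c < 4) (hj : j < r) :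
    qv r c j < 4*(2*r-1) := by
  have : (2*r-1)*c ≤ (2*r-1)*3 := Nat.mul_le_mul_left _ (by omega)
  unfold qv; omega

lemma pv_lt (hr : 7 ≤ r) {c i : ℕ} (hc : c < 4) (hi : i < r-1) :
    pv r c i < 4*(2*r-1) := by
  have : (2*r-1)*c ≤ (2*r-1)*3 := Nat.mul_le_mul_left _ (by omega)
  unfold pv; omega

lemma qv_div (hr : 7 ≤ r) {c j : ℕ} (hj : j < r) :
    qv r c j / (2*r-1) = c ∧ qv r c j % (2*r-1) = (r-1) + j := by
  have hb : 0 < 2*r-1 := by omega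
  unfold qv
  constructor
  · rw [Nat.mul_add_div hb, Nat.div_eq_of_lt (by omega)]; omega
  · rw [Nat.mul_add_mod, Nat.mod_eq_of_lt (by omega)]

lemma pv_div (hr : 7 ≤ r) {c i : ℕ} (hi : i < r-1) :
    pv r c i / (2*r-1) = c ∧ pv r c i % (2*r-1) = i := by
  have hb : 0 < 2*r-1 := by omega
  unfold pv
  constructor
  · rw [Nat.mul_add_div hb, Nat.div_eq_of_lt (by omega)]; omega
  · rw [Nat.mul_add_mod, Nat.mod_eq_of_lt (by omega)]

lemma isP_pv (hr : 7 ≤ r) {c i : ℕ} (hi : i < r-1) : isP r (pv r c i) := by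
  unfold isP; rw [(pv_div hr hi).2]; omega

lemma not_isP_qv (hr : 7 ≤ r) {c j : ℕ} (hj : j < r) : ¬ isP r (qv r c j) := by
  unfold isP; rw [(qv_div hr hj).2]; omega

lemma qv_inj (hr : 7 ≤ r) {c j c' j' : ℕ} (hj : j < r) (hj' : j' < r)
    (h : qv r c j = qv r c' j') : c = c' ∧ j = j' := by
  have h1 := (qv_div hr (c := c) hj).1
  have h2 := (qv_div hr (c := c) hj).2
  have h3 := (qv_div hr (c := c') hj').1
  have h4 := (qv_div hr (c := c') hj').2
  rw [h] at h1 h2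
  constructor <;> omega

-- evaluation lemmas
lemma pt0a (hr : 7 ≤ r) {j : ℕ} (hj : j < 3) : pt r (qv r 0 j) = qv r 1 j := by
  have h := qv_div hr (c := 0) (show j < r by omega)
  unfold pt
  rw [h.1, h.2, if_pos rfl, if_pos (by omega)]
  unfold qv; omega

lemma pt0b (hr : 7 ≤ r) {j : ℕ} (h3 : 3 ≤ j) (hj : j < 6) :
    pt r (qv r 0 j) = qv r 2 (j-3) := by
  have h := qv_div hr (c := 0) (show j < r by omega)
  unfold pt
  rw [h.1, h.2, if_pos rfl, if_neg (by omega), if_pos (by omega)]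
  unfold qv; omega

lemma pt0c (hr : 7 ≤ r) {j : ℕ} (h6 : 6 ≤ j) (hj : j < r) :
    pt r (qv r 0 j) = qv r 3 (j-6) := by
  have h := qv_div hr (c := 0) hj
  unfold pt
  rw [h.1, h.2, if_pos rfl, if_neg (by omega), if_neg (by omega)]
  unfold qv; omega

lemma pt1a (hr : 7 ≤ r) {j : ℕ} (hj : j < 3) : pt r (qv r 1 j) = qv r 0 j := by
  have h := qv_div hr (c := 1) (show j < r by omega)
  unfold pt
  rw [h.1, h.2, if_neg (by omega), if_pos rfl, if_pos (by omega)]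
  unfold qv; omega

lemma pt1b (hr : 7 ≤ r) {j : ℕ} (h3 : 3 ≤ j) (hj : j < r) (hp : (j-3) % 2 = 0) :
    pt r (qv r 1 j) = qv r 1 (j+1) := by
  have h := qv_div hr (c := 1) hj
  unfold pt
  rw [h.1, h.2, if_neg (by omega), if_pos rfl, if_neg (by omega), if_pos (by omega)]
  unfold qv; omega

lemma pt1c (hr : 7 ≤ r) {j : ℕ} (h3 : 3 ≤ j) (hj : j < r) (hp : (j-3) % 2 = 1) :
    pt r (qv r 1 j) = qv r 1 (j-1) := by
  have h := qv_div hr (c := 1) hj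
  unfold pt
  rw [h.1, h.2, if_neg (by omega), if_pos rfl, if_neg (by omega), if_neg (by omega)]
  unfold qv; omega

lemma pt2a (hr : 7 ≤ r) {j : ℕ} (hj : j < 3) : pt r (qv r 2 j) = qv r 0 (j+3) := by
  have h := qv_div hr (c := 2) (show j < r by omega)
  unfold pt
  rw [h.1, h.2, if_neg (by omega), if_neg (by omega), if_pos rfl, if_pos (by omega)]
  unfold qv; omega

lemma pt2b (hr : 7 ≤ r) {j : ℕ} (h3 : 3 ≤ j) (hj : j < r) (hp : (j-3) % 2 = 0) :
    pt r (qv r 2 j) = qv r 2 (j+1) := by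
  have h := qv_div hr (c := 2) hj
  unfold pt
  rw [h.1, h.2, if_neg (by omega), if_neg (by omega), if_pos rfl, if_neg (by omega),
    if_pos (by omega)]
  unfold qv; omega

lemma pt2c (hr : 7 ≤ r) {j : ℕ} (h3 : 3 ≤ j) (hj : j < r) (hp : (j-3) % 2 = 1) :
    pt r (qv r 2 j) = qv r 2 (j-1) := by
  have h := qv_div hr (c := 2) hj
  unfold pt
  rw [h.1, h.2, if_neg (by omega), if_neg (by omega), if_pos rfl, if_neg (by omega),
    if_neg (by omega)]
  unfold qv; omega

lemma pt3a (hr : 7 ≤ r) {j : ℕ} (hj : j < r-6) : pt r (qv r 3 j) = qv r 0 (j+6) := by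
  have h := qv_div hr (c := 3) (show j < r by omega)
  unfold pt
  rw [h.1, h.2, if_neg (by omega), if_neg (by omega), if_neg (by omega), if_pos (by omega)]
  unfold qv; omega

lemma pt3b (hr : 7 ≤ r) {j : ℕ} (h6 : r-6 ≤ j) (hj : j < r) (hp : (j-(r-6)) % 2 = 0) :
    pt r (qv r 3 j) = qv r 3 (j+1) := by
  have h := qv_div hr (c := 3) hj
  unfold pt
  rw [h.1, h.2, if_neg (by omega), if_neg (by omega), if_neg (by omega), if_neg (by omega),
    if_pos (by omega)]
  unfold qv; omega

lemma pt3c (hr : 7 ≤ r) {j : ℕ} (h6 : r-6 ≤ j) (hj : j < r) (hp : (j-(r-6)) % 2 = 1) :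
    pt r (qv r 3 j) = qv r 3 (j-1) := by
  have h := qv_div hr (c := 3) hj
  unfold pt
  rw [h.1, h.2, if_neg (by omega), if_neg (by omega), if_neg (by omega), if_neg (by omega),
    if_neg (by omega)]
  unfold qv; omega

lemma pt_spec (hr : 7 ≤ r) (hodd : r % 2 = 1) {c j : ℕ} (hc : c < 4) (hj : j < r) :
    ∃ c' j', c' < 4 ∧ j' < r ∧ pt r (qv r c j) = qv r c' j' ∧
      pt r (qv r c' j') = qv r c j ∧ qv r c' j' ≠ qv r c j := by
  have hne : ∀ c₁ j₁ c₂ j₂, j₁ < r → j₂ < r → (c₁ ≠ c₂ ∨ j₁ ≠ j₂) →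
      qv r c₁ j₁ ≠ qv r c₂ j₂ := by
    intro c₁ j₁ c₂ j₂ h1 h2 h3 h
    rcases qv_inj hr h1 h2 h with ⟨rfl, rfl⟩
    tauto
  interval_cases c
  · rcases Nat.lt_or_ge j 3 with h3 | h3
    · exact ⟨1, j, by omega, by omega, pt0a hr h3, pt1a hr h3, hne _ _ _ _ hj hj (by omega)⟩
    · rcases Nat.lt_or_ge j 6 with h6 | h6
      · refine ⟨2, j-3, by omega, by omega, pt0b hr h3 h6, ?_, hne _ _ _ _ (by omega) hj (by omega)⟩
        rw [pt2a hr (by omega)]; exact congrArg _ (by omega)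
      · refine ⟨3, j-6, by omega, by omega, pt0c hr h6 hj, ?_, hne _ _ _ _ (by omega) hj (by omega)⟩
        rw [pt3a hr (by omega)]; exact congrArg _ (by omega)
  · rcases Nat.lt_or_ge j 3 with h3 | h3
    · exact ⟨0, j, by omega, by omega, pt1a hr h3, pt0a hr h3, hne _ _ _ _ hj hj (by omega)⟩
    · rcases Nat.even_or_odd (j-3) with hp | hp
      · have hp : (j-3) % 2 = 0 := Nat.even_iff.mp hp
        have hj1 : j + 1 < r := by omega
        refine ⟨1, j+1, by omega, hj1, pt1b hr h3 hj hp, ?_, hne _ _ _ _ hj1 hj (by omega)⟩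
        rw [pt1c hr (by omega) hj1 (by omega)]; exact congrArg _ (by omega)
      · have hp : (j-3) % 2 = 1 := Nat.odd_iff.mp hp
        refine ⟨1, j-1, by omega, by omega, pt1c hr h3 hj hp, ?_, hne _ _ _ _ (by omega) hj (by omega)⟩
        rw [pt1b hr (by omega) (by omega) (by omega)]; exact congrArg _ (by omega)
  · rcases Nat.lt_or_ge j 3 with h3 | h3
    · refine ⟨0, j+3, by omega, by omega, pt2a hr h3, ?_, hne _ _ _ _ (by omega) hj (by omega)⟩
      rw [pt0b hr (by omega) (by omega)]; exact congrArg _ (by omega)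
    · rcases Nat.even_or_odd (j-3) with hp | hp
      · have hp : (j-3) % 2 = 0 := Nat.even_iff.mp hp
        have hj1 : j + 1 < r := by omega
        refine ⟨2, j+1, by omega, hj1, pt2b hr h3 hj hp, ?_, hne _ _ _ _ hj1 hj (by omega)⟩
        rw [pt2c hr (by omega) hj1 (by omega)]; exact congrArg _ (by omega)
      · have hp : (j-3) % 2 = 1 := Nat.odd_iff.mp hp
        refine ⟨2, j-1, by omega, by omega, pt2c hr h3 hj hp, ?_, hne _ _ _ _ (by omega) hj (by omega)⟩
        rw [pt2b hr (by omega) (by omega) (by omega)]; exact congrArg _ (by omega)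
  · rcases Nat.lt_or_ge j (r-6) with h6 | h6
    · refine ⟨0, j+6, by omega, by omega, pt3a hr h6, ?_, hne _ _ _ _ (by omega) hj (by omega)⟩
      rw [pt0c hr (by omega) (by omega)]; exact congrArg _ (by omega)
    · rcases Nat.even_or_odd (j-(r-6)) with hp | hp
      · have hp : (j-(r-6)) % 2 = 0 := Nat.even_iff.mp hp
        have hj1 : j + 1 < r := by omega
        refine ⟨3, j+1, by omega, hj1, pt3b hr h6 hj hp, ?_, hne _ _ _ _ hj1 hj (by omega)⟩
        rw [pt3c hr (by omega) hj1 (by omega)]; exact congrArg _ (by omega)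
      · have hp : (j-(r-6)) % 2 = 1 := Nat.odd_iff.mp hp
        refine ⟨3, j-1, by omega, by omega, pt3c hr h6 hj hp, ?_, hne _ _ _ _ (by omega) hj (by omega)⟩
        rw [pt3b hr (by omega) (by omega) (by omega)]; exact congrArg _ (by omega)


def adjD (r v w : ℕ) : Prop :=
  v ≠ w ∧
  ((v / (2*r-1) = w / (2*r-1) ∧ ((isP r v ∧ ¬ isP r w) ∨ (¬ isP r v ∧ isP r w)))
   ∨ (¬ isP r v ∧ ¬ isP r w ∧ (pt r v = w ∨ pt r w = v)))

def GG (r : ℕ) : SimpleGraph (Fin (4*(2*r-1))) where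
  Adj v w := adjD r v.val w.val
  symm := by
    refine ⟨?_⟩
    rintro v w ⟨hne, h⟩
    exact ⟨fun h' => hne h'.symm, by tauto⟩
  loopless := ⟨fun v h => h.1 rfl⟩

lemma decompQ (hr : 7 ≤ r) {v : ℕ} (hv : v < 4*(2*r-1)) (hq : ¬ isP r v) :
    ∃ c j, c < 4 ∧ j < r ∧ v = qv r c j := by
  have hb : 0 < 2*r-1 := by omega
  have hd := Nat.div_add_mod v (2*r-1)
  have hm : v % (2*r-1) < 2*r-1 := Nat.mod_lt _ hb
  have hc : v / (2*r-1) < 4 := by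
    rw [Nat.div_lt_iff_lt_mul hb]; omega
  unfold isP at hq
  refine ⟨v / (2*r-1), v % (2*r-1) - (r-1), hc, by omega, ?_⟩
  unfold qv; omega

lemma decompP (hr : 7 ≤ r) {v : ℕ} (hv : v < 4*(2*r-1)) (hp : isP r v) :
    ∃ c i, c < 4 ∧ i < r-1 ∧ v = pv r c i := by
  have hb : 0 < 2*r-1 := by omega
  have hd := Nat.div_add_mod v (2*r-1)
  have hc : v / (2*r-1) < 4 := by
    rw [Nat.div_lt_iff_lt_mul hb]; omega
  unfold isP at hp
  exact ⟨v / (2*r-1), v % (2*r-1), hc, hp, by unfold pv; omega⟩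

def qf (hr : 7 ≤ r) (c j : ℕ) : Fin (4*(2*r-1)) :=
  ⟨qv r c j % (4*(2*r-1)), Nat.mod_lt _ (by omega)⟩

def pf (hr : 7 ≤ r) (c i : ℕ) : Fin (4*(2*r-1)) :=
  ⟨pv r c i % (4*(2*r-1)), Nat.mod_lt _ (by omega)⟩

lemma qf_val (hr : 7 ≤ r) {c j : ℕ} (hc : c < 4) (hj : j < r) :
    (qf hr c j).val = qv r c j := Nat.mod_eq_of_lt (qv_lt hr hc hj)

lemma pf_val (hr : 7 ≤ r) {c i : ℕ} (hc : c < 4) (hi : i < r-1) :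
    (pf hr c i).val = pv r c i := Nat.mod_eq_of_lt (pv_lt hr hc hi)

lemma adj_pf (hr : 7 ≤ r) {c i : ℕ} (hc : c < 4) (hi : i < r-1)
    (w : Fin (4*(2*r-1))) :
    (GG r).Adj (pf hr c i) w ↔ ∃ j, j < r ∧ w = qf hr c j := by
  constructor
  · rintro ⟨hne, hsame | hqq⟩
    · rcases hsame with ⟨hdiv, ⟨-, hQ⟩ | ⟨hnP, -⟩⟩
      · obtain ⟨c', j', hc', hj', hw⟩ := decompQ hr w.isLt hQ
        refine ⟨j', hj', ?_⟩
        have hA := (pv_div hr (c := c) hi).1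
        have hB := (qv_div hr (c := c') hj').1
        rw [pf_val hr hc hi, hw, hB, hA] at hdiv
        subst hdiv
        apply Fin.ext; rw [qf_val hr hc hj', hw]
      · exact absurd (by rw [pf_val hr hc hi]; exact isP_pv hr hi) hnP
    · exact absurd (by rw [pf_val hr hc hi]; exact isP_pv hr hi) hqq.1
  · rintro ⟨j, hj, rfl⟩
    refine ⟨?_, Or.inl ⟨?_, Or.inl ⟨?_, ?_⟩⟩⟩
    · rw [pf_val hr hc hi, qf_val hr hc hj]
      intro h
      exact not_isP_qv hr hj (h ▸ isP_pv hr hi)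
    · rw [pf_val hr hc hi, qf_val hr hc hj, (pv_div hr hi).1, (qv_div hr hj).1]
    · rw [pf_val hr hc hi]; exact isP_pv hr hi
    · rw [qf_val hr hc hj]; exact not_isP_qv hr hj

lemma adj_qf (hr : 7 ≤ r) (hodd : r % 2 = 1) {c j : ℕ} (hc : c < 4) (hj : j < r)
    (w : Fin (4*(2*r-1))) :
    (GG r).Adj (qf hr c j) w ↔
      ((∃ i, i < r-1 ∧ w = pf hr c i) ∨ w.val = pt r (qv r c j)) := by
  constructor
  · rintro ⟨hne, hsame | hqq⟩
    · rcases hsame with ⟨hdiv, ⟨hP, -⟩ | ⟨-, hPw⟩⟩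
      · rw [qf_val hr hc hj] at hP; exact absurd hP (not_isP_qv hr hj)
      · obtain ⟨c', i', hc', hi', hw⟩ := decompP hr w.isLt hPw
        refine Or.inl ⟨i', hi', ?_⟩
        have hA := (qv_div hr (c := c) hj).1
        have hB := (pv_div hr (c := c') hi').1
        rw [qf_val hr hc hj, hA, hw, hB] at hdiv
        subst hdiv
        apply Fin.ext; rw [pf_val hr hc hi', hw]
    · rcases hqq with ⟨-, hQw, hpt | hpt⟩
      · right; rw [← hpt, qf_val hr hc hj]
      · obtain ⟨c₂, j₂, hc₂, hj₂, hw⟩ := decompQ hr w.isLt hQw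
        obtain ⟨c₃, j₃, hc₃, hj₃, he1, he2, -⟩ := pt_spec hr hodd hc₂ hj₂
        rw [qf_val hr hc hj, hw] at hpt
        rw [hpt] at he1
        obtain ⟨rfl, rfl⟩ := qv_inj hr hj hj₃ he1
        right; rw [hw, ← he2]
  · obtain ⟨c', j', hc', hj', he1, he2, hne⟩ := pt_spec hr hodd hc hj
    rintro (⟨i, hi, rfl⟩ | hpt)
    · exact (GG r).adj_symm ((adj_pf hr hc hi (qf hr c j)).2 ⟨j, hj, rfl⟩)
    · refine ⟨?_, Or.inr ⟨?_, ?_, Or.inl ?_⟩⟩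
      · rw [qf_val hr hc hj, hpt, he1]; exact fun h => hne h.symm
      · rw [qf_val hr hc hj]; exact not_isP_qv hr hj
      · rw [hpt, he1]; exact not_isP_qv hr hj'
      · rw [qf_val hr hc hj, hpt]


def ptf (hr : 7 ≤ r) (c j : ℕ) : Fin (4*(2*r-1)) :=
  ⟨pt r (qv r c j) % (4*(2*r-1)), Nat.mod_lt _ (by omega)⟩

lemma ptf_val (hr : 7 ≤ r) (hodd : r % 2 = 1) {c j : ℕ} (hc : c < 4) (hj : j < r) :
    (ptf hr c j).val = pt r (qv r c j) := by
  obtain ⟨c', j', hc', hj', he1, -, -⟩ := pt_spec hr hodd hc hj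
  exact Nat.mod_eq_of_lt (by rw [he1]; exact qv_lt hr hc' hj')

lemma ptf_eq (hr : 7 ≤ r) (hodd : r % 2 = 1) {c j c' j' : ℕ} (hc : c < 4) (hj : j < r)
    (hc' : c' < 4) (hj' : j' < r) (h : pt r (qv r c j) = qv r c' j') :
    ptf hr c j = qf hr c' j' := by
  apply Fin.ext
  rw [ptf_val hr hodd hc hj, qf_val hr hc' hj', h]

lemma pv_inj (hr : 7 ≤ r) {c i i' : ℕ} (hi : i < r-1) (hi' : i' < r-1)
    (h : pv r c i = pv r c i') : i = i' := by
  have h1 := (pv_div hr (c := c) hi).2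
  have h2 := (pv_div hr (c := c) hi').2
  rw [h] at h1; omega

lemma qf_injOn (hr : 7 ≤ r) {c : ℕ} (hc : c < 4) {j j' : ℕ} (hj : j < r) (hj' : j' < r)
    (h : qf hr c j = qf hr c j') : j = j' := by
  have := congrArg Fin.val h
  rw [qf_val hr hc hj, qf_val hr hc hj'] at this
  exact (qv_inj hr hj hj' this).2

lemma pf_injOn (hr : 7 ≤ r) {c : ℕ} (hc : c < 4) {i i' : ℕ} (hi : i < r-1) (hi' : i' < r-1)
    (h : pf hr c i = pf hr c i') : i = i' := by
  have := congrArg Fin.val h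
  rw [pf_val hr hc hi, pf_val hr hc hi'] at this
  exact pv_inj hr hi hi' this

lemma regular (hr : 7 ≤ r) (hodd : r % 2 = 1) (v : Fin (4*(2*r-1))) :
    gdeg (GG r) v = r := by
  classical
  by_cases hP : isP r v.val
  · obtain ⟨c, i, hc, hi, hv⟩ := decompP hr v.isLt hP
    have hvf : v = pf hr c i := Fin.ext (by rw [pf_val hr hc hi, hv])
    subst hvf
    have hset : {w | (GG r).Adj (pf hr c i) w} =
        ↑((Finset.range r).image (fun j => qf hr c j)) := by
      ext w
      simp only [Set.mem_setOf_eq, Finset.coe_image, Set.mem_image, Finset.mem_coe,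
        Finset.mem_range, adj_pf hr hc hi]
      constructor
      · rintro ⟨j, hj, rfl⟩; exact ⟨j, hj, rfl⟩
      · rintro ⟨j, hj, rfl⟩; exact ⟨j, hj, rfl⟩
    rw [gdeg, hset, Set.ncard_coe_finset,
      Finset.card_image_of_injOn (fun a ha b hb hab =>
        qf_injOn hr hc (Finset.mem_range.mp ha) (Finset.mem_range.mp hb) hab),
      Finset.card_range]
  · obtain ⟨c, j, hc, hj, hv⟩ := decompQ hr v.isLt hP
    have hvf : v = qf hr c j := Fin.ext (by rw [qf_val hr hc hj, hv])
    subst hvf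
    obtain ⟨c', j', hc', hj', he1, he2, hne⟩ := pt_spec hr hodd hc hj
    have hset : {w | (GG r).Adj (qf hr c j) w} =
        ↑(((Finset.range (r-1)).image (fun i => pf hr c i)) ∪ {ptf hr c j}) := by
      ext w
      simp only [Set.mem_setOf_eq, Finset.coe_union, Set.mem_union, Finset.coe_image,
        Set.mem_image, Finset.mem_coe, Finset.mem_range, Finset.coe_singleton,
        Set.mem_singleton_iff, adj_qf hr hodd hc hj]
      constructor
      · rintro (⟨i, hi, rfl⟩ | hw)
        · exact Or.inl ⟨i, hi, rfl⟩
        · exact Or.inr (Fin.ext (by rw [hw, ptf_val hr hodd hc hj]))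
      · rintro (⟨i, hi, rfl⟩ | rfl)
        · exact Or.inl ⟨i, hi, rfl⟩
        · exact Or.inr (ptf_val hr hodd hc hj)
    rw [gdeg, hset, Set.ncard_coe_finset]
    rw [Finset.card_union_of_disjoint, Finset.card_image_of_injOn (fun a ha b hb hab =>
        pf_injOn hr hc (Finset.mem_range.mp ha) (Finset.mem_range.mp hb) hab),
      Finset.card_range, Finset.card_singleton]
    · omega
    · rw [Finset.disjoint_singleton_right]
      intro hmem
      obtain ⟨i, hi, hpe⟩ := Finset.mem_image.mp hmem
      have := congrArg Fin.val hpe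
      rw [pf_val hr hc (Finset.mem_range.mp hi), ptf_val hr hodd hc hj, he1] at this
      exact not_isP_qv hr hj' (this ▸ isP_pv hr (Finset.mem_range.mp hi))


lemma sum_deg_struct (r : ℕ) (s : Finset ℕ) (g : ℕ → ℕ)
    (h : ∀ x ∈ s, g x = 1 ∨ g x = r-1) :
    ∃ k, k ≤ s.card ∧ ∑ x ∈ s, g x = (s.card - k) + k*(r-1) := by
  classical
  refine ⟨(s.filter (fun x => g x = r-1)).card, Finset.card_filter_le _ _, ?_⟩
  rw [← Finset.sum_filter_add_sum_filter_not s (fun x => g x = r-1)]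
  have h1 : ∑ x ∈ s.filter (fun x => g x = r-1), g x
      = (s.filter (fun x => g x = r-1)).card * (r-1) := by
    rw [Finset.sum_congr rfl (fun x hx => (Finset.mem_filter.mp hx).2),
      Finset.sum_const, smul_eq_mul]
  have h2 : ∑ x ∈ s.filter (fun x => ¬ g x = r-1), g x
      = (s.filter (fun x => ¬ g x = r-1)).card := by
    rw [Finset.sum_congr rfl (fun x hx => ?_), Finset.sum_const, smul_eq_mul, mul_one]
    rcases h x (Finset.mem_filter.mp hx).1 with h' | h'
    · exact h'
    · exact absurd h' (Finset.mem_filter.mp hx).2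
  have h3 := Finset.card_filter_add_card_filter_not
    (s := s) (p := fun x => g x = r-1)
  omega

lemma sum_pairs (g : ℕ → ℕ) (a s : ℕ) :
    ∑ j ∈ Finset.Ico a (a+2*s), g j
      = ∑ k ∈ Finset.range s, (g (a+2*k) + g (a+2*k+1)) := by
  induction s with
  | zero => simp
  | succ t ih =>
      have h1 : a + 2*(t+1) = (a + 2*t + 1) + 1 := by omega
      rw [Finset.sum_range_succ, ← ih, h1, Finset.sum_Ico_succ_top (by omega),
        Finset.sum_Ico_succ_top (by omega)]
      omega

lemma copy_xi (hr7 : 7 ≤ r) (hodd : r % 2 = 1) (F : SimpleGraph (Fin (4*(2*r-1))))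
    (hF : F ≤ GG r) (hdeg : ∀ v, gdeg F v = 1 ∨ gdeg F v = r-1)
    {c : ℕ} (hc : c < 4) :
    (∑ j ∈ Finset.range r, (if F.Adj (qf hr7 c j) (ptf hr7 c j) then 1 else 0)) = 1 ∨
    (∑ j ∈ Finset.range r, (if F.Adj (qf hr7 c j) (ptf hr7 c j) then 1 else 0)) = r-1 := by
  classical
  -- degree of a Q vertex in F
  have hQdeg : ∀ j, j < r → gdeg F (qf hr7 c j) =
      (∑ i ∈ Finset.range (r-1), if F.Adj (qf hr7 c j) (pf hr7 c i) then 1 else 0)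
      + (if F.Adj (qf hr7 c j) (ptf hr7 c j) then 1 else 0) := by
    intro j hj
    obtain ⟨c', j', hc', hj', he1, he2, hne⟩ := pt_spec hr7 hodd hc hj
    have hdisj : Disjoint ((Finset.range (r-1)).image (fun i => pf hr7 c i))
        ({ptf hr7 c j} : Finset (Fin (4*(2*r-1)))) := by
      rw [Finset.disjoint_singleton_right]
      intro hmem
      obtain ⟨i, hi, hpe⟩ := Finset.mem_image.mp hmem
      have := congrArg Fin.val hpe
      rw [pf_val hr7 hc (Finset.mem_range.mp hi), ptf_val hr7 hodd hc hj, he1] at this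
      exact not_isP_qv hr7 hj' (this ▸ isP_pv hr7 (Finset.mem_range.mp hi))
    have hset : {w | F.Adj (qf hr7 c j) w} =
        ↑((((Finset.range (r-1)).image (fun i => pf hr7 c i)) ∪ {ptf hr7 c j}).filter
          (fun w => F.Adj (qf hr7 c j) w)) := by
      ext w
      simp only [Set.mem_setOf_eq, Finset.coe_filter, Finset.mem_union, Finset.mem_image,
        Finset.mem_range, Finset.mem_singleton]
      constructor
      · intro hw
        refine ⟨?_, hw⟩
        rcases (adj_qf hr7 hodd hc hj w).1 (hF hw) with ⟨i, hi, rfl⟩ | hw'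
        · exact Or.inl ⟨i, hi, rfl⟩
        · exact Or.inr (Fin.ext (by rw [hw', ptf_val hr7 hodd hc hj]))
      · exact fun hw => hw.2
    rw [gdeg, hset, Set.ncard_coe_finset, Finset.filter_union, Finset.card_union_of_disjoint
      (Finset.disjoint_filter_filter hdisj)]
    congr 1
    · rw [Finset.card_filter]
      rw [Finset.sum_image (fun a ha b hb hab =>
        pf_injOn hr7 hc (Finset.mem_range.mp ha) (Finset.mem_range.mp hb) hab)]
    · rw [Finset.card_filter, Finset.sum_singleton]
  have hPdeg : ∀ i, i < r-1 → gdeg F (pf hr7 c i) =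
      (∑ j ∈ Finset.range r, if F.Adj (pf hr7 c i) (qf hr7 c j) then 1 else 0) := by
    intro i hi
    have hset : {w | F.Adj (pf hr7 c i) w} =
        ↑(((Finset.range r).image (fun j => qf hr7 c j)).filter
          (fun w => F.Adj (pf hr7 c i) w)) := by
      ext w
      simp only [Set.mem_setOf_eq, Finset.coe_filter, Finset.mem_image, Finset.mem_range]
      constructor
      · intro hw
        refine ⟨?_, hw⟩
        obtain ⟨jj, hjj, rfl⟩ := (adj_pf hr7 hc hi w).1 (hF hw)
        exact ⟨jj, hjj, rfl⟩
      · exact fun hw => hw.2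
    rw [gdeg, hset, Set.ncard_coe_finset, Finset.card_filter]
    rw [Finset.sum_image (fun a ha b hb hab =>
      qf_injOn hr7 hc (Finset.mem_range.mp ha) (Finset.mem_range.mp hb) hab)]
  -- the double sum, counted both ways
  have hswap : (∑ j ∈ Finset.range r, ∑ i ∈ Finset.range (r-1),
        if F.Adj (qf hr7 c j) (pf hr7 c i) then 1 else 0)
      = (∑ i ∈ Finset.range (r-1), ∑ j ∈ Finset.range r,
        if F.Adj (pf hr7 c i) (qf hr7 c j) then 1 else 0) := by
    rw [Finset.sum_comm]
    exact Finset.sum_congr rfl (fun i _ => Finset.sum_congr rfl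
      (fun j _ => if_congr (F.adj_comm _ _) rfl rfl))
  have hSQ : (∑ j ∈ Finset.range r, gdeg F (qf hr7 c j))
      = (∑ j ∈ Finset.range r, ∑ i ∈ Finset.range (r-1),
          if F.Adj (qf hr7 c j) (pf hr7 c i) then 1 else 0)
        + (∑ j ∈ Finset.range r, if F.Adj (qf hr7 c j) (ptf hr7 c j) then 1 else 0) := by
    rw [← Finset.sum_add_distrib]
    exact Finset.sum_congr rfl (fun j hj => hQdeg j (Finset.mem_range.mp hj))
  have hSP : (∑ i ∈ Finset.range (r-1), gdeg F (pf hr7 c i))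
      = (∑ i ∈ Finset.range (r-1), ∑ j ∈ Finset.range r,
          if F.Adj (pf hr7 c i) (qf hr7 c j) then 1 else 0) :=
    Finset.sum_congr rfl (fun i hi => hPdeg i (Finset.mem_range.mp hi))
  obtain ⟨m, hm, hmv⟩ := sum_deg_struct r (Finset.range r) (fun j => gdeg F (qf hr7 c j))
    (fun j _ => hdeg _)
  obtain ⟨k, hk, hkv⟩ := sum_deg_struct r (Finset.range (r-1)) (fun i => gdeg F (pf hr7 c i))
    (fun i _ => hdeg _)
  rw [Finset.card_range] at hm hmv hk hkv
  have hxile : (∑ j ∈ Finset.range r, if F.Adj (qf hr7 c j) (ptf hr7 c j) then 1 else 0)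
      ≤ r := by
    calc (∑ j ∈ Finset.range r, if F.Adj (qf hr7 c j) (ptf hr7 c j) then 1 else 0)
        ≤ ∑ j ∈ Finset.range r, 1 :=
          Finset.sum_le_sum (fun j _ => by split <;> omega)
      _ = r := by rw [Finset.sum_const, smul_eq_mul, mul_one, Finset.card_range]
  have heq : (r - m) + m*(r-1) = ((r-1) - k) + k*(r-1) +
      (∑ j ∈ Finset.range r, if F.Adj (qf hr7 c j) (ptf hr7 c j) then 1 else 0) := by
    rw [← hmv, ← hkv, hSQ, hSP, hswap]
  set x := (∑ j ∈ Finset.range r, if F.Adj (qf hr7 c j) (ptf hr7 c j) then 1 else 0) with hxdef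
  clear_value x
  rcases Nat.lt_trichotomy m k with h | h | h
  · exfalso
    obtain ⟨t, rfl⟩ : ∃ t, k = m + t + 1 := ⟨k - m - 1, by omega⟩
    have hmul : (m+t+1)*(r-1) = m*(r-1) + t*(r-1) + (r-1) := by ring
    have ht : t * 1 ≤ t * (r-1) := Nat.mul_le_mul_left t (by omega)
    rw [mul_one] at ht
    omega
  · subst h; omega
  · rcases Nat.lt_or_ge m (k+2) with h2 | h2
    · have hmk : m = k+1 := by omega
      subst hmk
      rw [add_one_mul] at heq
      omega
    · exfalso
      obtain ⟨t, rfl⟩ : ∃ t, m = k + t := ⟨m - k, by omega⟩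
      have ht2 : 2 ≤ t := by omega
      have hmul : (k+t)*(r-1) = k*(r-1) + (t + t*(r-2)) := by
        have : t*(r-1) = t + t*(r-2) := by
          have hh : r - 1 = 1 + (r-2) := by omega
          rw [hh, Nat.mul_add, mul_one]
        rw [Nat.add_mul, this]
      have ht3 : 2*(r-2) ≤ t*(r-2) := Nat.mul_le_mul_right _ (by omega)
      omega


lemma main_contra (hr7 : 7 ≤ r) (hodd : r % 2 = 1) (F : SimpleGraph (Fin (4*(2*r-1))))
    (hF : F ≤ GG r) (hdeg : ∀ v, gdeg F v = 1 ∨ gdeg F v = r-1) : False := by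
  have hx0 := copy_xi hr7 hodd F hF hdeg (show (0:ℕ) < 4 by omega)
  have hx1 := copy_xi hr7 hodd F hF hdeg (show (1:ℕ) < 4 by omega)
  have hx2 := copy_xi hr7 hodd F hF hdeg (show (2:ℕ) < 4 by omega)
  have hps : 3 + 2*((r-3)/2) = r := by omega
  -- expansion of ξ1
  have e1 : (∑ j ∈ Finset.range r, (if F.Adj (qf hr7 1 j) (ptf hr7 1 j) then 1 else 0))
      = (∑ j ∈ Finset.Ico 0 3, (if F.Adj (qf hr7 1 j) (qf hr7 0 j) then 1 else 0))
        + (∑ j ∈ Finset.Ico 3 r, (if F.Adj (qf hr7 1 j) (ptf hr7 1 j) then 1 else 0)) := by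
    rw [Finset.range_eq_Ico,
      ← Finset.sum_Ico_consecutive _ (show (0:ℕ) ≤ 3 by omega) (show 3 ≤ r by omega)]
    congr 1
    refine Finset.sum_congr rfl (fun j hj => ?_)
    have hj3 : j < 3 := (Finset.mem_Ico.mp hj).2
    rw [ptf_eq hr7 hodd (by omega) (by omega) (by omega) (by omega) (pt1a hr7 hj3)]
  have e1' : (∑ j ∈ Finset.Ico 3 r, (if F.Adj (qf hr7 1 j) (ptf hr7 1 j) then 1 else 0))
      = 2 * ∑ k ∈ Finset.range ((r-3)/2),
          (if F.Adj (qf hr7 1 (3+2*k)) (qf hr7 1 (3+2*k+1)) then 1 else 0) := by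
    rw [show Finset.Ico 3 r = Finset.Ico 3 (3+2*((r-3)/2)) from by rw [hps]]
    rw [sum_pairs, Finset.mul_sum]
    refine Finset.sum_congr rfl (fun k hk => ?_)
    have hk' : k < (r-3)/2 := Finset.mem_range.mp hk
    have h1 : ptf hr7 1 (3+2*k) = qf hr7 1 (3+2*k+1) :=
      ptf_eq hr7 hodd (by omega) (by omega) (by omega) (by omega)
        (pt1b hr7 (by omega) (by omega) (by omega))
    have h2 : ptf hr7 1 (3+2*k+1) = qf hr7 1 (3+2*k) := by
      have hpt : pt r (qv r 1 (3+2*k+1)) = qv r 1 (3+2*k) := by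
        rw [pt1c hr7 (by omega) (by omega) (by omega)]; exact congrArg _ (by omega)
      exact ptf_eq hr7 hodd (by omega) (by omega) (by omega) (by omega) hpt
    rw [h1, h2, if_congr (F.adj_comm (qf hr7 1 (3+2*k+1)) (qf hr7 1 (3+2*k))) rfl rfl]
    split <;> omega
  -- expansion of ξ2
  have e2 : (∑ j ∈ Finset.range r, (if F.Adj (qf hr7 2 j) (ptf hr7 2 j) then 1 else 0))
      = (∑ j ∈ Finset.Ico 0 3, (if F.Adj (qf hr7 2 j) (qf hr7 0 (j+3)) then 1 else 0))
        + (∑ j ∈ Finset.Ico 3 r, (if F.Adj (qf hr7 2 j) (ptf hr7 2 j) then 1 else 0)) := by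
    rw [Finset.range_eq_Ico,
      ← Finset.sum_Ico_consecutive _ (show (0:ℕ) ≤ 3 by omega) (show 3 ≤ r by omega)]
    congr 1
    refine Finset.sum_congr rfl (fun j hj => ?_)
    have hj3 : j < 3 := (Finset.mem_Ico.mp hj).2
    rw [ptf_eq hr7 hodd (by omega) (by omega) (by omega) (by omega) (pt2a hr7 hj3)]
  have e2' : (∑ j ∈ Finset.Ico 3 r, (if F.Adj (qf hr7 2 j) (ptf hr7 2 j) then 1 else 0))
      = 2 * ∑ k ∈ Finset.range ((r-3)/2),
          (if F.Adj (qf hr7 2 (3+2*k)) (qf hr7 2 (3+2*k+1)) then 1 else 0) := by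
    rw [show Finset.Ico 3 r = Finset.Ico 3 (3+2*((r-3)/2)) from by rw [hps]]
    rw [sum_pairs, Finset.mul_sum]
    refine Finset.sum_congr rfl (fun k hk => ?_)
    have hk' : k < (r-3)/2 := Finset.mem_range.mp hk
    have h1 : ptf hr7 2 (3+2*k) = qf hr7 2 (3+2*k+1) :=
      ptf_eq hr7 hodd (by omega) (by omega) (by omega) (by omega)
        (pt2b hr7 (by omega) (by omega) (by omega))
    have h2 : ptf hr7 2 (3+2*k+1) = qf hr7 2 (3+2*k) := by
      have hpt : pt r (qv r 2 (3+2*k+1)) = qv r 2 (3+2*k) := by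
        rw [pt2c hr7 (by omega) (by omega) (by omega)]; exact congrArg _ (by omega)
      exact ptf_eq hr7 hodd (by omega) (by omega) (by omega) (by omega) hpt
    rw [h1, h2, if_congr (F.adj_comm (qf hr7 2 (3+2*k+1)) (qf hr7 2 (3+2*k))) rfl rfl]
    split <;> omega
  -- expansion of ξ0
  have e0 : (∑ j ∈ Finset.range r, (if F.Adj (qf hr7 0 j) (ptf hr7 0 j) then 1 else 0))
      = ((∑ j ∈ Finset.Ico 0 3, (if F.Adj (qf hr7 0 j) (ptf hr7 0 j) then 1 else 0))
        + (∑ j ∈ Finset.Ico 3 6, (if F.Adj (qf hr7 0 j) (ptf hr7 0 j) then 1 else 0)))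
        + (∑ j ∈ Finset.Ico 6 r, (if F.Adj (qf hr7 0 j) (ptf hr7 0 j) then 1 else 0)) := by
    rw [Finset.range_eq_Ico,
      ← Finset.sum_Ico_consecutive _ (show (0:ℕ) ≤ 6 by omega) (show 6 ≤ r by omega),
      ← Finset.sum_Ico_consecutive _ (show (0:ℕ) ≤ 3 by omega) (show (3:ℕ) ≤ 6 by omega)]
  have e0a : (∑ j ∈ Finset.Ico 0 3, (if F.Adj (qf hr7 0 j) (ptf hr7 0 j) then 1 else 0))
      = (∑ j ∈ Finset.Ico 0 3, (if F.Adj (qf hr7 1 j) (qf hr7 0 j) then 1 else 0)) := by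
    refine Finset.sum_congr rfl (fun j hj => ?_)
    have hj3 : j < 3 := (Finset.mem_Ico.mp hj).2
    rw [ptf_eq hr7 hodd (by omega) (by omega) (by omega) (by omega) (pt0a hr7 hj3)]
    exact if_congr (F.adj_comm _ _) rfl rfl
  have e0b : (∑ j ∈ Finset.Ico 3 6, (if F.Adj (qf hr7 0 j) (ptf hr7 0 j) then 1 else 0))
      = (∑ j ∈ Finset.Ico 0 3, (if F.Adj (qf hr7 2 j) (qf hr7 0 (j+3)) then 1 else 0)) := by
    rw [Finset.sum_Ico_eq_sum_range, Finset.sum_Ico_eq_sum_range]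
    refine Finset.sum_congr rfl (fun i hi => ?_)
    have hi3 : i < 3 := by
      have := Finset.mem_range.mp hi; omega
    have hp : ptf hr7 0 (3+i) = qf hr7 2 i := by
      have hpt : pt r (qv r 0 (3+i)) = qv r 2 i := by
        rw [pt0b hr7 (by omega) (by omega)]; exact congrArg _ (by omega)
      exact ptf_eq hr7 hodd (by omega) (by omega) (by omega) (by omega) hpt
    rw [show (0:ℕ)+i = i from by omega, hp, show 3+i = i+3 from by omega]
    exact if_congr (F.adj_comm _ _) rfl rfl
  -- bounds
  have hb1 : ∀ (a b : ℕ) (g : ℕ → Fin (4*(2*r-1))) (g' : ℕ → Fin (4*(2*r-1))),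
      (∑ j ∈ Finset.Ico a b, (if F.Adj (g j) (g' j) then 1 else 0)) ≤ b - a := by
    intro a b g g'
    calc (∑ j ∈ Finset.Ico a b, (if F.Adj (g j) (g' j) then 1 else 0))
        ≤ ∑ j ∈ Finset.Ico a b, 1 := Finset.sum_le_sum (fun j _ => by split <;> omega)
      _ = b - a := by rw [Finset.sum_const, smul_eq_mul, mul_one, Nat.card_Ico]
  have hb2 : ∀ (g g' : ℕ → Fin (4*(2*r-1))),
      (∑ k ∈ Finset.range ((r-3)/2), (if F.Adj (g k) (g' k) then 1 else 0)) ≤ (r-3)/2 := by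
    intro g g'
    calc (∑ k ∈ Finset.range ((r-3)/2), (if F.Adj (g k) (g' k) then 1 else 0))
        ≤ ∑ k ∈ Finset.range ((r-3)/2), 1 :=
          Finset.sum_le_sum (fun k _ => by split <;> omega)
      _ = (r-3)/2 := by rw [Finset.sum_const, smul_eq_mul, mul_one, Finset.card_range]
  have hSA := hb2 (fun k => qf hr7 1 (3+2*k)) (fun k => qf hr7 1 (3+2*k+1))
  have hSB := hb2 (fun k => qf hr7 2 (3+2*k)) (fun k => qf hr7 2 (3+2*k+1))
  have hcA := hb1 0 3 (fun j => qf hr7 1 j) (fun j => qf hr7 0 j)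
  have hcB := hb1 0 3 (fun j => qf hr7 2 j) (fun j => qf hr7 0 (j+3))
  have hcC := hb1 6 r (fun j => qf hr7 0 j) (fun j => ptf hr7 0 j)
  rw [e1, e1'] at hx1
  rw [e2, e2'] at hx2
  rw [e0, e0a, e0b] at hx0
  rcases hx0 with h0 | h0 <;> rcases hx1 with h1 | h1 <;> rcases hx2 with h2 | h2 <;>
    omega

end NoFac

/-- For every odd `r ≥ 7` there exists an `r`-regular graph with no
`{1, r-1}`-factor. -/
theorem exists_regular_graph_no_one_factor (r : ℕ) (hr : Odd r) (hr7 : 7 ≤ r) :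
    ∃ (n : ℕ) (G : SimpleGraph (Fin n)),
      (∀ v, gdeg G v = r) ∧
      ¬ ∃ F : SimpleGraph (Fin n), F ≤ G ∧
        ∀ v, gdeg F v = 1 ∨ gdeg F v = r - 1 := by
  have hodd : r % 2 = 1 := Nat.odd_iff.mp hr
  refine ⟨4*(2*r-1), NoFac.GG r, fun v => NoFac.regular hr7 hodd v, ?_⟩
  rintro ⟨F, hF, hdeg⟩
  exact NoFac.main_contra hr7 hodd F hF hdeg
end

section
/- Let r, t be odd positive integers with r ≥ (t+1)(t+2). In the graph H obtained from K_{r−1,r} with parts U (|U| = r−1) and V (|V| = r) by adding a perfect matching M on r−t−2 vertices of V and a new vertex u joined to the remaining t+2 vertices of V, there is no subgraph F containing none of the edges at u such that every vertex of U ∪ V has F-degree in {t, r−t}. (Counting edges between U and V modulo r−2t yields 2x − t ≡ 0 (mod r−2t) where x is the number of matching edges of M in F, forcing 2x ≥ r−t, contradicting 2x ≤ r−t−2.) -/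
/-- Adjacency of the graph `H` from the construction: the vertex set is
`U ⊕ V ⊕ {u}` with `|U| = r-1`, `|V| = r`.  All `U`-`V` edges are present
(a copy of `K_{r-1,r}`); the first `r-t-2` vertices of `V` are paired up by a
perfect matching `M` (vertices `2i` and `2i+1` are matched); the apex `u` is
joined to the remaining `t+2` vertices of `V`. -/
def HAdj (r t : ℕ) :
    (Fin (r - 1) ⊕ Fin r ⊕ Unit) → (Fin (r - 1) ⊕ Fin r ⊕ Unit) → Prop
  | Sum.inl _, Sum.inr (Sum.inl _) => True
  | Sum.inr (Sum.inl _), Sum.inl _ => True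
  | Sum.inr (Sum.inl b), Sum.inr (Sum.inl b') =>
      b ≠ b' ∧ (b : ℕ) / 2 = (b' : ℕ) / 2 ∧ (b : ℕ) < r - t - 2 ∧ (b' : ℕ) < r - t - 2
  | Sum.inr (Sum.inl b), Sum.inr (Sum.inr _) => r - t - 2 ≤ (b : ℕ)
  | Sum.inr (Sum.inr _), Sum.inr (Sum.inl b) => r - t - 2 ≤ (b : ℕ)
  | _, _ => False

def Hgraph (r t : ℕ) : SimpleGraph (Fin (r - 1) ⊕ Fin r ⊕ Unit) where
  Adj := HAdj r t
  symm := by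
    exact ⟨by rintro (a | b | u) (a' | b' | u') h <;> simp_all [HAdj] <;> tauto⟩
  loopless := by
    exact ⟨by rintro (a | b | u) h <;> simp_all [HAdj]⟩

/-- In the graph `H` of the construction (for odd `r, t` with
`r ≥ (t+1)(t+2)`), there is no spanning subgraph `F` containing none of the
edges at the apex `u` in which every vertex of `U ∪ V` has degree `t` or
`r - t`. -/
theorem no_partial_factor_in_H (r t : ℕ) (hr : Odd r) (ht : Odd t)
    (htpos : 0 < t) (hrt : (t + 1) * (t + 2) ≤ r) :
    ¬ ∃ F : SimpleGraph (Fin (r - 1) ⊕ Fin r ⊕ Unit),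
      F ≤ Hgraph r t ∧
      (∀ a : Fin (r - 1),
        gdeg F (Sum.inl a) = t ∨ gdeg F (Sum.inl a) = r - t) ∧
      (∀ b : Fin r,
        gdeg F (Sum.inr (Sum.inl b)) = t ∨ gdeg F (Sum.inr (Sum.inl b)) = r - t) ∧
      gdeg F (Sum.inr (Sum.inr ())) = 0 := by
  classical
  rintro ⟨F, hFH, hU, hV, hu⟩
  have h3t : 3 * t + 2 ≤ r := by nlinarith
  have htr : t ≤ r := by omega
  -- degrees as indicator sums
  let dF : (Fin (r - 1) ⊕ Fin r ⊕ Unit) → ℕ :=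
    fun v => ∑ w, if F.Adj v w then 1 else 0
  have hdF : ∀ v, gdeg F v = dF v := by
    intro v
    rw [gdeg, Set.ncard_eq_toFinset_card', Set.toFinset_setOf, Finset.card_filter]
  -- no F-edges at the apex
  have huAdj : ∀ w, ¬ F.Adj (Sum.inr (Sum.inr ())) w := by
    intro w hw
    have h0 : {w | F.Adj (Sum.inr (Sum.inr ())) w} = ∅ :=
      (Set.ncard_eq_zero (Set.toFinite _)).mp hu
    exact absurd hw (by rw [Set.eq_empty_iff_forall_notMem] at h0; exact h0 w)
  have huAdj' : ∀ w (x : Unit), ¬ F.Adj w (Sum.inr (Sum.inr x)) := by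
    rintro w ⟨⟩ hw; exact huAdj w hw.symm
  have hUU : ∀ (a a' : Fin (r - 1)), ¬ F.Adj (Sum.inl a) (Sum.inl a') :=
    fun a a' h => hFH h
  -- degree of U-vertices
  have hdFa : ∀ a : Fin (r - 1), dF (Sum.inl a)
      = ∑ b : Fin r, if F.Adj (Sum.inl a) (Sum.inr (Sum.inl b)) then 1 else 0 := by
    intro a
    show (∑ w : Fin (r - 1) ⊕ Fin r ⊕ Unit, if F.Adj (Sum.inl a) w then 1 else 0) = _
    rw [Fintype.sum_sum_type, Fintype.sum_sum_type]
    simp [hUU, huAdj']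
  -- degree of V-vertices
  have hdFb : ∀ b : Fin r, dF (Sum.inr (Sum.inl b))
      = (∑ a : Fin (r - 1), if F.Adj (Sum.inr (Sum.inl b)) (Sum.inl a) then 1 else 0)
      + ∑ b' : Fin r, if F.Adj (Sum.inr (Sum.inl b)) (Sum.inr (Sum.inl b')) then 1 else 0 := by
    intro b
    show (∑ w : Fin (r - 1) ⊕ Fin r ⊕ Unit, if F.Adj (Sum.inr (Sum.inl b)) w then 1 else 0) = _
    rw [Fintype.sum_sum_type, Fintype.sum_sum_type]
    simp [huAdj']
  set E := ∑ a : Fin (r - 1), dF (Sum.inl a) with hE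
  set DV := ∑ b : Fin r, dF (Sum.inr (Sum.inl b)) with hDVdef
  set S := ∑ b : Fin r, ∑ b' : Fin r,
      if F.Adj (Sum.inr (Sum.inl b)) (Sum.inr (Sum.inl b')) then 1 else 0 with hS
  -- DV = E + S
  have hDV : DV = E + S := by
    rw [hDVdef]
    have : (∑ b : Fin r, dF (Sum.inr (Sum.inl b)))
        = (∑ b : Fin r, ∑ a : Fin (r - 1),
            if F.Adj (Sum.inr (Sum.inl b)) (Sum.inl a) then 1 else 0) + S := by
      rw [hS, ← Finset.sum_add_distrib]
      exact Finset.sum_congr rfl fun b _ => hdFb b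
    rw [this]
    congr 1
    rw [Finset.sum_comm, hE]
    refine Finset.sum_congr rfl fun a _ => ?_
    rw [hdFa a]
    refine Finset.sum_congr rfl fun b _ => ?_
    exact if_congr (F.adj_comm _ _) rfl rfl
  -- handshake: E + DV is even
  have hdeg_eq : ∀ v, F.degree v = dF v := by
    intro v
    rw [← SimpleGraph.card_neighborFinset_eq_degree,
      SimpleGraph.neighborFinset_eq_filter, Finset.card_filter]
  have hhs : Even (∑ v, F.degree v) :=
    ⟨F.edgeFinset.card, by rw [F.sum_degrees_eq_twice_card_edges]; ring⟩
  have hEDV : Even (E + DV) := by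
    have h2 := hhs
    simp only [hdeg_eq] at h2
    rw [Fintype.sum_sum_type, Fintype.sum_sum_type] at h2
    have hu0 : dF (Sum.inr (Sum.inr ())) = 0 := by rw [← hdF]; exact hu
    simpa [hu0, ← hE, ← hDVdef] using h2
  -- S is even
  obtain ⟨k, hk⟩ := hEDV
  have hSeven : S % 2 = 0 := by omega
  -- S ≤ r - t - 2
  have hS_le : S ≤ r - t - 2 := by
    have hle : ∀ b : Fin r,
        (∑ b' : Fin r, if F.Adj (Sum.inr (Sum.inl b)) (Sum.inr (Sum.inl b')) then 1 else 0)
        ≤ if (b : ℕ) < r - t - 2 then 1 else 0 := by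
      intro b
      rw [← Finset.card_filter]
      by_cases hb : (b : ℕ) < r - t - 2
      · rw [if_pos hb]
        apply Finset.card_le_one.mpr
        intro x hx y hy
        simp only [Finset.mem_filter] at hx hy
        obtain ⟨hne1, hdiv1, -, -⟩ := hFH hx.2
        obtain ⟨hne2, hdiv2, -, -⟩ := hFH hy.2
        have hx1 : (b : ℕ) ≠ (x : ℕ) := fun h => hne1 (Fin.ext h)
        have hy1 : (b : ℕ) ≠ (y : ℕ) := fun h => hne2 (Fin.ext h)
        exact Fin.ext (by omega)
      · rw [if_neg hb, Nat.le_zero, Finset.card_eq_zero]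
        exact Finset.filter_eq_empty_iff.mpr fun x _ h => hb (hFH h).2.2.1
    calc S ≤ ∑ b : Fin r, if (b : ℕ) < r - t - 2 then 1 else 0 :=
          Finset.sum_le_sum fun b _ => hle b
      _ = r - t - 2 := by
          rw [Fin.sum_univ_eq_sum_range (fun i => if i < r - t - 2 then 1 else 0),
            ← Finset.card_filter]
          have : (Finset.range r).filter (· < r - t - 2) = Finset.range (r - t - 2) := by
            ext i; simp; omega
          rw [this, Finset.card_range]
  -- divisibility mod r - 2t
  have hver : ∀ (n : ℕ), n = t ∨ n = r - t → ((r : ℤ) - 2 * t) ∣ (n : ℤ) - t := by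
    intro n hn
    rcases hn with h | h
    · simp [h]
    · subst h
      rw [Nat.cast_sub htr]
      exact ⟨1, by ring⟩
  have hdvdE : ((r : ℤ) - 2 * t) ∣ (E : ℤ) - (r - 1) * t := by
    have hEeq : (E : ℤ) - (r - 1) * t = ∑ a : Fin (r - 1), ((dF (Sum.inl a) : ℤ) - t) := by
      rw [Finset.sum_sub_distrib, Finset.sum_const, Finset.card_univ, Fintype.card_fin]
      rw [nsmul_eq_mul, Nat.cast_sub (show 1 ≤ r by omega), hE]
      push_cast
      ring
    rw [hEeq]
    exact Finset.dvd_sum fun a _ => hver _ (by rw [← hdF]; exact hU a)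
  have hdvdDV : ((r : ℤ) - 2 * t) ∣ (DV : ℤ) - r * t := by
    have hDVeq : (DV : ℤ) - r * t = ∑ b : Fin r, ((dF (Sum.inr (Sum.inl b)) : ℤ) - t) := by
      rw [Finset.sum_sub_distrib, Finset.sum_const, Finset.card_univ, Fintype.card_fin]
      rw [hDVdef]
      push_cast
      ring
    rw [hDVeq]
    exact Finset.dvd_sum fun b _ => hver _ (by rw [← hdF]; exact hV b)
  have hdvdS : ((r : ℤ) - 2 * t) ∣ (S : ℤ) - t := by
    have : (S : ℤ) - t = ((DV : ℤ) - r * t) - ((E : ℤ) - (r - 1) * t) := by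
      have : (DV : ℤ) = E + S := by exact_mod_cast hDV
      rw [this]; ring
    rw [this]
    exact dvd_sub hdvdDV hdvdE
  -- final contradiction
  obtain ⟨m, hm⟩ := hdvdS
  obtain ⟨j, hj⟩ := ht
  have hSr : (S : ℤ) ≤ (r : ℤ) - t - 2 := by
    have : ((r - t - 2 : ℕ) : ℤ) = (r : ℤ) - t - 2 := by
      push_cast [Nat.cast_sub htr, Nat.cast_sub (by omega : 2 ≤ r - t)]; ring
    calc (S : ℤ) ≤ ((r - t - 2 : ℕ) : ℤ) := by exact_mod_cast hS_le
      _ = _ := this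
  have hd1 : (1 : ℤ) ≤ (r : ℤ) - 2 * t := by
    have : 3 * t + 2 ≤ r := h3t
    push_cast
    omega
  rcases lt_trichotomy m 0 with hm0 | hm0 | hm0
  · have h1 : ((r : ℤ) - 2 * t) * m ≤ ((r : ℤ) - 2 * t) * (-1) := by
      apply mul_le_mul_of_nonneg_left (by omega) (by linarith)
    have hS0 : (0 : ℤ) ≤ (S : ℤ) := Int.natCast_nonneg S
    have ht3 : (3 : ℤ) * t + 2 ≤ r := by exact_mod_cast h3t
    linarith [hm, h1]
  · subst hm0
    -- S = t, but S even, t odd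
    have : (S : ℤ) = t := by linarith [hm]
    have hSt : S = t := by exact_mod_cast this
    omega
  · have h1 : ((r : ℤ) - 2 * t) * 1 ≤ ((r : ℤ) - 2 * t) * m := by
      apply mul_le_mul_of_nonneg_left (by omega) (by linarith)
    linarith [hm, hSr]
end

section
/- For all r, Δ ≥ 2, every r-uniform hypergraph H with maximum degree Δ satisfies χ_cf(H) ≤ (1/2)·(e·r)^{1+2/r}·Δ^{2/r}. -/
set_option maxHeartbeats 1000000

open Finset Real

lemma one_add_inv_pow_le (m : ℕ) (hm : 1 ≤ m) :
    (1 + 1/(m:ℝ))^m ≤ Real.exp 1 := by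
  have hm0 : (0:ℝ) < m := by exact_mod_cast hm
  have h1 : (1 + 1/(m:ℝ)) ≤ Real.exp (1/(m:ℝ)) := by
    have := Real.add_one_le_exp (1/(m:ℝ))
    linarith
  calc (1 + 1/(m:ℝ))^m ≤ (Real.exp (1/(m:ℝ)))^m := by
        apply pow_le_pow_left₀ (by positivity) h1
    _ = Real.exp 1 := by
        rw [← Real.exp_nat_mul]
        congr 1
        field_simp
lemma fact_lb (t : ℕ) (ht : 1 ≤ t) :
    ((t:ℝ))^t ≤ (t.factorial : ℝ) * (Real.exp 1)^(t-1) := by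
  induction t with
  | zero => omega
  | succ n ih =>
    rcases Nat.eq_or_lt_of_le ht with h | h
    · simp [← h]
    · have hn : 1 ≤ n := by omega
      have ihn := ih hn
      have hstep : ((n+1:ℕ):ℝ)^(n+1) ≤ ((n+1:ℕ):ℝ) * ((n:ℝ)^n * Real.exp 1) := by
        have hb : ((n+1:ℕ):ℝ)^n ≤ (n:ℝ)^n * Real.exp 1 := by
          have := one_add_inv_pow_le n hn
          have hn0 : (0:ℝ) < n := by exact_mod_cast hn
          have hexp : ((n+1:ℕ):ℝ)^n = (n:ℝ)^n * (1+1/(n:ℝ))^n := by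
            rw [← mul_pow]
            congr 1
            push_cast
            field_simp
          rw [hexp]
          exact mul_le_mul_of_nonneg_left this (by positivity)
        calc ((n+1:ℕ):ℝ)^(n+1) = ((n+1:ℕ):ℝ) * ((n+1:ℕ):ℝ)^n := by ring
          _ ≤ _ := mul_le_mul_of_nonneg_left hb (by positivity)
      calc ((n+1:ℕ):ℝ)^(n+1) ≤ ((n+1:ℕ):ℝ) * ((n:ℝ)^n * Real.exp 1) := hstep
        _ ≤ ((n+1:ℕ):ℝ) * ((n.factorial : ℝ) * (Real.exp 1)^(n-1) * Real.exp 1) := by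
            apply mul_le_mul_of_nonneg_left _ (by positivity)
            exact mul_le_mul_of_nonneg_right ihn (le_of_lt (Real.exp_pos 1))
        _ = ((n+1).factorial : ℝ) * (Real.exp 1)^n := by
            rw [Nat.factorial_succ]
            push_cast
            have : (Real.exp 1)^(n-1) * Real.exp 1 = (Real.exp 1)^n := by
              rw [← pow_succ]
              congr 1
              omega
            rw [← this]
            ring
        _ = _ := by norm_num

lemma lll_beta (D : ℕ) (hD : 2 ≤ D) :
    Real.exp (-1) ≤ (1 - 1/(D:ℝ))^(D-1) := by
  have hD0 : (0:ℝ) < D := by positivity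
  have hm : 1 ≤ D - 1 := by omega
  have hcast : ((D - 1 : ℕ):ℝ) = (D:ℝ) - 1 := by
    have : (1:ℕ) ≤ D := by omega
    push_cast [this]
    ring
  have hpos : (0:ℝ) < (D:ℝ) - 1 := by
    rw [← hcast]; exact_mod_cast hm
  have key : (1 + 1/((D-1:ℕ):ℝ))^(D-1) ≤ Real.exp 1 := one_add_inv_pow_le (D-1) hm
  have hval : (1 + 1/((D-1:ℕ):ℝ)) = (D:ℝ)/((D:ℝ)-1) := by
    rw [hcast]
    field_simp
    ring
  have hinv : (1 - 1/(D:ℝ)) = ((D:ℝ)-1)/(D:ℝ) := by field_simp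
  rw [hinv]
  rw [hval] at key
  have hbase : (0:ℝ) < ((D:ℝ)-1)/(D:ℝ) := by positivity
  -- (D/(D-1))^(D-1) ≤ e  ⟹  e⁻¹ ≤ ((D-1)/D)^(D-1)
  have hrec : (((D:ℝ)-1)/(D:ℝ))^(D-1) = ((( (D:ℝ))/((D:ℝ)-1))^(D-1))⁻¹ := by
    rw [← inv_pow]
    congr 1
    rw [inv_div]
  rw [hrec, Real.exp_neg]
  apply inv_anti₀ (by positivity) key

def BadP {V : Type} {k : ℕ} (e : Finset V) (c : V → Fin k) : Prop :=
  ¬ ∃ v ∈ e, ∀ w ∈ e, c w = c v → w = v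

instance {V : Type} [DecidableEq V] {k : ℕ} (e : Finset V) :
    DecidablePred (BadP (k := k) e) := fun c => by unfold BadP; infer_instance

section
variable {V : Type} [Fintype V] [DecidableEq V] (k : ℕ)

def Bad (e : Finset V) : Finset (V → Fin k) := univ.filter (BadP e)

def Good (S : Finset (Finset V)) : Finset (V → Fin k) :=
  univ.filter (fun c => ∀ e ∈ S, ¬ BadP e c)

variable {k}

lemma badP_congr {e : Finset V} {c d : V → Fin k} (h : ∀ v ∈ e, c v = d v) :
    BadP e c ↔ BadP e d := by
  unfold BadP
  constructor <;> intro hb ⟨v, hv, hu⟩ <;> refine hb ⟨v, hv, fun w hw hcw => ?_⟩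
  · exact hu w hw (by rw [← h w hw, ← h v hv, hcw])
  · exact hu w hw (by rw [h w hw, h v hv, hcw])

/-- a bad edge has few colors on it -/
lemma badP_image_card {e : Finset V} {c : V → Fin k} (hb : BadP e c) :
    2 * (e.image c).card ≤ e.card := by
  classical
  rw [Finset.card_eq_sum_card_image c e]
  calc 2 * (e.image c).card = ∑ _b ∈ e.image c, 2 := by
        rw [Finset.sum_const, smul_eq_mul, mul_comm]
    _ ≤ _ := ?_
  apply Finset.sum_le_sum
  intro b hb'
  obtain ⟨v, hv, hcv⟩ := Finset.mem_image.mp hb'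
  unfold BadP at hb
  push_neg at hb
  obtain ⟨w, hw, hcw, hwv⟩ := hb v hv
  refine Finset.one_lt_card.mpr ?_
  exact ⟨w, by simp [hw, hcw, hcv], v, by simp [hv, hcv], hwv⟩

lemma card_bad_le {e : Finset V} {r t : ℕ} (he : e.card = r) (htr : 2 * t + 2 > r)
    (htk : t ≤ k) :
    (Bad k e).card ≤ k.choose t * t ^ r * k ^ (Fintype.card V - r) := by
  classical
  have hsub : Bad k e ⊆ (Finset.powersetCard t (univ : Finset (Fin k))).biUnion
      (fun T => Fintype.piFinset (fun v => if v ∈ e then T else univ)) := by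
    intro c hc
    have hb : BadP e c := (Finset.mem_filter.mp hc).2
    have himg : (e.image c).card ≤ t := by
      have := badP_image_card hb
      omega
    obtain ⟨T, hTsub, hT⟩ := Finset.exists_superset_card_eq himg
      (by simpa using htk)
    refine Finset.mem_biUnion.mpr ⟨T, ?_, ?_⟩
    · simp [Finset.mem_powersetCard, hT]
    · rw [Fintype.mem_piFinset]
      intro v
      by_cases hv : v ∈ e
      · simpa [hv] using hTsub (Finset.mem_image_of_mem c hv)
      · simp [hv]
  calc (Bad k e).card ≤ _ := Finset.card_le_card hsub
    _ ≤ _ := Finset.card_biUnion_le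
    _ ≤ _ := ?_
  rw [Finset.sum_const_nat (m := t ^ r * k ^ (Fintype.card V - r)), Finset.card_powersetCard,
    Finset.card_univ, Fintype.card_fin, mul_assoc]
  intro T hT
  have hTcard : T.card = t := (Finset.mem_powersetCard.mp hT).2
  rw [Fintype.card_piFinset]
  rw [← Finset.prod_mul_prod_compl e]
  have h1 : ∏ v ∈ e, (if v ∈ e then T else univ).card = t ^ r := by
    calc ∏ v ∈ e, (if v ∈ e then T else univ).card = ∏ _v ∈ e, t :=
          Finset.prod_congr rfl (fun v hv => by simp [hv, hTcard])
      _ = t ^ r := by rw [Finset.prod_const, he]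
  have h2 : ∏ v ∈ eᶜ, (if v ∈ e then T else univ).card = k ^ (Fintype.card V - r) := by
    calc ∏ v ∈ eᶜ, (if v ∈ e then T else univ).card = ∏ _v ∈ eᶜ, k :=
          Finset.prod_congr rfl (fun v hv => by simp [Finset.mem_compl.mp hv])
      _ = _ := by simp [Finset.prod_const, Finset.card_compl, he]
  rw [h1, h2]

lemma indep_card (s : Finset V) (P Q : (V → Fin k) → Prop)
    [DecidablePred P] [DecidablePred Q]
    (hP : ∀ c d : V → Fin k, (∀ v ∈ s, c v = d v) → (P c ↔ P d))
    (hQ : ∀ c d : V → Fin k, (∀ v ∉ s, c v = d v) → (Q c ↔ Q d)) :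
    (univ.filter (fun c => P c ∧ Q c)).card * (univ : Finset (V → Fin k)).card
      = (univ.filter P).card * (univ.filter Q).card := by
  rw [← Finset.card_product, ← Finset.card_product]
  have hpw : ∀ c d : V → Fin k, s.piecewise (s.piecewise c d) (s.piecewise d c)
      = c := by
    intro c d; funext v
    by_cases hv : v ∈ s
    · rw [s.piecewise_eq_of_mem _ _ hv, s.piecewise_eq_of_mem _ _ hv]
    · rw [s.piecewise_eq_of_notMem _ _ hv, s.piecewise_eq_of_notMem _ _ hv]
  apply Finset.card_nbij' (i := fun p => (s.piecewise p.1 p.2, s.piecewise p.2 p.1))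
    (j := fun p => (s.piecewise p.1 p.2, s.piecewise p.2 p.1))
  · rintro ⟨c, d⟩ h
    simp only [Finset.mem_coe, Finset.mem_product, Finset.mem_filter, Finset.mem_univ, true_and,
      and_true] at h ⊢
    exact ⟨(hP _ c (fun v hv => s.piecewise_eq_of_mem _ _ hv)).mpr h.1,
      (hQ _ c (fun v hv => s.piecewise_eq_of_notMem _ _ hv)).mpr h.2⟩
  · rintro ⟨a, b⟩ h
    simp only [Finset.mem_coe, Finset.mem_product, Finset.mem_filter, Finset.mem_univ, true_and,
      and_true] at h ⊢
    exact ⟨(hP _ a (fun v hv => s.piecewise_eq_of_mem _ _ hv)).mpr h.1,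
      (hQ _ b (fun v hv => s.piecewise_eq_of_notMem _ _ hv)).mpr h.2⟩
  · rintro ⟨c, d⟩ _
    simp only [Prod.mk.injEq]
    exact ⟨hpw c d, hpw d c⟩
  · rintro ⟨a, b⟩ _
    simp only [Prod.mk.injEq]
    exact ⟨hpw a b, hpw b a⟩

lemma good_empty : Good k (∅ : Finset (Finset V)) = univ := by
  simp [Good]

lemma good_mono {S S' : Finset (Finset V)} (h : S ⊆ S') : Good k S' ⊆ Good k S := by
  intro c hc
  rw [Good, Finset.mem_filter] at hc ⊢
  exact ⟨hc.1, fun e he => hc.2 e (h he)⟩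

lemma good_insert (f : Finset V) (S : Finset (Finset V)) :
    Good k (insert f S) = Good k S \ Bad k f := by
  ext c
  simp only [Good, Bad, Finset.mem_filter, Finset.mem_sdiff, Finset.mem_univ, true_and,
    Finset.mem_insert]
  constructor
  · intro h
    exact ⟨fun e he => h e (Or.inr he), h f (Or.inl rfl)⟩
  · rintro ⟨h1, h2⟩ e he
    rcases he with rfl | he
    · exact h2
    · exact h1 e he

lemma LLL_insert {D : ℕ} (hD : 2 ≤ D) {f : Finset V} {U : Finset (Finset V)}
    (h : (D : ℝ) * ((Bad k f ∩ Good k U).card : ℝ) ≤ (Good k U).card) :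
    (1 - 1/(D:ℝ)) * (Good k U).card ≤ ((Good k (insert f U)).card : ℝ) := by
  have hD0 : (0:ℝ) < D := by positivity
  rw [good_insert]
  have hsub : Good k U ∩ Bad k f ⊆ Good k U := Finset.inter_subset_left
  have h0 := Finset.card_sdiff_add_card_inter (Good k U) (Bad k f)
  have hcast : ((Good k U \ Bad k f).card : ℝ) + ((Good k U ∩ Bad k f).card : ℝ)
      = ((Good k U).card : ℝ) := by exact_mod_cast congrArg (Nat.cast : ℕ → ℝ) h0
  rw [Finset.inter_comm] at h
  have hx : ((Good k U ∩ Bad k f).card : ℝ) ≤ ((Good k U).card : ℝ) / D := by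
    rw [le_div_iff₀ hD0, mul_comm]
    exact h
  have expand : (1 - 1/(D:ℝ)) * ((Good k U).card : ℝ)
      = ((Good k U).card : ℝ) - ((Good k U).card : ℝ)/D := by ring
  rw [expand]
  linarith

variable (k) in
lemma LLL_main (E : Finset (Finset V)) (D : ℕ) (hD : 2 ≤ D) (hk : 0 < k)
    (hnbr : ∀ e ∈ E, ((E.erase e).filter (fun f => ¬ Disjoint e f)).card ≤ D - 1)
    (hp : ∀ e ∈ E, (D:ℝ) * ((Bad k e).card : ℝ)
      ≤ (1 - 1/(D:ℝ))^(D-1) * ((univ : Finset (V → Fin k)).card : ℝ)) :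
    ∀ m : ℕ, ∀ S : Finset (Finset V), S ⊆ E → S.card ≤ m → ∀ e ∈ E, e ∉ S →
      (D:ℝ) * ((Bad k e ∩ Good k S).card : ℝ) ≤ ((Good k S).card : ℝ) := by
  have hD0 : (0:ℝ) < D := by positivity
  have hx0 : (0:ℝ) ≤ 1 - 1/(D:ℝ) := by
    rw [sub_nonneg]
    rw [div_le_one hD0]
    exact_mod_cast Nat.one_le_iff_ne_zero.mpr (by omega)
  have hx1 : (1:ℝ) - 1/(D:ℝ) ≤ 1 := by
    have : (0:ℝ) ≤ 1/(D:ℝ) := by positivity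
    linarith
  have hΩ : (0:ℝ) < ((univ : Finset (V → Fin k)).card : ℝ) := by
    have : Nonempty (V → Fin k) := ⟨fun _ => ⟨0, hk⟩⟩
    exact_mod_cast Fintype.card_pos
  intro m
  induction m with
  | zero =>
    intro S hSE hS0 e he heS
    have hS : S = ∅ := Finset.card_eq_zero.mp (Nat.le_zero.mp hS0)
    subst hS
    rw [good_empty, Finset.inter_univ]
    calc (D:ℝ) * ((Bad k e).card : ℝ) ≤ (1 - 1/(D:ℝ))^(D-1) * _ := hp e he
      _ ≤ 1 * ((univ : Finset (V → Fin k)).card : ℝ) := by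
          apply mul_le_mul_of_nonneg_right _ (le_of_lt hΩ)
          exact pow_le_one₀ hx0 hx1
      _ = _ := one_mul _
  | succ m ih =>
    intro S hSE hScard e he heS
    set S1 := S.filter (fun f => ¬ Disjoint e f) with hS1def
    set S2 := S.filter (fun f => Disjoint e f) with hS2def
    have hS12 : S2 ∪ S1 = S := Finset.filter_union_filter_not_eq _ S
    -- claim 4
    have claim4 : ∀ T : Finset (Finset V), T ⊆ S1 →
        (1 - 1/(D:ℝ))^T.card * ((Good k S2).card : ℝ) ≤ ((Good k (S2 ∪ T)).card : ℝ) := by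
      intro T
      induction T using Finset.induction_on with
      | empty => intro _; simp
      | insert f T hfT ihT =>
        intro hins
        have hT : T ⊆ S1 := fun x hx => hins (Finset.mem_insert_of_mem hx)
        have hfS1 : f ∈ S1 := hins (Finset.mem_insert_self f T)
        have hfS : f ∈ S := (Finset.mem_filter.mp hfS1).1
        have hfU : f ∉ S2 ∪ T := by
          intro hmem
          rcases Finset.mem_union.mp hmem with h' | h'
          · exact (Finset.mem_filter.mp hfS1).2 (Finset.mem_filter.mp h').2
          · exact hfT h'
        have hUE : S2 ∪ T ⊆ E := by
          intro x hx
          rcases Finset.mem_union.mp hx with h' | h'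
          · exact hSE (Finset.mem_filter.mp h').1
          · exact hSE (Finset.mem_filter.mp (hT h')).1
        have hUcard : (S2 ∪ T).card ≤ m := by
          have hsub : S2 ∪ T ⊆ S.erase f := by
            intro x hx
            refine Finset.mem_erase.mpr ⟨?_, ?_⟩
            · rintro rfl; exact hfU hx
            · rcases Finset.mem_union.mp hx with h' | h'
              · exact (Finset.mem_filter.mp h').1
              · exact (Finset.mem_filter.mp (hT h')).1
          have := Finset.card_le_card hsub
          rw [Finset.card_erase_of_mem hfS] at this
          omega
        have hstep := LLL_insert hD (ih (S2 ∪ T) hUE hUcard f (hSE hfS) hfU)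
        rw [Finset.union_insert]
        calc (1 - 1/(D:ℝ))^(insert f T).card * ((Good k S2).card : ℝ)
            = (1 - 1/(D:ℝ)) * ((1 - 1/(D:ℝ))^T.card * ((Good k S2).card : ℝ)) := by
              rw [Finset.card_insert_of_notMem hfT, pow_succ]; ring
          _ ≤ (1 - 1/(D:ℝ)) * ((Good k (S2 ∪ T)).card : ℝ) :=
              mul_le_mul_of_nonneg_left (ihT hT) hx0
          _ ≤ _ := hstep
    -- neighbor count
    have hS1card : S1.card ≤ D - 1 := by
      refine le_trans (Finset.card_le_card ?_) (hnbr e he)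
      intro f hf
      rw [Finset.mem_filter] at hf ⊢
      refine ⟨Finset.mem_erase.mpr ⟨?_, hSE hf.1⟩, hf.2⟩
      rintro rfl; exact heS hf.1
    -- independence
    have hindep : ((Bad k e ∩ Good k S2).card : ℝ) * ((univ : Finset (V → Fin k)).card : ℝ)
        = ((Bad k e).card : ℝ) * ((Good k S2).card : ℝ) := by
      have hQc : ∀ c d : V → Fin k, (∀ v ∉ e, c v = d v) →
          ((∀ f ∈ S2, ¬ BadP f c) ↔ (∀ f ∈ S2, ¬ BadP f d)) := by
        intro c d hcd
        have key : ∀ f ∈ S2, (BadP f c ↔ BadP f d) := by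
          intro f hf
          apply badP_congr
          intro v hv
          exact hcd v (fun hve => Finset.disjoint_left.mp (Finset.mem_filter.mp hf).2 hve hv)
        constructor <;> intro hg f hf
        · exact fun hb => hg f hf ((key f hf).mpr hb)
        · exact fun hb => hg f hf ((key f hf).mp hb)
      have h := indep_card (k := k) e (BadP e) (fun c => ∀ f ∈ S2, ¬ BadP f c)
        (fun c d hcd => badP_congr hcd) hQc
      have heq : Bad k e ∩ Good k S2
          = univ.filter (fun c => BadP e c ∧ ∀ f ∈ S2, ¬ BadP f c) := by
        ext c; simp [Bad, Good, and_assoc]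
      rw [heq]
      exact_mod_cast congrArg (Nat.cast : ℕ → ℝ) h
    -- chain
    have hchain1 : ((Bad k e ∩ Good k S).card : ℝ) ≤ ((Bad k e ∩ Good k S2).card : ℝ) := by
      have hsub2 : S2 ⊆ S := fun x hx => (Finset.mem_filter.mp hx).1
      have hsubset : Bad k e ∩ Good k S ⊆ Bad k e ∩ Good k S2 := by
        intro c hc
        rw [Finset.mem_inter] at hc ⊢
        exact ⟨hc.1, good_mono hsub2 hc.2⟩
      exact Nat.cast_le.mpr (Finset.card_le_card hsubset)
    have hchain2 : (D:ℝ) * ((Bad k e ∩ Good k S2).card : ℝ)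
        ≤ (1 - 1/(D:ℝ))^(D-1) * ((Good k S2).card : ℝ) := by
      have h1 : (D:ℝ) * (((Bad k e ∩ Good k S2).card : ℝ)
          * ((univ : Finset (V → Fin k)).card : ℝ))
          ≤ ((1 - 1/(D:ℝ))^(D-1) * ((Good k S2).card : ℝ))
            * ((univ : Finset (V → Fin k)).card : ℝ) := by
        rw [hindep]
        calc (D:ℝ) * (((Bad k e).card : ℝ) * ((Good k S2).card : ℝ))
            = ((D:ℝ) * ((Bad k e).card : ℝ)) * ((Good k S2).card : ℝ) := by ring
          _ ≤ ((1 - 1/(D:ℝ))^(D-1) * ((univ : Finset (V → Fin k)).card : ℝ))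
              * ((Good k S2).card : ℝ) := by
              apply mul_le_mul_of_nonneg_right (hp e he) (by positivity)
          _ = _ := by ring
      have := le_of_mul_le_mul_right (by linarith [h1] : ((D:ℝ) * ((Bad k e ∩ Good k S2).card : ℝ)) * ((univ : Finset (V → Fin k)).card : ℝ) ≤ ((1 - 1/(D:ℝ))^(D-1) * ((Good k S2).card : ℝ)) * ((univ : Finset (V → Fin k)).card : ℝ)) hΩ
      exact this
    have hchain3 : (1 - 1/(D:ℝ))^(D-1) ≤ (1 - 1/(D:ℝ))^S1.card :=
      pow_le_pow_of_le_one hx0 hx1 hS1card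
    have hchain4 : (1 - 1/(D:ℝ))^S1.card * ((Good k S2).card : ℝ) ≤ ((Good k S).card : ℝ) := by
      have := claim4 S1 (le_refl _)
      rwa [hS12] at this
    calc (D:ℝ) * ((Bad k e ∩ Good k S).card : ℝ)
        ≤ (D:ℝ) * ((Bad k e ∩ Good k S2).card : ℝ) :=
          mul_le_mul_of_nonneg_left hchain1 (le_of_lt hD0)
      _ ≤ (1 - 1/(D:ℝ))^(D-1) * ((Good k S2).card : ℝ) := hchain2
      _ ≤ (1 - 1/(D:ℝ))^S1.card * ((Good k S2).card : ℝ) :=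
          mul_le_mul_of_nonneg_right hchain3 (by positivity)
      _ ≤ _ := hchain4

variable (k) in
lemma LLL_nonempty (E : Finset (Finset V)) (D : ℕ) (hD : 2 ≤ D) (hk : 0 < k)
    (hnbr : ∀ e ∈ E, ((E.erase e).filter (fun f => ¬ Disjoint e f)).card ≤ D - 1)
    (hp : ∀ e ∈ E, (D:ℝ) * ((Bad k e).card : ℝ)
      ≤ (1 - 1/(D:ℝ))^(D-1) * ((univ : Finset (V → Fin k)).card : ℝ)) :
    (Good k E).Nonempty := by
  have hD0 : (0:ℝ) < D := by positivity
  have hx : (0:ℝ) < 1 - 1/(D:ℝ) := by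
    rw [sub_pos, div_lt_one hD0]
    exact_mod_cast hD
  have main := LLL_main k E D hD hk hnbr hp
  have key : ∀ m : ℕ, ∀ S : Finset (Finset V), S ⊆ E → S.card ≤ m →
      (0:ℝ) < ((Good k S).card : ℝ) := by
    intro m
    induction m with
    | zero =>
      intro S hSE hS0
      have hS : S = ∅ := Finset.card_eq_zero.mp (Nat.le_zero.mp hS0)
      subst hS
      rw [good_empty]
      have : Nonempty (V → Fin k) := ⟨fun _ => ⟨0, hk⟩⟩
      exact_mod_cast Fintype.card_pos
    | succ m ih =>
      intro S hSE hScard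
      rcases S.eq_empty_or_nonempty with rfl | ⟨f, hf⟩
      · rw [good_empty]
        have : Nonempty (V → Fin k) := ⟨fun _ => ⟨0, hk⟩⟩
        exact_mod_cast Fintype.card_pos
      · have hS' : S.erase f ⊆ E := fun x hx => hSE (Finset.erase_subset f S hx)
        have hScard' : (S.erase f).card ≤ m := by
          rw [Finset.card_erase_of_mem hf]; omega
        have hpos := ih (S.erase f) hS' hScard'
        have hmain := main m (S.erase f) hS' hScard' f (hSE hf) (Finset.notMem_erase f S)
        have hstep := LLL_insert hD hmain
        rw [Finset.insert_erase hf] at hstep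
        calc (0:ℝ) < (1 - 1/(D:ℝ)) * ((Good k (S.erase f)).card : ℝ) := by positivity
          _ ≤ _ := hstep
  have := key E.card E (le_refl _) (le_refl _)
  rw [← Finset.card_pos]
  exact_mod_cast this


end

lemma numeric_main (r Δ : ℕ) (hr : 2 ≤ r) (hΔ : 2 ≤ Δ) :
    r / 2 < Nat.floor ((Real.exp 1 * r) ^ ((1 : ℝ) + 2 / r) * (Δ : ℝ) ^ ((2 : ℝ) / r) / 2) ∧
    Real.exp 1 * ((r:ℝ) * (Δ:ℝ)) * (((r/2 : ℕ):ℝ))^r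
      ≤ ((r/2).factorial : ℝ) *
        ((Nat.floor ((Real.exp 1 * r) ^ ((1 : ℝ) + 2 / r) * (Δ : ℝ) ^ ((2 : ℝ) / r) / 2) : ℝ))^(r - r/2) := by
  have e1 : (2.7182818283:ℝ) < Real.exp 1 := Real.exp_one_gt_d9
  set K : ℝ := (Real.exp 1 * r) ^ ((1 : ℝ) + 2 / r) * (Δ : ℝ) ^ ((2 : ℝ) / r) / 2 with hKdef
  set t : ℕ := r / 2 with htdef
  set s : ℕ := r - r / 2 with hsdef
  set k : ℕ := Nat.floor K with hkdef
  have hR0 : (0:ℝ) < r := by positivity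
  have hR2 : (2:ℝ) ≤ r := by exact_mod_cast hr
  have hD1 : (1:ℝ) ≤ Δ := by exact_mod_cast le_trans one_le_two hΔ
  have hER1 : (1:ℝ) ≤ Real.exp 1 * r := by nlinarith
  have hexp0 : (0:ℝ) ≤ Real.exp 1 * r := by linarith
  -- basic nat facts
  have hts : t ≤ s := by omega
  have ht1 : 1 ≤ t := by omega
  have hr_ts : r = t + s := by omega
  have h2t : 2 * t ≤ r := by omega
  have h2s : r ≤ 2 * s := by omega
  have hDel1 : (1:ℝ) ≤ (Δ:ℝ) ^ ((2:ℝ)/r) := Real.one_le_rpow hD1 (by positivity)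
  -- K ≥ e·r/2
  have hrpow_lb : Real.exp 1 * r ≤ (Real.exp 1 * r) ^ ((1:ℝ) + 2/r) := by
    nth_rewrite 1 [← Real.rpow_one (Real.exp 1 * r)]
    refine Real.rpow_le_rpow_of_exponent_le hER1 ?_
    have : (0:ℝ) ≤ 2/(r:ℝ) := by positivity
    linarith
  have hK_lb : Real.exp 1 * r / 2 ≤ K := by
    rw [hKdef]
    have h4 : Real.exp 1 * r ≤ (Real.exp 1 * r) ^ ((1:ℝ)+2/r) * (Δ:ℝ)^((2:ℝ)/r) := by
      nlinarith [Real.rpow_nonneg hexp0 ((1:ℝ)+2/r)]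
    linarith
  have hK1 : (1:ℝ) < K := by nlinarith
  have hkK : (k:ℝ) ≤ K := Nat.floor_le (by linarith)
  have hkK' : K - 1 < (k:ℝ) := Nat.sub_one_lt_floor K
  -- s real bounds
  have hsR : ((s:ℕ):ℝ) ≤ ((r:ℝ)+1)/2 := by
    have : 2 * s ≤ r + 1 := by omega
    have := (Nat.cast_le (α := ℝ)).mpr this
    push_cast at this
    linarith
  have htR : ((t:ℕ):ℝ) ≤ (r:ℝ)/2 := by
    have : 2 * t ≤ r := h2t
    have := (Nat.cast_le (α := ℝ)).mpr this
    push_cast at this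
    linarith
  -- t < k  (first goal)
  have htk : t < k := by
    have h1 : ((t:ℕ):ℝ) < (k:ℝ) := by nlinarith
    exact_mod_cast h1
  refine ⟨htk, ?_⟩
  -- s < k, needed for floor slack
  have hsk : ((s:ℕ):ℝ) ≤ (k:ℝ) := by nlinarith
  have hk0 : (0:ℝ) < k := by
    have : (0:ℝ) < ((t:ℕ):ℝ) + 1 := by positivity
    nlinarith [htk]
  -- (a) K^s ≤ e * k^s
  have hKs_ub : K^s ≤ Real.exp 1 * (k:ℝ)^s := by
    have hsknat : s ≤ k := by exact_mod_cast hsk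
    have hk1 : (1:ℝ) ≤ 1 + 1/(k:ℝ) := by
      have : (0:ℝ) ≤ 1/(k:ℝ) := by positivity
      linarith
    have hbin : ((k:ℝ)+1)^s ≤ Real.exp 1 * (k:ℝ)^s := by
      have hsplit : ((k:ℝ)+1)^s = (k:ℝ)^s * (1+1/(k:ℝ))^s := by
        rw [← mul_pow]
        congr 1
        field_simp
      rw [hsplit]
      have h1 : (1+1/(k:ℝ))^s ≤ (1+1/(k:ℝ))^k := pow_le_pow_right₀ hk1 hsknat
      have h2 := one_add_inv_pow_le k (by omega)
      have h3 : (0:ℝ) ≤ (k:ℝ)^s := by positivity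
      nlinarith
    have hKk1 : K ≤ (k:ℝ)+1 := by linarith
    calc K^s ≤ ((k:ℝ)+1)^s := pow_le_pow_left₀ (by linarith) hKk1 s
      _ ≤ _ := hbin
  -- (b) lower bound on K^s
  have hKs_lb : (Real.exp 1 * r)^(s+1) * (Δ:ℝ) / 2^s ≤ K^s := by
    have hKeq : K^s = ((Real.exp 1 * r) ^ ((1:ℝ)+2/r))^s * ((Δ:ℝ)^((2:ℝ)/r))^s / 2^s := by
      rw [hKdef, div_pow, mul_pow]
    rw [hKeq]
    have hA : ((Real.exp 1 * r) ^ ((1:ℝ)+2/r))^s = (Real.exp 1 * r) ^ (((1:ℝ)+2/r) * s) := by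
      rw [← Real.rpow_natCast ((Real.exp 1 * r) ^ ((1:ℝ)+2/r)) s, ← Real.rpow_mul hexp0]
    have hA2 : (Real.exp 1 * r) ^ ((s:ℝ)+1) ≤ (Real.exp 1 * r) ^ (((1:ℝ)+2/r) * s) := by
      apply Real.rpow_le_rpow_of_exponent_le hER1
      have h2sR : (r:ℝ) ≤ 2 * s := by exact_mod_cast h2s
      have hq : (1:ℝ) ≤ 2 * s / r := by
        rw [le_div_iff₀ hR0]
        linarith
      have : ((1:ℝ)+2/r) * s = s + 2 * s / r := by field_simp
      rw [this]
      linarith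
    have hA3 : (Real.exp 1 * r) ^ ((s:ℝ)+1) = (Real.exp 1 * r)^(s+1) := by
      rw [← Real.rpow_natCast (Real.exp 1 * r) (s+1)]
      push_cast
      ring_nf
    have hB : (Δ:ℝ) ≤ ((Δ:ℝ) ^ ((2:ℝ)/r))^s := by
      rw [← Real.rpow_natCast ((Δ:ℝ) ^ ((2:ℝ)/r)) s, ← Real.rpow_mul (by linarith)]
      nth_rewrite 1 [← Real.rpow_one (Δ:ℝ)]
      apply Real.rpow_le_rpow_of_exponent_le hD1
      have h2sR : (r:ℝ) ≤ 2 * s := by exact_mod_cast h2s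
      rw [div_mul_eq_mul_div, le_div_iff₀ hR0]
      linarith
    have h2pos : (0:ℝ) < (2:ℝ)^s := by positivity
    rw [div_le_div_iff_of_pos_right h2pos]
    calc (Real.exp 1 * r)^(s+1) * (Δ:ℝ)
        ≤ (Real.exp 1 * r) ^ (((1:ℝ)+2/r) * s) * ((Δ:ℝ) ^ ((2:ℝ)/r))^s := by
          apply mul_le_mul (hA3 ▸ hA2) hB (by linarith) (Real.rpow_nonneg hexp0 _)
      _ = _ := by rw [hA]
  -- (c) final combination
  have hfact := fact_lb t ht1
  have hept : (Real.exp 1)^(t-1) ≤ (Real.exp 1)^(s-1) :=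
    pow_le_pow_right₀ (by nlinarith) (by omega)
  have htpow : ((t:ℝ))^r * 2^s ≤ (t.factorial : ℝ) * (Real.exp 1)^(s-1) * (r:ℝ)^s := by
    have hsplitt : ((t:ℝ))^r = (t:ℝ)^t * (t:ℝ)^s := by rw [hr_ts, pow_add]
    have h2t' : (2:ℝ) * t ≤ r := by
      have := (Nat.cast_le (α := ℝ)).mpr h2t
      push_cast at this
      linarith
    have h2ts : ((2:ℝ) * t)^s ≤ (r:ℝ)^s := pow_le_pow_left₀ (by positivity) h2t' s
    have hts' : (t:ℝ)^t ≤ (t.factorial : ℝ) * (Real.exp 1)^(s-1) := le_trans hfact (by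
      apply mul_le_mul_of_nonneg_left hept (by positivity))
    calc ((t:ℝ))^r * 2^s = (t:ℝ)^t * ((2:ℝ)*t)^s := by rw [hsplitt, mul_pow]; ring
      _ ≤ ((t.factorial : ℝ) * (Real.exp 1)^(s-1)) * (r:ℝ)^s := by
          apply mul_le_mul hts' h2ts (by positivity) (by positivity)
      _ = _ := by ring
  -- target : e * (r*Δ) * t^r ≤ t! * k^s
  have hfac0 : (0:ℝ) ≤ (t.factorial : ℝ) := by positivity
  have h2pos : (0:ℝ) < Real.exp 1 * 2^s := by positivity
  have hepos : (0:ℝ) < Real.exp 1 := Real.exp_pos 1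
  apply le_of_mul_le_mul_right _ h2pos
  have hepow : (Real.exp 1)^2 * (Real.exp 1)^(s-1) = (Real.exp 1)^(s+1) := by
    rw [← pow_add]
    congr 1
    omega
  calc Real.exp 1 * ((r:ℝ) * (Δ:ℝ)) * ((t:ℝ))^r * (Real.exp 1 * 2^s)
      = ((Real.exp 1)^2 * ((r:ℝ) * (Δ:ℝ))) * (((t:ℝ))^r * 2^s) := by ring
    _ ≤ ((Real.exp 1)^2 * ((r:ℝ) * (Δ:ℝ))) * ((t.factorial : ℝ) * (Real.exp 1)^(s-1) * (r:ℝ)^s) := by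
        apply mul_le_mul_of_nonneg_left htpow (by positivity)
    _ = (t.factorial : ℝ) * (((Real.exp 1)^(s+1) * (r:ℝ)^(s+1) * (Δ:ℝ) / 2^s) * 2^s) := by
        rw [← hepow]
        field_simp
        ring
    _ = (t.factorial : ℝ) * (((Real.exp 1 * r)^(s+1) * (Δ:ℝ) / 2^s) * 2^s) := by
        rw [mul_pow]
    _ ≤ (t.factorial : ℝ) * ((K^s) * 2^s) := by
        apply mul_le_mul_of_nonneg_left _ hfac0
        apply mul_le_mul_of_nonneg_right hKs_lb (by positivity)
    _ ≤ (t.factorial : ℝ) * ((Real.exp 1 * (k:ℝ)^s) * 2^s) := by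
        apply mul_le_mul_of_nonneg_left _ hfac0
        apply mul_le_mul_of_nonneg_right hKs_ub (by positivity)
    _ = (t.factorial : ℝ) * (k:ℝ)^s * (Real.exp 1 * 2^s) := by ring


section Assembly
variable {V : Type} [Fintype V] [DecidableEq V]

lemma nbr_count (E : Finset (Finset V)) (r Δ : ℕ) (hr : 2 ≤ r) (hΔ : 2 ≤ Δ)
    (huniform : ∀ e ∈ E, e.card = r) (hdeg : ∀ v : V, hypDeg E v ≤ Δ)
    (e : Finset V) (he : e ∈ E) :
    ((E.erase e).filter (fun f => ¬ Disjoint e f)).card ≤ r * Δ - 1 := by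
  have hsub : (E.erase e).filter (fun f => ¬ Disjoint e f)
      ⊆ e.biUnion (fun v => (E.erase e).filter (fun f => v ∈ f)) := by
    intro f hf
    rw [Finset.mem_filter] at hf
    obtain ⟨v, hv, hvf⟩ := Finset.not_disjoint_iff.mp hf.2
    exact Finset.mem_biUnion.mpr ⟨v, hv, Finset.mem_filter.mpr ⟨hf.1, hvf⟩⟩
  have hone : ∀ v ∈ e, ((E.erase e).filter (fun f => v ∈ f)).card ≤ Δ - 1 := by
    intro v hv
    have hsub2 : (E.erase e).filter (fun f => v ∈ f) ⊆ (E.filter (fun f => v ∈ f)).erase e := by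
      intro f hf
      rw [Finset.mem_filter, Finset.mem_erase] at hf
      exact Finset.mem_erase.mpr ⟨hf.1.1, Finset.mem_filter.mpr ⟨hf.1.2, hf.2⟩⟩
    have hmem : e ∈ E.filter (fun f => v ∈ f) := Finset.mem_filter.mpr ⟨he, hv⟩
    calc ((E.erase e).filter (fun f => v ∈ f)).card
        ≤ ((E.filter (fun f => v ∈ f)).erase e).card := Finset.card_le_card hsub2
      _ = (E.filter (fun f => v ∈ f)).card - 1 := Finset.card_erase_of_mem hmem
      _ ≤ Δ - 1 := by
          have := hdeg v
          rw [hypDeg] at this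
          omega
  calc ((E.erase e).filter (fun f => ¬ Disjoint e f)).card
      ≤ _ := Finset.card_le_card hsub
    _ ≤ ∑ v ∈ e, ((E.erase e).filter (fun f => v ∈ f)).card := Finset.card_biUnion_le
    _ ≤ ∑ _v ∈ e, (Δ - 1) := Finset.sum_le_sum hone
    _ = r * (Δ - 1) := by rw [Finset.sum_const, smul_eq_mul, huniform e he]
    _ ≤ r * Δ - 1 := by
        have h1 : 1 ≤ Δ := by omega
        have h2 : r * (Δ - 1) + r = r * Δ := by
          calc r * (Δ - 1) + r = r * (Δ - 1 + 1) := by ring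
            _ = r * Δ := by rw [Nat.sub_add_cancel h1]
        omega

end Assembly

open Real in
/-- For `r, Δ ≥ 2`, every `r`-uniform hypergraph of maximum degree at most `Δ`
satisfies `χ_cf ≤ (1/2) (e r)^{1 + 2/r} Δ^{2/r}`. -/
theorem chiCF_le_LLL {V : Type} [Fintype V] [DecidableEq V]
    (r Δ : ℕ) (hr : 2 ≤ r) (hΔ : 2 ≤ Δ)
    (E : Finset (Finset V))
    (huniform : ∀ e ∈ E, e.card = r)
    (hdeg : ∀ v : V, hypDeg E v ≤ Δ) :
    (chiCF V E : ℝ) ≤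
      (Real.exp 1 * r) ^ ((1 : ℝ) + 2 / r) * (Δ : ℝ) ^ ((2 : ℝ) / r) / 2 := by
  set K : ℝ := (Real.exp 1 * r) ^ ((1 : ℝ) + 2 / r) * (Δ : ℝ) ^ ((2 : ℝ) / r) / 2 with hKdef
  set t : ℕ := r / 2 with htdef
  set k : ℕ := Nat.floor K with hkdef
  obtain ⟨htk, hnum⟩ := numeric_main r Δ hr hΔ
  rw [← hKdef, ← hkdef, ← htdef] at htk hnum
  set s : ℕ := r - t with hsdef
  have hk0 : 0 < k := by omega
  have hK0 : (0:ℝ) ≤ K := by positivity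
  have hkK : (k:ℝ) ≤ K := Nat.floor_le hK0
  set D : ℕ := r * Δ with hDdef
  have hD2 : 2 ≤ D := by
    rw [hDdef]; nlinarith
  -- probability bound for each edge
  have hp : ∀ e ∈ E, (D:ℝ) * ((Bad k e).card : ℝ)
      ≤ (1 - 1/(D:ℝ))^(D-1) * (((univ : Finset (V → Fin k))).card : ℝ) := by
    intro e he
    have he_r : e.card = r := huniform e he
    have hrn : r ≤ Fintype.card V := by
      rw [← he_r]
      simpa using Finset.card_le_card (Finset.subset_univ e)
    set n : ℕ := Fintype.card V with hndef
    have hΩcard : ((univ : Finset (V → Fin k))).card = k ^ n := by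
      rw [Finset.card_univ]
      simp [Fintype.card_fun, hndef]
    have hBad : ((Bad k e).card : ℝ) ≤ (k.choose t : ℝ) * (t:ℝ)^r * (k:ℝ)^(n-r) := by
      exact_mod_cast Nat.cast_le.mpr (card_bad_le he_r (by omega) (le_of_lt htk))
    have hfac0 : (0:ℝ) < (t.factorial : ℝ) := by exact_mod_cast t.factorial_pos
    have hchoose : (k.choose t : ℝ) ≤ (k:ℝ)^t / (t.factorial : ℝ) :=
      Nat.choose_le_pow_div t k
    have hbeta : Real.exp (-1) ≤ (1 - 1/(D:ℝ))^(D-1) := lll_beta D hD2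
    have hD0 : (0:ℝ) < D := by positivity
    have hsplit : (k:ℝ)^n = (k:ℝ)^t * (k:ℝ)^s * (k:ℝ)^(n-r) := by
      rw [← pow_add, ← pow_add]
      congr 1
      omega
    have hDcast : (D:ℝ) = (r:ℝ) * (Δ:ℝ) := by rw [hDdef]; push_cast; ring
    -- main numeric chain
    have hmain : Real.exp 1 * ((D:ℝ) * ((k.choose t : ℝ) * (t:ℝ)^r * (k:ℝ)^(n-r)))
        ≤ (k:ℝ)^n := by
      have h1 : Real.exp 1 * ((D:ℝ) * ((k.choose t : ℝ) * (t:ℝ)^r * (k:ℝ)^(n-r)))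
          ≤ Real.exp 1 * ((D:ℝ) * (((k:ℝ)^t / (t.factorial : ℝ)) * (t:ℝ)^r * (k:ℝ)^(n-r))) := by
        have hstep2 : (k.choose t:ℝ) * (t:ℝ)^r * (k:ℝ)^(n-r)
            ≤ ((k:ℝ)^t/(t.factorial:ℝ)) * (t:ℝ)^r * (k:ℝ)^(n-r) :=
          mul_le_mul_of_nonneg_right (mul_le_mul_of_nonneg_right hchoose (by positivity))
            (by positivity)
        exact mul_le_mul_of_nonneg_left (mul_le_mul_of_nonneg_left hstep2 (le_of_lt hD0))
          (le_of_lt (Real.exp_pos 1))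
      have h2 : Real.exp 1 * ((D:ℝ) * (((k:ℝ)^t / (t.factorial : ℝ)) * (t:ℝ)^r * (k:ℝ)^(n-r)))
          ≤ (k:ℝ)^n := by
        rw [hsplit]
        have hlhs : Real.exp 1 * ((D:ℝ) * (((k:ℝ)^t / (t.factorial : ℝ)) * (t:ℝ)^r * (k:ℝ)^(n-r)))
            = (Real.exp 1 * ((r:ℝ)*(Δ:ℝ)) * (t:ℝ)^r) * ((k:ℝ)^t * (k:ℝ)^(n-r)) / (t.factorial : ℝ) := by
          rw [hDcast]; ring
        rw [hlhs, div_le_iff₀ hfac0]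
        calc (Real.exp 1 * ((r:ℝ)*(Δ:ℝ)) * (t:ℝ)^r) * ((k:ℝ)^t * (k:ℝ)^(n-r))
            ≤ ((t.factorial : ℝ) * (k:ℝ)^s) * ((k:ℝ)^t * (k:ℝ)^(n-r)) := by
              apply mul_le_mul_of_nonneg_right hnum (by positivity)
          _ = (k:ℝ)^t * (k:ℝ)^s * (k:ℝ)^(n-r) * (t.factorial : ℝ) := by ring
      exact le_trans h1 h2
    -- conclude
    have hexp1 : (0:ℝ) < Real.exp 1 := Real.exp_pos 1
    have hbadstep : (D:ℝ) * ((Bad k e).card : ℝ)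
        ≤ (D:ℝ) * ((k.choose t : ℝ) * (t:ℝ)^r * (k:ℝ)^(n-r)) :=
      mul_le_mul_of_nonneg_left hBad (le_of_lt hD0)
    have hfin : (D:ℝ) * ((k.choose t : ℝ) * (t:ℝ)^r * (k:ℝ)^(n-r))
        ≤ (1 - 1/(D:ℝ))^(D-1) * ((k:ℝ)^n) := by
      have hinv : (D:ℝ) * ((k.choose t : ℝ) * (t:ℝ)^r * (k:ℝ)^(n-r))
          ≤ Real.exp (-1) * ((k:ℝ)^n) := by
        rw [Real.exp_neg, mul_comm ((Real.exp 1)⁻¹) _, ← div_eq_mul_inv,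
          le_div_iff₀ hexp1]
        calc (D:ℝ) * ((k.choose t : ℝ) * (t:ℝ)^r * (k:ℝ)^(n-r)) * Real.exp 1
            = Real.exp 1 * ((D:ℝ) * ((k.choose t : ℝ) * (t:ℝ)^r * (k:ℝ)^(n-r))) := by ring
          _ ≤ (k:ℝ)^n := hmain
      calc (D:ℝ) * ((k.choose t : ℝ) * (t:ℝ)^r * (k:ℝ)^(n-r))
          ≤ Real.exp (-1) * ((k:ℝ)^n) := hinv
        _ ≤ (1 - 1/(D:ℝ))^(D-1) * ((k:ℝ)^n) :=
            mul_le_mul_of_nonneg_right hbeta (by positivity)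
    rw [hΩcard]
    push_cast
    calc (D:ℝ) * ((Bad k e).card : ℝ) ≤ _ := hbadstep
      _ ≤ _ := hfin
  -- apply LLL
  have hnbr : ∀ e ∈ E, ((E.erase e).filter (fun f => ¬ Disjoint e f)).card ≤ D - 1 :=
    fun e he => nbr_count E r Δ hr hΔ huniform hdeg e he
  obtain ⟨c, hc⟩ := LLL_nonempty k E D hD2 hk0 hnbr hp
  have hcf : ConflictFree E c := by
    intro e he
    have := (Finset.mem_filter.mp hc).2 e he
    unfold BadP at this
    push_neg at this
    exact this
  have hmem : k ∈ {k : ℕ | ∃ c : V → Fin k, ConflictFree E c} := ⟨c, hcf⟩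
  have hle : chiCF V E ≤ k := Nat.sInf_le hmem
  calc (chiCF V E : ℝ) ≤ (k : ℝ) := by exact_mod_cast hle
    _ ≤ K := hkK
end

section
/- There exists a sequence of hypergraphs H_Δ (Δ = 1, 2, 3, ...) such that H_Δ has maximum degree Δ, chromatic number 2, and conflict-free chromatic number Δ + 1. -/
/-- A proper coloring: no hyperedge is monochromatic. -/
def ProperColoring {V α : Type} (E : Finset (Finset V)) (c : V → α) : Prop :=
  ∀ e ∈ E, ∃ v ∈ e, ∃ w ∈ e, c v ≠ c w

/-- The (proper) chromatic number of a hypergraph. -/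
noncomputable def chi (V : Type) (E : Finset (Finset V)) : ℕ :=
  sInf {k : ℕ | ∃ c : V → Fin k, ProperColoring E c}

/- ### Construction: dyadic intervals on `Fin (2^Δ)` -/

def edge (Δ i j : ℕ) : Finset (Fin (2^Δ)) :=
  Finset.univ.filter (fun v => (v : ℕ) / 2^i = j)

def Edges (Δ : ℕ) : Finset (Finset (Fin (2^Δ))) :=
  ((Finset.Icc 1 Δ ×ˢ Finset.range (2^Δ)).filter (fun p => p.2 < 2^(Δ - p.1))).image
    (fun p => edge Δ p.1 p.2)

lemma mem_edge {Δ i j : ℕ} {v : Fin (2^Δ)} : v ∈ edge Δ i j ↔ (v : ℕ) / 2^i = j := by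
  simp [edge]

lemma div_pow_eq_iff {i v j : ℕ} : v / 2^i = j ↔ j * 2^i ≤ v ∧ v < (j+1) * 2^i := by
  constructor
  · rintro rfl
    refine ⟨Nat.div_mul_le_self v _, ?_⟩
    have h1 := Nat.mod_add_div v (2^i)
    have h2 := Nat.mod_lt v (y := 2^i) (by positivity)
    have h3 : (v / 2^i + 1) * 2^i = 2^i * (v / 2^i) + 2^i := by ring
    rw [h3]
    linarith
  · rintro ⟨h1, h2⟩
    exact Nat.div_eq_of_lt_le h1 h2

lemma mem_Edges {Δ : ℕ} {e : Finset (Fin (2^Δ))} :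
    e ∈ Edges Δ ↔ ∃ i j, 1 ≤ i ∧ i ≤ Δ ∧ j < 2^(Δ - i) ∧ e = edge Δ i j := by
  simp only [Edges, Finset.mem_image, Finset.mem_filter, Finset.mem_product,
    Finset.mem_Icc, Finset.mem_range]
  constructor
  · rintro ⟨⟨i, j⟩, ⟨⟨⟨h1, h2⟩, _⟩, h3⟩, rfl⟩
    exact ⟨i, j, h1, h2, h3, rfl⟩
  · rintro ⟨i, j, h1, h2, h3, rfl⟩
    refine ⟨⟨i, j⟩, ⟨⟨⟨h1, h2⟩, ?_⟩, h3⟩, rfl⟩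
    calc j < 2^(Δ - i) := h3
    _ ≤ 2^Δ := Nat.pow_le_pow_right (by norm_num) (Nat.sub_le _ _)

lemma pow_sub_mul {Δ i : ℕ} (h : i ≤ Δ) : 2^(Δ - i) * 2^i = 2^Δ := by
  rw [← pow_add, Nat.sub_add_cancel h]

lemma edge_bound {Δ i j : ℕ} (hi : i ≤ Δ) (hj : j < 2^(Δ - i)) :
    (j + 1) * 2^i ≤ 2^Δ := by
  calc (j+1) * 2^i ≤ 2^(Δ-i) * 2^i := Nat.mul_le_mul_right _ hj
  _ = 2^Δ := pow_sub_mul hi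

lemma edge_card {Δ i j : ℕ} (hi : i ≤ Δ) (hj : j < 2^(Δ - i)) :
    (edge Δ i j).card = 2^i := by
  have hle : (j+1) * 2^i ≤ 2^Δ := edge_bound hi hj
  have hx : (j+1) * 2^i = j * 2^i + 2^i := by ring
  rw [← Finset.card_range (2^i)]
  refine Finset.card_bij' (fun v _ => (v : ℕ) - j * 2^i)
    (fun m hm => (⟨j * 2^i + m, by have := Finset.mem_range.mp hm; omega⟩ : Fin (2^Δ)))
    ?_ ?_ ?_ ?_
  · intro v hv
    have := div_pow_eq_iff.mp (mem_edge.mp hv)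
    show (v : ℕ) - j * 2^i ∈ Finset.range (2^i)
    rw [Finset.mem_range]; omega
  · intro m hm
    have := Finset.mem_range.mp hm
    show (⟨j * 2^i + m, _⟩ : Fin (2^Δ)) ∈ edge Δ i j
    rw [mem_edge, div_pow_eq_iff]
    constructor
    · show j * 2^i ≤ j * 2^i + m
      omega
    · show j * 2^i + m < (j + 1) * 2^i
      omega
  · intro v hv
    have := div_pow_eq_iff.mp (mem_edge.mp hv)
    apply Fin.ext
    show j * 2^i + ((v : ℕ) - j * 2^i) = (v : ℕ)
    omega
  · intro m hm
    show (j * 2^i + m) - j * 2^i = m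
    omega

lemma edge_nonempty {Δ i j : ℕ} (hi : i ≤ Δ) (hj : j < 2^(Δ - i)) :
    (edge Δ i j).Nonempty := by
  rw [← Finset.card_pos, edge_card hi hj]; positivity

lemma deg_eq {Δ : ℕ} (v : Fin (2^Δ)) : hypDeg (Edges Δ) v = Δ := by
  have key : (Edges Δ).filter (fun e => v ∈ e) =
      (Finset.Icc 1 Δ).image (fun i => edge Δ i ((v : ℕ) / 2^i)) := by
    ext e
    simp only [Finset.mem_filter, Finset.mem_image, Finset.mem_Icc, mem_Edges]
    constructor
    · rintro ⟨⟨i, j, h1, h2, h3, rfl⟩, hv⟩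
      exact ⟨i, ⟨h1, h2⟩, by rw [mem_edge.mp hv]⟩
    · rintro ⟨i, ⟨h1, h2⟩, rfl⟩
      have hvd : (v : ℕ) / 2^i < 2^(Δ - i) := by
        rw [Nat.div_lt_iff_lt_mul (by positivity), pow_sub_mul h2]
        exact v.isLt
      exact ⟨⟨i, _, h1, h2, hvd, rfl⟩, mem_edge.mpr rfl⟩
  rw [hypDeg, key, Finset.card_image_of_injOn, Nat.card_Icc]
  · omega
  · intro a ha b hb hab
    simp only [Finset.coe_Icc, Set.mem_Icc] at ha hb
    have hda : (v : ℕ) / 2^a < 2^(Δ - a) := by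
      rw [Nat.div_lt_iff_lt_mul (by positivity), pow_sub_mul ha.2]; exact v.isLt
    have hdb : (v : ℕ) / 2^b < 2^(Δ - b) := by
      rw [Nat.div_lt_iff_lt_mul (by positivity), pow_sub_mul hb.2]; exact v.isLt
    have h1 := edge_card ha.2 hda
    have h2 := edge_card hb.2 hdb
    have hab' : edge Δ a ((v : ℕ) / 2^a) = edge Δ b ((v : ℕ) / 2^b) := hab
    rw [hab', h2] at h1
    exact Nat.pow_right_injective (le_refl 2) h1.symm

lemma big_edge {Δ : ℕ} : edge Δ Δ 0 = Finset.univ := by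
  ext v
  simp only [mem_edge, Finset.mem_univ, iff_true]
  exact Nat.div_eq_of_lt v.isLt

lemma big_edge_mem {Δ : ℕ} (hΔ : 1 ≤ Δ) : (Finset.univ : Finset (Fin (2^Δ))) ∈ Edges Δ := by
  rw [mem_Edges]
  exact ⟨Δ, 0, hΔ, le_refl _, by simp, big_edge.symm⟩

/- ### conflict-free lower bound -/
lemma cf_lower : ∀ Δ, 1 ≤ Δ → ∀ {α : Type} [DecidableEq α] (c : Fin (2^Δ) → α),
    ConflictFree (Edges Δ) c → Δ + 1 ≤ (Finset.univ.image c).card := by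
  intro Δ
  induction Δ with
  | zero => omega
  | succ d ih =>
    intro _ α _ c hc
    obtain ⟨u, -, huniq⟩ := hc _ (big_edge_mem (Nat.le_add_left 1 d))
    by_cases hd : d = 0
    · -- base case Δ = 1
      subst hd
      have hlt0 : (0:ℕ) < 2^(0+1) := by norm_num
      have hlt1 : (1:ℕ) < 2^(0+1) := by norm_num
      set v0 : Fin (2^(0+1)) := ⟨0, hlt0⟩
      set v1 : Fin (2^(0+1)) := ⟨1, hlt1⟩
      have hne : c v0 ≠ c v1 := by
        intro h
        have hu : u = v0 ∨ u = v1 := by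
          have h2 : (u : ℕ) < 2 := by have := u.isLt; norm_num at this; omega
          rcases (by omega : (u : ℕ) = 0 ∨ (u : ℕ) = 1) with h' | h'
          · exact Or.inl (Fin.ext h')
          · exact Or.inr (Fin.ext h')
        rcases hu with rfl | rfl
        · have := huniq v1 (Finset.mem_univ _) h.symm
          simp only [v0, v1, Fin.mk.injEq] at this
          omega
        · have := huniq v0 (Finset.mem_univ _) h
          simp only [v0, v1, Fin.mk.injEq] at this
          omega
      calc 0 + 1 + 1 = ({c v0, c v1} : Finset α).card := by
            rw [Finset.card_pair hne]
      _ ≤ (Finset.univ.image c).card := by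
            apply Finset.card_le_card
            intro x hx
            simp only [Finset.mem_insert, Finset.mem_singleton] at hx
            rcases hx with rfl | rfl <;> exact Finset.mem_image_of_mem _ (Finset.mem_univ _)
    · -- inductive step, d ≥ 1
      have hd1 : 1 ≤ d := Nat.one_le_iff_ne_zero.mpr hd
      have hpow : 2^(d+1) = 2^d + 2^d := by rw [pow_succ]; ring
      set t : ℕ := if (u : ℕ) < 2^d then 2^d else 0 with ht
      have htle : t ≤ 2^d := by rw [ht]; split <;> omega
      set g : Fin (2^d) → Fin (2^(d+1)) :=
        fun v => ⟨(v : ℕ) + t, by have := v.isLt; omega⟩ with hg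
      have hgval : ∀ v : Fin (2^d), ((g v : Fin (2^(d+1))) : ℕ) = (v : ℕ) + t := by
        intro v; rfl
      have hginj : Function.Injective g := by
        intro a b hab
        have := congrArg Fin.val hab
        rw [hgval, hgval] at this
        exact Fin.ext (by omega)
      have hgne : ∀ v, g v ≠ u := by
        intro v h
        have hval := congrArg Fin.val h
        rw [hgval] at hval
        have hvlt := v.isLt
        rw [ht] at hval
        split at hval <;> omega
      set off : ℕ → ℕ := fun i => if (u : ℕ) < 2^d then 2^(d-i) else 0 with hoff
      have hgdiv : ∀ (i : ℕ), i ≤ d → ∀ v : Fin (2^d),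
          ((g v : Fin (2^(d+1))) : ℕ) / 2^i = (v : ℕ) / 2^i + off i := by
        intro i hi v
        by_cases hcase : (u : ℕ) < 2^d
        · have hti : t = 2^d := by rw [ht, if_pos hcase]
          have hoffi : off i = 2^(d-i) := by simp only [hoff, if_pos hcase]
          have h2 : (v : ℕ) + t = (v : ℕ) + 2^(d-i) * 2^i := by
            rw [hti, pow_sub_mul hi]
          have h1 : ((v : ℕ) + 2^(d-i) * 2^i) / 2^i = (v : ℕ)/2^i + 2^(d-i) :=
            Nat.add_mul_div_right _ _ (by positivity : (0:ℕ) < 2^i)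
          rw [hgval, h2, h1]
          omega
        · have hti : t = 0 := by rw [ht, if_neg hcase]
          have hoffi : off i = 0 := by simp only [hoff, if_neg hcase]
          rw [hgval, show (v : ℕ) + t = (v : ℕ) from by omega]
          omega
      -- c ∘ g is conflict-free on Edges d
      have hcg : ConflictFree (Edges d) (c ∘ g) := by
        intro e he
        obtain ⟨i, j, hi1, hi2, hj, rfl⟩ := mem_Edges.mp he
        have hoffle : off i ≤ 2^(d-i) := by rw [hoff]; split <;> simp
        have hj' : j + off i < 2^(d+1-i) := by
          have hp : 2^(d+1-i) = 2^(d-i) + 2^(d-i) := by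
            have hdi : d + 1 - i = (d - i) + 1 := by omega
            rw [hdi, pow_succ]; ring
          omega
        have he' : edge (d+1) i (j + off i) ∈ Edges (d+1) :=
          mem_Edges.mpr ⟨i, j + off i, hi1, by omega, hj', rfl⟩
        obtain ⟨v', hv', hv'uniq⟩ := hc _ he'
        have hv'div : (v' : ℕ) / 2^i = j + off i := mem_edge.mp hv'
        -- v' is in the image under g of edge d i j
        have hsurj : ∃ v0 : Fin (2^d), g v0 = v' ∧ v0 ∈ edge d i j := by
          by_cases hcase : (u : ℕ) < 2^d
          · have hoffi : off i = 2^(d-i) := by rw [hoff]; simp [hcase]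
            have hti : t = 2^d := by rw [ht]; simp [hcase]
            have h2d : 2^d ≤ (v' : ℕ) := by
              by_contra hlt
              push_neg at hlt
              have hsm : (v' : ℕ) / 2^i < 2^(d-i) := by
                rw [Nat.div_lt_iff_lt_mul (by positivity), pow_sub_mul hi2]
                exact hlt
              omega
            have hv'lt := v'.isLt
            have hb : (v' : ℕ) - 2^d < 2^d := by omega
            have hgv : ((g ⟨(v' : ℕ) - 2^d, hb⟩ : Fin (2^(d+1))) : ℕ) = (v' : ℕ) := by
              rw [hgval]
              show (v' : ℕ) - 2^d + t = (v' : ℕ)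
              omega
            refine ⟨⟨(v' : ℕ) - 2^d, hb⟩, Fin.ext hgv, ?_⟩
            rw [mem_edge]
            have hdd := hgdiv i hi2 ⟨(v' : ℕ) - 2^d, hb⟩
            rw [hgv, hv'div] at hdd
            have hvv : ((⟨(v' : ℕ) - 2^d, hb⟩ : Fin (2^d)) : ℕ) = (v' : ℕ) - 2^d := rfl
            rw [hvv] at hdd
            show ((v' : ℕ) - 2^d) / 2^i = j
            omega
          · have hoffi : off i = 0 := by rw [hoff]; simp [hcase]
            have hti : t = 0 := by rw [ht]; simp [hcase]
            have hlt : (v' : ℕ) < 2^d := by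
              have h1 := div_pow_eq_iff.mp hv'div
              have h2 : (j + off i + 1) * 2^i ≤ 2^d := by
                rw [hoffi, add_zero]
                exact edge_bound hi2 hj
              omega
            refine ⟨⟨(v' : ℕ), hlt⟩, ?_, ?_⟩
            · apply Fin.ext
              rw [hgval]
              show (v' : ℕ) + t = (v' : ℕ)
              omega
            · rw [mem_edge]
              show (v' : ℕ) / 2^i = j
              omega
        obtain ⟨v0, hgv0, hv0⟩ := hsurj
        refine ⟨v0, hv0, ?_⟩
        intro w hw hcw
        have hgw : g w ∈ edge (d+1) i (j + off i) := by
          rw [mem_edge, hgdiv i hi2 w, mem_edge.mp hw]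
        have := hv'uniq (g w) hgw (by rw [← hgv0]; exact hcw)
        exact hginj (this.trans hgv0.symm)
      have hih := ih hd1 (c ∘ g) hcg
      have hcu : c u ∉ Finset.univ.image (c ∘ g) := by
        intro h
        obtain ⟨v, -, hv⟩ := Finset.mem_image.mp h
        exact hgne v (huniq (g v) (Finset.mem_univ _) hv)
      have hsub : insert (c u) (Finset.univ.image (c ∘ g)) ⊆ Finset.univ.image c := by
        intro x hx
        rcases Finset.mem_insert.mp hx with rfl | hx
        · exact Finset.mem_image_of_mem _ (Finset.mem_univ _)
        · obtain ⟨v, -, hv⟩ := Finset.mem_image.mp hx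
          exact Finset.mem_image.mpr ⟨g v, Finset.mem_univ _, hv⟩
      calc d + 1 + 1 ≤ (Finset.univ.image (c ∘ g)).card + 1 := by omega
      _ = (insert (c u) (Finset.univ.image (c ∘ g))).card := by
            rw [Finset.card_insert_of_notMem hcu]
      _ ≤ (Finset.univ.image c).card := Finset.card_le_card hsub

/- ### conflict-free upper bound: color by 2-adic valuation of v+1 -/

lemma val_le {Δ : ℕ} (v : Fin (2^Δ)) : padicValNat 2 ((v : ℕ) + 1) ≤ Δ := by
  have h1 : 2^(padicValNat 2 ((v : ℕ) + 1)) ≤ (v : ℕ) + 1 :=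
    Nat.le_of_dvd (by omega) pow_padicValNat_dvd
  have h2 : (v : ℕ) + 1 ≤ 2^Δ := v.isLt
  exact (Nat.pow_le_pow_iff_right (by norm_num)).mp (le_trans h1 h2)

lemma cf_upper (Δ : ℕ) :
    ConflictFree (Edges Δ)
      (fun v : Fin (2^Δ) =>
        (⟨padicValNat 2 ((v : ℕ) + 1), Nat.lt_succ_of_le (val_le v)⟩ : Fin (Δ+1))) := by
  intro e he
  obtain ⟨i, j, hi1, hi2, hj, rfl⟩ := mem_Edges.mp he
  have hle : (j+1) * 2^i ≤ 2^Δ := edge_bound hi2 hj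
  have h2i : 1 ≤ 2^i := Nat.one_le_two_pow
  have hmul : (j+1) * 2^i = j * 2^i + 2^i := by ring
  have hvlt : (j+1) * 2^i - 1 < 2^Δ := by omega
  refine ⟨⟨(j+1) * 2^i - 1, hvlt⟩, ?_, ?_⟩
  · rw [mem_edge]
    show ((j+1) * 2^i - 1) / 2^i = j
    rw [div_pow_eq_iff]
    exact ⟨by omega, by omega⟩
  · intro w hw hcw
    by_contra hne
    have hwmem := div_pow_eq_iff.mp (mem_edge.mp hw)
    have hwne : (w : ℕ) ≠ (j+1) * 2^i - 1 := fun h => hne (Fin.ext h)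
    have hwlt : (w : ℕ) + 1 < (j+1) * 2^i := by omega
    have hwgt : j * 2^i < (w : ℕ) + 1 := by omega
    have hkey : padicValNat 2 ((w : ℕ) + 1) < i := by
      by_contra hge
      push_neg at hge
      have hdvd : 2^i ∣ (w : ℕ) + 1 := dvd_trans (pow_dvd_pow 2 hge) pow_padicValNat_dvd
      obtain ⟨m, hm⟩ := hdvd
      rw [hm] at hwgt hwlt
      have hj1 : j < m := by nlinarith
      have hj2 : m < j + 1 := by nlinarith
      omega
    have hvval : padicValNat 2 (((j+1) * 2^i - 1) + 1) = padicValNat 2 (j+1) + i := by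
      have hr : ((j+1) * 2^i - 1) + 1 = (j+1) * 2^i := by omega
      rw [hr, padicValNat.mul (by omega) (by positivity), padicValNat.prime_pow]
    have hvals : padicValNat 2 ((w : ℕ) + 1)
        = padicValNat 2 (((j+1) * 2^i - 1) + 1) := congrArg Fin.val hcw
    rw [hvval] at hvals
    omega

lemma chiCF_eq (Δ : ℕ) (hΔ : 1 ≤ Δ) : chiCF (Fin (2^Δ)) (Edges Δ) = Δ + 1 := by
  have hmem : Δ + 1 ∈ {k : ℕ | ∃ c : Fin (2^Δ) → Fin k, ConflictFree (Edges Δ) c} :=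
    ⟨_, cf_upper Δ⟩
  apply le_antisymm
  · exact Nat.sInf_le hmem
  · apply le_csInf ⟨_, hmem⟩
    rintro k ⟨c, hc⟩
    calc Δ + 1 ≤ (Finset.univ.image c).card := cf_lower Δ hΔ c hc
    _ ≤ k := by simpa using Finset.card_le_univ (Finset.univ.image c)

/- ### chromatic number 2 -/

lemma proper2 (Δ : ℕ) :
    ProperColoring (Edges Δ)
      (fun v : Fin (2^Δ) => (⟨(v : ℕ) % 2, Nat.mod_lt _ (by norm_num)⟩ : Fin 2)) := by
  intro e he
  obtain ⟨i, j, hi1, hi2, hj, rfl⟩ := mem_Edges.mp he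
  have hle : (j+1) * 2^i ≤ 2^Δ := edge_bound hi2 hj
  have h2i : 2 ≤ 2^i := by
    calc (2:ℕ) = 2^1 := (pow_one 2).symm
    _ ≤ 2^i := Nat.pow_le_pow_right (by norm_num) hi1
  have hmul : (j+1) * 2^i = j * 2^i + 2^i := by ring
  obtain ⟨m, hm⟩ : 2 ∣ j * 2^i :=
    Dvd.dvd.mul_left (dvd_pow_self 2 (by omega : i ≠ 0)) j
  have hb0 : j * 2^i < 2^Δ := by omega
  have hb1 : j * 2^i + 1 < 2^Δ := by omega
  refine ⟨⟨j * 2^i, hb0⟩, ?_, ⟨j * 2^i + 1, hb1⟩, ?_, ?_⟩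
  · rw [mem_edge]
    show (j * 2^i) / 2^i = j
    rw [div_pow_eq_iff]
    exact ⟨le_refl _, by omega⟩
  · rw [mem_edge]
    show (j * 2^i + 1) / 2^i = j
    rw [div_pow_eq_iff]
    exact ⟨by omega, by omega⟩
  · intro h
    have hvals : (j * 2^i) % 2 = (j * 2^i + 1) % 2 := congrArg Fin.val h
    omega

lemma chi_eq (Δ : ℕ) (hΔ : 1 ≤ Δ) : chi (Fin (2^Δ)) (Edges Δ) = 2 := by
  have hedge1 : edge Δ 1 0 ∈ Edges Δ :=
    mem_Edges.mpr ⟨1, 0, le_refl _, hΔ, by positivity, rfl⟩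
  have hmem : 2 ∈ {k : ℕ | ∃ c : Fin (2^Δ) → Fin k, ProperColoring (Edges Δ) c} :=
    ⟨_, proper2 Δ⟩
  apply le_antisymm
  · exact Nat.sInf_le hmem
  · apply le_csInf ⟨_, hmem⟩
    rintro k ⟨c, hc⟩
    obtain ⟨v, -, w, -, hne⟩ := hc _ hedge1
    by_contra hlt
    push_neg at hlt
    interval_cases k
    · exact (c v).elim0
    · exact hne (Subsingleton.elim _ _)

lemma sup_deg (Δ : ℕ) : Finset.univ.sup (hypDeg (Edges Δ)) = Δ := by
  have h0 : (0:ℕ) < 2^Δ := by positivity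
  apply le_antisymm
  · exact Finset.sup_le fun v _ => (deg_eq v).le
  · calc Δ = hypDeg (Edges Δ) ⟨0, h0⟩ := (deg_eq _).symm
    _ ≤ Finset.univ.sup (hypDeg (Edges Δ)) := Finset.le_sup (Finset.mem_univ _)

/-- For every `Δ ≥ 1` there is a hypergraph `H_Δ` with maximum degree `Δ`,
chromatic number `2`, and conflict-free chromatic number `Δ + 1`. -/
theorem exists_hypergraph_chi_two_chiCF_max (Δ : ℕ) (hΔ : 1 ≤ Δ) :
    ∃ (n : ℕ) (E : Finset (Finset (Fin n))),
      Finset.univ.sup (hypDeg E) = Δ ∧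
      chi (Fin n) E = 2 ∧
      chiCF (Fin n) E = Δ + 1 := by
  exact ⟨2^Δ, Edges Δ, sup_deg Δ, chi_eq Δ hΔ, chiCF_eq Δ hΔ⟩
end

section
/- Let H be the hypergraph obtained from two vertex-disjoint copies of the complete graph K_Δ (viewed as a 2-uniform hypergraph) together with one additional hyperedge containing all 2Δ vertices. Then χ_cf(H) ≥ Δ + 1. -/
/-- The hypergraph made of two vertex-disjoint copies of the complete graph
`K_Δ` (as a 2-uniform hypergraph) together with one hyperedge containing all
`2Δ` vertices. -/
def doubleCliqueEdges (Δ : ℕ) : Finset (Finset (Fin Δ ⊕ Fin Δ)) :=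
  ((Finset.univ : Finset (Fin Δ × Fin Δ)).filter (fun p => p.1 ≠ p.2)).image
      (fun p => {Sum.inl p.1, Sum.inl p.2}) ∪
  ((Finset.univ : Finset (Fin Δ × Fin Δ)).filter (fun p => p.1 ≠ p.2)).image
      (fun p => {Sum.inr p.1, Sum.inr p.2}) ∪
  {(Finset.univ : Finset (Fin Δ ⊕ Fin Δ))}

lemma pair_inj {Δ k : ℕ} (c : Fin Δ ⊕ Fin Δ → Fin k)
    (hc : ConflictFree (doubleCliqueEdges Δ) c)
    (f : Fin Δ → Fin Δ ⊕ Fin Δ) (hf : Function.Injective f)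
    (hmem : ∀ i j : Fin Δ, i ≠ j → ({f i, f j} : Finset (Fin Δ ⊕ Fin Δ)) ∈ doubleCliqueEdges Δ) :
    Function.Injective (fun i => c (f i)) := by
  intro i j hij
  by_contra hne
  obtain ⟨v, hv, huniq⟩ := hc {f i, f j} (hmem i j hne)
  have hfij : f i ≠ f j := fun h => hne (hf h)
  rcases Finset.mem_insert.mp hv with h | h
  · have := huniq (f j) (by simp) (by rw [h]; exact hij.symm)
    exact hfij (h ▸ this).symm
  · have h' : v = f j := by simpa using h
    have := huniq (f i) (by simp) (by rw [h']; exact hij)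
    exact hfij (by rw [this, h'])

/-- The conflict-free chromatic number of this hypergraph is at least `Δ + 1`. -/
theorem doubleClique_chiCF_ge (Δ : ℕ) :
    ∀ (k : ℕ) (c : Fin Δ ⊕ Fin Δ → Fin k),
      ConflictFree (doubleCliqueEdges Δ) c → Δ + 1 ≤ k := by
  intro k c hc
  by_contra h
  push_neg at h
  have hk : k ≤ Δ := Nat.lt_succ_iff.mp h
  have meml : ∀ i j : Fin Δ, i ≠ j →
      ({Sum.inl i, Sum.inl j} : Finset (Fin Δ ⊕ Fin Δ)) ∈ doubleCliqueEdges Δ := by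
    intro i j hij
    simp only [doubleCliqueEdges, Finset.mem_union, Finset.mem_image, Finset.mem_filter]
    exact Or.inl (Or.inl ⟨(i, j), ⟨Finset.mem_univ _, hij⟩, rfl⟩)
  have memr : ∀ i j : Fin Δ, i ≠ j →
      ({Sum.inr i, Sum.inr j} : Finset (Fin Δ ⊕ Fin Δ)) ∈ doubleCliqueEdges Δ := by
    intro i j hij
    simp only [doubleCliqueEdges, Finset.mem_union, Finset.mem_image, Finset.mem_filter]
    exact Or.inl (Or.inr ⟨(i, j), ⟨Finset.mem_univ _, hij⟩, rfl⟩)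
  have hl : Function.Injective (fun i => c (Sum.inl i)) :=
    pair_inj c hc Sum.inl Sum.inl_injective meml
  have hr : Function.Injective (fun i => c (Sum.inr i)) :=
    pair_inj c hc Sum.inr Sum.inr_injective memr
  have hcard : Δ ≤ k := by
    have := Fintype.card_le_of_injective _ hl
    simpa using this
  have hkΔ : Fintype.card (Fin Δ) = Fintype.card (Fin k) := by
    simp [le_antisymm hcard hk]
  have hlb : Function.Bijective (fun i => c (Sum.inl i)) :=
    (Fintype.bijective_iff_injective_and_card _).mpr ⟨hl, hkΔ⟩
  have hrb : Function.Bijective (fun i => c (Sum.inr i)) :=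
    (Fintype.bijective_iff_injective_and_card _).mpr ⟨hr, hkΔ⟩
  have hbig : (Finset.univ : Finset (Fin Δ ⊕ Fin Δ)) ∈ doubleCliqueEdges Δ := by
    simp [doubleCliqueEdges]
  obtain ⟨v, _, huniq⟩ := hc _ hbig
  cases v with
  | inl i =>
    obtain ⟨j, hj⟩ := hrb.2 (c (Sum.inl i))
    exact absurd (huniq (Sum.inr j) (Finset.mem_univ _) hj) (by simp)
  | inr i =>
    obtain ⟨j, hj⟩ := hlb.2 (c (Sum.inr i))
    exact absurd (huniq (Sum.inl j) (Finset.mem_univ _) hj) (by simp)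
end

section
/- Every connected r-uniform hypergraph H with at least one edge contains a set S of r−1 vertices, all lying in a single hyperedge, such that the hypergraph H − S (obtained by deleting S from the vertex set and from each hyperedge) is connected. -/
/-- A hypergraph (given by its edge set) is connected if any two hyperedges
are joined by a path of hyperedges in which consecutive edges intersect. -/
def HypConn {V : Type} [DecidableEq V] (E : Finset (Finset V)) : Prop :=
  ∀ e ∈ E, ∀ e' ∈ E,
    Relation.ReflTransGen (fun a b => a ∈ E ∧ b ∈ E ∧ (a ∩ b).Nonempty) e e'

namespace NonSepAux

variable {V : Type} [DecidableEq V]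

/-- Vertex adjacency in the hypergraph `C` after deleting the vertex set `D`. -/
def VA (C : Finset (Finset V)) (D : Finset V) (a b : V) : Prop :=
  a ∉ D ∧ b ∉ D ∧ ∃ f ∈ C, a ∈ f ∧ b ∈ f

/-- Vertex connectivity relation. -/
def VP (C : Finset (Finset V)) (D : Finset V) : V → V → Prop :=
  Relation.ReflTransGen (VA C D)

lemma VA_symm (C : Finset (Finset V)) (D : Finset V) : Symmetric (VA C D) :=
  fun _ _ ⟨h1, h2, f, hf, ha, hb⟩ => ⟨h2, h1, f, hf, hb, ha⟩

lemma VP_symm {C : Finset (Finset V)} {D : Finset V} {a b : V} (h : VP C D a b) :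
    VP C D b a :=
  Relation.reflTransGen_swap.mp
    (Relation.ReflTransGen.mono (p := Function.swap (VA C D)) (fun _ _ hxy => VA_symm C D hxy) _ _ h)

lemma VP_trans {C : Finset (Finset V)} {D : Finset V} {a b c : V}
    (h1 : VP C D a b) (h2 : VP C D b c) : VP C D a c :=
  Relation.ReflTransGen.trans h1 h2

lemma VP_mono {C : Finset (Finset V)} {D D' : Finset V} (h : D ⊆ D') {a b : V}
    (hp : VP C D' a b) : VP C D a b :=
  Relation.ReflTransGen.mono (r := VA C D') (p := VA C D)
    (fun _ _ ⟨h1, h2, he⟩ => ⟨fun hm => h1 (h hm), fun hm => h2 (h hm), he⟩) _ _ hp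

/-- paths of a given length -/
def NS (R : V → V → Prop) : ℕ → V → V → Prop
  | 0, a, b => a = b
  | n+1, a, b => ∃ z, NS R n a z ∧ R z b

lemma rtg_exists_ns {R : V → V → Prop} {a b : V} (h : Relation.ReflTransGen R a b) :
    ∃ n, NS R n a b := by
  induction h with
  | refl => exact ⟨0, rfl⟩
  | tail _ hstep ih =>
    obtain ⟨n, hn⟩ := ih
    exact ⟨n+1, _, hn, hstep⟩

lemma exists_first {R : V → V → Prop} {a b : V} (h : Relation.ReflTransGen R a b) :
    a = b ∨ ∃ z, z ≠ a ∧ R a z := by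
  induction h with
  | refl => exact Or.inl rfl
  | @tail c b hp hstep ih =>
    rcases ih with rfl | hz
    · by_cases hba : b = a
      · exact Or.inl hba.symm
      · exact Or.inr ⟨b, hba, hstep⟩
    · exact Or.inr hz

/-- A connected graph (with at least two vertices) has a non-cut vertex:
a vertex farthest from a root works. -/
lemma exists_noncut (C : Finset (Finset V)) (D : Finset V)
    (h2 : 2 ≤ ((C.sup id) \ D).card)
    (hconn : ∀ a ∈ (C.sup id) \ D, ∀ b ∈ (C.sup id) \ D, VP C D a b) :
    ∃ x ∈ (C.sup id) \ D, ∀ a ∈ (C.sup id) \ D, ∀ b ∈ (C.sup id) \ D,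
      a ≠ x → b ≠ x → VP C (insert x D) a b := by
  classical
  set U := (C.sup id) \ D with hU
  have hUne : U.Nonempty := Finset.card_pos.mp (by omega)
  obtain ⟨x₀, hx₀⟩ := hUne
  have reach : ∀ y ∈ U, ∃ n, NS (VA C D) n x₀ y :=
    fun y hy => rtg_exists_ns (hconn x₀ hx₀ y hy)
  set d : V → ℕ := fun y => sInf {n | NS (VA C D) n x₀ y} with hd
  have hdmem : ∀ y ∈ U, NS (VA C D) (d y) x₀ y := fun y hy => Nat.sInf_mem (reach y hy)
  have hdle : ∀ y n, NS (VA C D) n x₀ y → d y ≤ n := fun y n h => Nat.sInf_le h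
  obtain ⟨x, hxU, hmax⟩ := Finset.exists_max_image U d ⟨x₀, hx₀⟩
  have hdx₀ : d x₀ = 0 := Nat.le_zero.mp (hdle x₀ 0 rfl)
  obtain ⟨b₀, hb₀U, hb₀⟩ := Finset.exists_mem_ne (s := U) (by omega) x₀
  have hdb₀ : d b₀ ≠ 0 := by
    intro h
    have hh := hdmem b₀ hb₀U
    rw [h] at hh
    exact hb₀ ((show x₀ = b₀ from hh).symm)
  have hxx₀ : x ≠ x₀ := by
    intro h
    have h1 : d b₀ ≤ d x := hmax b₀ hb₀U
    rw [h, hdx₀] at h1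
    omega
  have claim : ∀ k, ∀ y ∈ U, d y = k → y ≠ x → VP C (insert x D) x₀ y := by
    intro k
    induction k using Nat.strong_induction_on with
    | _ k ih =>
      intro y hyU hdyk hyx
      have hNS := hdmem y hyU
      rw [hdyk] at hNS
      cases k with
      | zero =>
        have hxy : x₀ = y := hNS
        rw [← hxy]
        exact Relation.ReflTransGen.refl
      | succ k' =>
        obtain ⟨z, hz, hR⟩ := (hNS : ∃ z, NS (VA C D) k' x₀ z ∧ VA C D z y)
        have hdz : d z ≤ k' := hdle z k' hz
        obtain ⟨hzD, hyD, f, hfC, hzf, hyf⟩ := hR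
        have hzU : z ∈ U := Finset.mem_sdiff.mpr ⟨Finset.mem_sup.mpr ⟨f, hfC, hzf⟩, hzD⟩
        have hdyx : d y ≤ d x := hmax y hyU
        have hzx : z ≠ x := by
          intro h
          rw [h] at hdz
          omega
        have hvp := ih (d z) (by omega) z hzU rfl hzx
        refine hvp.tail ⟨?_, ?_, f, hfC, hzf, hyf⟩
        · intro hmem
          exact (Finset.mem_insert.mp hmem).elim hzx hzD
        · intro hmem
          exact (Finset.mem_insert.mp hmem).elim hyx hyD
  refine ⟨x, hxU, ?_⟩
  intro a ha b hb hax hbx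
  exact VP_trans (VP_symm (claim (d a) a ha rfl hax)) (claim (d b) b hb rfl hbx)

/-- Key lemma: in a vertex-connected hypergraph one can delete all but one
vertex of some edge (relative to an already-deleted set `D`), preserving
vertex connectivity. -/
lemma key (C : Finset (Finset V)) :
    ∀ (n : ℕ) (D : Finset V), ((C.sup id) \ D).card ≤ n → ((C.sup id) \ D).Nonempty →
    (∀ a ∈ (C.sup id) \ D, ∀ b ∈ (C.sup id) \ D, VP C D a b) →
    ∃ c ∈ C, ∃ v ∈ c \ D,
      ∀ a ∈ (C.sup id) \ (D ∪ (c \ D).erase v), ∀ b ∈ (C.sup id) \ (D ∪ (c \ D).erase v),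
        VP C (D ∪ (c \ D).erase v) a b := by
  intro n
  induction n with
  | zero =>
    intro D hc hne _
    have := Finset.card_pos.mpr hne
    omega
  | succ n ih =>
    intro D hcard hne hconn
    by_cases h1 : ((C.sup id) \ D).card ≤ 1
    · -- base : a single remaining vertex
      obtain ⟨w, hw⟩ := hne
      have hwsupp : w ∈ C.sup id := (Finset.mem_sdiff.mp hw).1
      have hwD : w ∉ D := (Finset.mem_sdiff.mp hw).2
      obtain ⟨c, hcC, hwc⟩ := Finset.mem_sup.mp hwsupp
      refine ⟨c, hcC, w, Finset.mem_sdiff.mpr ⟨hwc, hwD⟩, ?_⟩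
      intro a ha b hb
      have haU : a ∈ (C.sup id) \ D := by
        obtain ⟨h1', h2'⟩ := Finset.mem_sdiff.mp ha
        exact Finset.mem_sdiff.mpr ⟨h1', fun h => h2' (Finset.mem_union_left _ h)⟩
      have hbU : b ∈ (C.sup id) \ D := by
        obtain ⟨h1', h2'⟩ := Finset.mem_sdiff.mp hb
        exact Finset.mem_sdiff.mpr ⟨h1', fun h => h2' (Finset.mem_union_left _ h)⟩
      have hab : a = b := by
        have := Finset.card_le_one.mp h1
        exact this a haU b hbU
      rw [hab]
      exact Relation.ReflTransGen.refl
    · -- inductive step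
      have h2 : 2 ≤ ((C.sup id) \ D).card := by omega
      obtain ⟨x, hxU, hx2⟩ := exists_noncut C D h2 hconn
      have hxsupp : x ∈ C.sup id := (Finset.mem_sdiff.mp hxU).1
      have hxD : x ∉ D := (Finset.mem_sdiff.mp hxU).2
      have hUx : (C.sup id) \ insert x D = ((C.sup id) \ D).erase x := by
        ext a
        simp only [Finset.mem_sdiff, Finset.mem_insert, Finset.mem_erase, not_or]
        tauto
      have hcard2 : ((C.sup id) \ insert x D).card ≤ n := by
        rw [hUx, Finset.card_erase_of_mem hxU]
        omega
      have hne2 : ((C.sup id) \ insert x D).Nonempty := by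
        rw [hUx]
        apply Finset.card_pos.mp
        rw [Finset.card_erase_of_mem hxU]
        omega
      have hconn2 : ∀ a ∈ (C.sup id) \ insert x D, ∀ b ∈ (C.sup id) \ insert x D,
          VP C (insert x D) a b := by
        intro a ha b hb
        rw [hUx] at ha hb
        exact hx2 a (Finset.mem_erase.mp ha).2 b (Finset.mem_erase.mp hb).2
          (Finset.mem_erase.mp ha).1 (Finset.mem_erase.mp hb).1
      obtain ⟨c, hcC, v, hvD1, conn2⟩ := ih (insert x D) hcard2 hne2 hconn2
      have hvc : v ∈ c := (Finset.mem_sdiff.mp hvD1).1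
      have hvD : v ∉ D := fun h => (Finset.mem_sdiff.mp hvD1).2 (Finset.mem_insert_of_mem h)
      have hvx : v ≠ x := fun h => (Finset.mem_sdiff.mp hvD1).2 (h ▸ Finset.mem_insert_self x D)
      by_cases hxc : x ∈ c
      · -- the deleted vertex is inside the chosen edge
        refine ⟨c, hcC, v, Finset.mem_sdiff.mpr ⟨hvc, hvD⟩, ?_⟩
        have hDeq : insert x D ∪ (c \ insert x D).erase v = D ∪ (c \ D).erase v := by
          ext a
          simp only [Finset.mem_union, Finset.mem_insert, Finset.mem_erase, Finset.mem_sdiff,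
            not_or]
          constructor
          · rintro ((rfl | haD) | ⟨hav, hac, hax, haD⟩)
            · exact Or.inr ⟨fun h => hvx h.symm, hxc, hxD⟩
            · exact Or.inl haD
            · exact Or.inr ⟨hav, hac, haD⟩
          · rintro (haD | ⟨hav, hac, haD⟩)
            · exact Or.inl (Or.inr haD)
            · by_cases hax : a = x
              · exact Or.inl (Or.inl hax)
              · exact Or.inr ⟨hav, hac, hax, haD⟩
        rw [hDeq] at conn2
        exact conn2
      · -- the deleted vertex is outside the chosen edge
        have hceq : c \ insert x D = c \ D := by
          ext a
          simp only [Finset.mem_sdiff, Finset.mem_insert, not_or]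
          constructor
          · rintro ⟨hac, _, haD⟩
            exact ⟨hac, haD⟩
          · rintro ⟨hac, haD⟩
            exact ⟨hac, fun h => hxc (h ▸ hac), haD⟩
        rw [hceq] at hvD1 conn2
        set S1 := (c \ D).erase v with hS1def
        have hS1c : S1 ⊆ c := fun a ha =>
          Finset.sdiff_subset (Finset.erase_subset _ _ ha)
        have hxS1 : x ∉ S1 := fun h => hxc (hS1c h)
        have hsub : D ∪ S1 ⊆ insert x D ∪ S1 :=
          Finset.union_subset_union (Finset.subset_insert x D) (Finset.Subset.refl _)
        have hvsupp : v ∈ C.sup id := Finset.mem_sup.mpr ⟨c, hcC, hvc⟩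
        have hvS1 : v ∉ S1 := Finset.notMem_erase v _
        have hvD2 : v ∈ (C.sup id) \ (insert x D ∪ S1) := by
          refine Finset.mem_sdiff.mpr ⟨hvsupp, ?_⟩
          intro h
          rcases Finset.mem_union.mp h with h | h
          · exact (Finset.mem_insert.mp h).elim hvx hvD
          · exact hvS1 h
        by_cases hQ : ∃ y, y ≠ x ∧ y ∉ S1 ∧ VA C D x y
        · -- x keeps a surviving neighbour
          obtain ⟨y, hyx, hyS1, hVAxy⟩ := hQ
          obtain ⟨hxD', hyD, f, hfC, hxf, hyf⟩ := hVAxy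
          have hysupp : y ∈ C.sup id := Finset.mem_sup.mpr ⟨f, hfC, hyf⟩
          refine ⟨c, hcC, v, hvD1, ?_⟩
          have hyD2 : y ∈ (C.sup id) \ (insert x D ∪ S1) := by
            refine Finset.mem_sdiff.mpr ⟨hysupp, ?_⟩
            intro h
            rcases Finset.mem_union.mp h with h | h
            · exact (Finset.mem_insert.mp h).elim hyx hyD
            · exact hyS1 h
          have aux : ∀ a ∈ (C.sup id) \ (D ∪ S1), VP C (D ∪ S1) a y := by
            intro a ha
            obtain ⟨hasupp, haDS⟩ := Finset.mem_sdiff.mp ha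
            have haD : a ∉ D := fun h => haDS (Finset.mem_union_left _ h)
            have haS1 : a ∉ S1 := fun h => haDS (Finset.mem_union_right _ h)
            by_cases hax : a = x
            · subst hax
              refine Relation.ReflTransGen.single ⟨haDS, ?_, f, hfC, hxf, hyf⟩
              intro h
              exact (Finset.mem_union.mp h).elim hyD hyS1
            · have haD2 : a ∈ (C.sup id) \ (insert x D ∪ S1) := by
                refine Finset.mem_sdiff.mpr ⟨hasupp, ?_⟩
                intro h
                rcases Finset.mem_union.mp h with h | h
                · exact (Finset.mem_insert.mp h).elim hax haD
                · exact haS1 h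
              exact VP_mono hsub (conn2 a haD2 y hyD2)
          intro a ha b hb
          exact VP_trans (aux a ha) (VP_symm (aux b hb))
        · -- all neighbours of x lie in S1 : use an edge through x instead
          push_neg at hQ
          obtain ⟨b₀, hb₀U, hb₀x⟩ :=
            Finset.exists_mem_ne (s := (C.sup id) \ D) (by omega) x
          have hvpxb : VP C D x b₀ := hconn x hxU b₀ hb₀U
          have hfirst := exists_first hvpxb
          rcases hfirst with heq | ⟨u, hux, hVAxu⟩
          · exact absurd heq.symm hb₀x
          · have huS1 : u ∈ S1 := by
              by_contra hnot
              exact hQ u hux hnot hVAxu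
            obtain ⟨hxD2, huD, d, hdC, hxd, hud⟩ := hVAxu
            refine ⟨d, hdC, u, Finset.mem_sdiff.mpr ⟨hud, huD⟩, ?_⟩
            have f1 : (d \ D).erase u ⊆ S1 ∪ {x} := by
              intro w hw
              have hwu : w ≠ u := (Finset.mem_erase.mp hw).1
              have hwd : w ∈ d := (Finset.mem_sdiff.mp (Finset.mem_erase.mp hw).2).1
              have hwD : w ∉ D := (Finset.mem_sdiff.mp (Finset.mem_erase.mp hw).2).2
              by_cases hwx : w = x
              · exact Finset.mem_union_right _ (by simp [hwx])
              · refine Finset.mem_union_left _ ?_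
                by_contra hS
                exact hQ w hwx hS ⟨hxD, hwD, d, hdC, hxd, hwd⟩
            have hxerase : x ∈ (d \ D).erase u :=
              Finset.mem_erase.mpr ⟨Ne.symm hux, Finset.mem_sdiff.mpr ⟨hxd, hxD⟩⟩
            have hvD'' : v ∉ D ∪ (d \ D).erase u := by
              intro h
              rcases Finset.mem_union.mp h with h | h
              · exact hvD h
              · rcases Finset.mem_union.mp (f1 h) with h' | h'
                · exact hvS1 h'
                · exact hvx (Finset.mem_singleton.mp h')
            have hsub2 : D ∪ (d \ D).erase u ⊆ insert x D ∪ S1 := by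
              intro a ha
              rcases Finset.mem_union.mp ha with h | h
              · exact Finset.mem_union_left _ (Finset.mem_insert_of_mem h)
              · rcases Finset.mem_union.mp (f1 h) with h' | h'
                · exact Finset.mem_union_right _ h'
                · exact Finset.mem_union_left _
                    (by rw [Finset.mem_singleton.mp h']; exact Finset.mem_insert_self x D)
            have aux : ∀ a ∈ (C.sup id) \ (D ∪ (d \ D).erase u),
                VP C (D ∪ (d \ D).erase u) a v := by
              intro a ha
              obtain ⟨hasupp, haD''⟩ := Finset.mem_sdiff.mp ha
              by_cases haS1 : a ∈ S1
              · exact Relation.ReflTransGen.single ⟨haD'', hvD'', c, hcC, hS1c haS1, hvc⟩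
              · have haD : a ∉ D := fun h => haD'' (Finset.mem_union_left _ h)
                have hax : a ≠ x := fun h => haD'' (Finset.mem_union_right _ (h ▸ hxerase))
                have haD2 : a ∈ (C.sup id) \ (insert x D ∪ S1) := by
                  refine Finset.mem_sdiff.mpr ⟨hasupp, ?_⟩
                  intro h
                  rcases Finset.mem_union.mp h with h | h
                  · exact (Finset.mem_insert.mp h).elim hax haD
                  · exact haS1 h
                exact VP_mono hsub2 (conn2 a haD2 v hvD2)
            intro a ha b hb
            exact VP_trans (aux a ha) (VP_symm (aux b hb))

/-- From hyperedge connectivity to vertex connectivity. -/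
lemma edgepath_to_vert {E : Finset (Finset V)} {e f : Finset V} (he : e ∈ E)
    (h : Relation.ReflTransGen (fun a b => a ∈ E ∧ b ∈ E ∧ (a ∩ b).Nonempty) e f) :
    ∀ a ∈ e, ∀ b ∈ f, VP E ∅ a b := by
  induction h with
  | refl =>
    intro a ha b hb
    exact Relation.ReflTransGen.single
      ⟨Finset.notMem_empty a, Finset.notMem_empty b, e, he, ha, hb⟩
  | @tail m l hp hstep ih =>
    intro a ha b hb
    obtain ⟨hmE, hlE, w, hw⟩ := hstep
    have hwm : w ∈ m := (Finset.mem_inter.mp hw).1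
    have hwl : w ∈ l := (Finset.mem_inter.mp hw).2
    exact VP_trans (ih a ha w hwm)
      (Relation.ReflTransGen.single
        ⟨Finset.notMem_empty w, Finset.notMem_empty b, l, hlE, hwl, hb⟩)

/-- From vertex connectivity (avoiding `S`) back to hyperedge connectivity of
the hypergraph with `S` deleted. -/
lemma vert_to_hyp {E : Finset (Finset V)} {S : Finset V} {a b : V} (h : VP E S a b) :
    ∀ f ∈ E, ∀ g ∈ E, a ∈ f \ S → b ∈ g \ S →
    Relation.ReflTransGen
      (fun p q => p ∈ E.image (fun t => t \ S) ∧ q ∈ E.image (fun t => t \ S) ∧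
        (p ∩ q).Nonempty) (f \ S) (g \ S) := by
  induction h with
  | refl =>
    intro f hf g hg ha hb
    exact Relation.ReflTransGen.single
      ⟨Finset.mem_image.mpr ⟨f, hf, rfl⟩, Finset.mem_image.mpr ⟨g, hg, rfl⟩,
        ⟨a, Finset.mem_inter.mpr ⟨ha, hb⟩⟩⟩
  | @tail z b hp hstep ih =>
    intro f hf g hg ha hb
    obtain ⟨hzS, hbS, hedge, hhE, hzh, hbh⟩ := hstep
    have p1 := ih f hf hedge hhE ha (Finset.mem_sdiff.mpr ⟨hzh, hzS⟩)
    refine p1.trans (Relation.ReflTransGen.single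
      ⟨Finset.mem_image.mpr ⟨hedge, hhE, rfl⟩, Finset.mem_image.mpr ⟨g, hg, rfl⟩,
        ⟨b, Finset.mem_inter.mpr ⟨Finset.mem_sdiff.mpr ⟨hbh, hbS⟩, hb⟩⟩⟩)

end NonSepAux

/-- Every connected `r`-uniform hypergraph with at least one edge contains a
set `S` of `r - 1` vertices inside a single hyperedge such that deleting `S`
(from the vertex set and from each hyperedge) leaves a connected hypergraph. -/
theorem exists_nonseparating_set {V : Type} [Fintype V] [DecidableEq V]
    (r : ℕ) (E : Finset (Finset V)) (hE : E.Nonempty)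
    (huniform : ∀ e ∈ E, e.card = r)
    (hconn : HypConn E) :
    ∃ (e : Finset V) (S : Finset V), e ∈ E ∧ S ⊆ e ∧ S.card = r - 1 ∧
      HypConn (E.image (fun f => f \ S)) := by
  classical
  open NonSepAux in
  rcases Nat.eq_zero_or_pos r with hr | hr
  · obtain ⟨e, he⟩ := hE
    refine ⟨e, ∅, he, Finset.empty_subset e, by simp [hr], ?_⟩
    have himg : E.image (fun f => f \ (∅ : Finset V)) = E := by
      simp
    rw [himg]
    exact hconn
  · obtain ⟨e₀, he₀⟩ := hE
    have hsupp_ne : ((E.sup id) \ ∅).Nonempty := by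
      rw [Finset.sdiff_empty]
      obtain ⟨a, ha⟩ : e₀.Nonempty := Finset.card_pos.mp (by rw [huniform e₀ he₀]; exact hr)
      exact ⟨a, Finset.mem_sup.mpr ⟨e₀, he₀, ha⟩⟩
    have hconnV : ∀ a ∈ (E.sup id) \ ∅, ∀ b ∈ (E.sup id) \ ∅, NonSepAux.VP E ∅ a b := by
      intro a ha b hb
      rw [Finset.sdiff_empty] at ha hb
      obtain ⟨f, hf, haf⟩ := Finset.mem_sup.mp ha
      obtain ⟨g, hg, hbg⟩ := Finset.mem_sup.mp hb
      exact NonSepAux.edgepath_to_vert hf (hconn f hf g hg) a haf b hbg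
    obtain ⟨c, hcE, v, hvc', connS⟩ :=
      NonSepAux.key E (((E.sup id) \ ∅).card) ∅ le_rfl hsupp_ne hconnV
    have hvc : v ∈ c := (Finset.mem_sdiff.mp hvc').1
    have hDel : ((∅ : Finset V) ∪ (c \ ∅).erase v) = c.erase v := by
      simp
    rw [hDel] at connS
    refine ⟨c, c.erase v, hcE, Finset.erase_subset _ _, ?_, ?_⟩
    · rw [Finset.card_erase_of_mem hvc, huniform c hcE]
    · intro p hp q hq
      obtain ⟨f, hf, rfl⟩ := Finset.mem_image.mp hp
      obtain ⟨g, hg, rfl⟩ := Finset.mem_image.mp hq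
      have hcard : ∀ t ∈ E, (t \ c.erase v).Nonempty := by
        intro t ht
        rw [Finset.nonempty_iff_ne_empty]
        intro hemp
        have hsub := Finset.sdiff_eq_empty_iff_subset.mp hemp
        have hle := Finset.card_le_card hsub
        rw [huniform t ht, Finset.card_erase_of_mem hvc, huniform c hcE] at hle
        omega
      obtain ⟨a, ha⟩ := hcard f hf
      obtain ⟨b, hb⟩ := hcard g hg
      have haM : a ∈ (E.sup id) \ c.erase v :=
        Finset.mem_sdiff.mpr ⟨Finset.mem_sup.mpr ⟨f, hf, (Finset.mem_sdiff.mp ha).1⟩,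
          (Finset.mem_sdiff.mp ha).2⟩
      have hbM : b ∈ (E.sup id) \ c.erase v :=
        Finset.mem_sdiff.mpr ⟨Finset.mem_sup.mpr ⟨g, hg, (Finset.mem_sdiff.mp hb).1⟩,
          (Finset.mem_sdiff.mp hb).2⟩
      exact NonSepAux.vert_to_hyp (connS a haM b hbM) f hf g hg ha hb
end
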